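/- arXiv:1512.02376 — 3 statements merged into one kernel-verified Lean document; each statement's English description precedes it below -/
import Mathlib

section
/- Let in(𝒢_{D_{2m+1}}) denote the set consisting of the first-written monomial of each binomial of 𝒢_{D_{2m+1}}. If M and M′ are monomials of R such that no monomial of in(𝒢_{D_{2m+1}}) divides M and no monomial of in(𝒢_{D_{2m+1}}) divides M′, then π(M) = π(M′) implies M = M′. -/
open MvPolynomial

/-- Index type for the variables of the polynomial ring `R` in the `D_{2m+1}` case
(`n = 2m+1`).  The set `J = {2,4,…,n-1}` of even integers is realised as
`{2t+2 | t : Fin m}` and `J^c = {3,5,…,n-2}` as `{2t+3 | t : Fin (m-1)}`.  The constructors: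
`x1 ↦ x_1`, `xn ↦ x_n`, `xJ t ↦ x_{2t+2}` (`2t+2 ∈ J`), `xJc t ↦ x_{2t+3}` (`2t+3 ∈ J^c`),
`xP s t _ ↦ x_{2s+2,2t+2}` (a pair `k < ℓ` in `J`), `x1n ↦ x_{1,n}`,
`xK1 t ↦ x_{2t+2,1}`, `xKn t ↦ x_{2t+2,n}`, `yK1 t ↦ y_{2t+2,1}`, `yKn t ↦ y_{2t+2,n}`. -/
inductive DoVar (m : ℕ) : Type where
  | x1 : DoVar m
  | xn : DoVar m
  | xJ : Fin m → DoVar m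
  | xJc : Fin (m - 1) → DoVar m
  | xP : (s t : Fin m) → s < t → DoVar m
  | x1n : DoVar m
  | xK1 : Fin m → DoVar m
  | xKn : Fin m → DoVar m
  | yK1 : Fin m → DoVar m
  | yKn : Fin m → DoVar m

/-- The images of the variables under `π`, where `u_i = X i` inside
`K[u_1,…,u_n] ⊆ MvPolynomial ℕ K` and `n = 2m+1`:
`π(x_i) = u_i²` (`i ∈ J`), `π(x_j) = u_j` (`j ∈ J^c`), `π(x_1) = u_1⁴`, `π(x_n) = u_n⁴`,
`π(x_{k,ℓ}) = u_k u_ℓ` (`k < ℓ` in `J`), `π(x_{1,n}) = u_1 u_n`, `π(x_{i,1}) = u_i u_1²`,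
`π(x_{i,n}) = u_i u_n²`, `π(y_{i,1}) = u_i u_1³ u_n`, `π(y_{i,n}) = u_i u_1 u_n³`. -/
noncomputable def doImage (K : Type*) [Field K] (m : ℕ) : DoVar m → MvPolynomial ℕ K
  | .x1 => X 1 ^ 4
  | .xn => X (2 * m + 1) ^ 4
  | .xJ t => X (2 * t.val + 2) ^ 2
  | .xJc t => X (2 * t.val + 3)
  | .xP s t _ => X (2 * s.val + 2) * X (2 * t.val + 2)
  | .x1n => X 1 * X (2 * m + 1)
  | .xK1 t => X (2 * t.val + 2) * X 1 ^ 2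
  | .xKn t => X (2 * t.val + 2) * X (2 * m + 1) ^ 2
  | .yK1 t => X (2 * t.val + 2) * X 1 ^ 3 * X (2 * m + 1)
  | .yKn t => X (2 * t.val + 2) * X 1 * X (2 * m + 1) ^ 3

/-- The toric map `π : R → K[u_1,…,u_n]` for the `D_{2m+1}` configuration. -/
noncomputable def piDo (K : Type*) [Field K] (m : ℕ) :
    MvPolynomial (DoVar m) K →ₐ[K] MvPolynomial ℕ K :=
  aeval (doImage K m)

/-- The set `𝒢_{D_{2m+1}}` of binomials. -/
noncomputable def GDo (K : Type*) [Field K] (m : ℕ) : Set (MvPolynomial (DoVar m) K) :=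
  {g | (∃ (i j k l : Fin m) (hij : i < j) (hjk : j < k) (hkl : k < l),
          g = X (DoVar.xP i k (hij.trans hjk)) * X (DoVar.xP j l (hjk.trans hkl))
              - X (DoVar.xP i j hij) * X (DoVar.xP k l hkl) ∨
          g = X (DoVar.xP i l (hij.trans (hjk.trans hkl))) * X (DoVar.xP j k hjk)
              - X (DoVar.xP i j hij) * X (DoVar.xP k l hkl)) ∨
      (∃ (i j k : Fin m) (hij : i < j) (hjk : j < k),
          g = X (DoVar.xP j k hjk) * X (DoVar.xK1 i)
              - X (DoVar.xP i j hij) * X (DoVar.xK1 k) ∨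
          g = X (DoVar.xP i k (hij.trans hjk)) * X (DoVar.xK1 j)
              - X (DoVar.xP i j hij) * X (DoVar.xK1 k) ∨
          g = X (DoVar.xP j k hjk) * X (DoVar.xKn i)
              - X (DoVar.xP i j hij) * X (DoVar.xKn k) ∨
          g = X (DoVar.xP i k (hij.trans hjk)) * X (DoVar.xKn j)
              - X (DoVar.xP i j hij) * X (DoVar.xKn k) ∨
          g = X (DoVar.xJ j) * X (DoVar.xP i k (hij.trans hjk))
              - X (DoVar.xP i j hij) * X (DoVar.xP j k hjk) ∨
          g = X (DoVar.xP i j hij) * X (DoVar.xP i k (hij.trans hjk))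
              - X (DoVar.xJ i) * X (DoVar.xP j k hjk) ∨
          g = X (DoVar.xJ k) * X (DoVar.xP i j hij)
              - X (DoVar.xP i k (hij.trans hjk)) * X (DoVar.xP j k hjk)) ∨
      (∃ (i j : Fin m) (hij : i < j),
          g = X (DoVar.xJ i) * X (DoVar.xJ j) - X (DoVar.xP i j hij) ^ 2 ∨
          g = X (DoVar.xP i j hij) * X DoVar.x1 - X (DoVar.xK1 i) * X (DoVar.xK1 j) ∨
          g = X (DoVar.xP i j hij) * X DoVar.xn - X (DoVar.xKn i) * X (DoVar.xKn j) ∨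
          g = X (DoVar.xP i j hij) * X (DoVar.xK1 i) - X (DoVar.xJ i) * X (DoVar.xK1 j) ∨
          g = X (DoVar.xP i j hij) * X (DoVar.xKn i) - X (DoVar.xJ i) * X (DoVar.xKn j) ∨
          g = X (DoVar.xJ j) * X (DoVar.xK1 i) - X (DoVar.xP i j hij) * X (DoVar.xK1 j) ∨
          g = X (DoVar.xJ j) * X (DoVar.xKn i) - X (DoVar.xP i j hij) * X (DoVar.xKn j) ∨
          g = X (DoVar.xK1 j) * X (DoVar.xKn i) - X (DoVar.xK1 i) * X (DoVar.xKn j) ∨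
          g = X (DoVar.xK1 i) * X (DoVar.xKn j) - X DoVar.x1n ^ 2 * X (DoVar.xP i j hij)) ∨
      (∃ i : Fin m,
          g = X (DoVar.xJ i) * X DoVar.x1 - X (DoVar.xK1 i) ^ 2 ∨
          g = X (DoVar.xJ i) * X DoVar.xn - X (DoVar.xKn i) ^ 2 ∨
          g = X (DoVar.xK1 i) * X (DoVar.xKn i) - X DoVar.x1n ^ 2 * X (DoVar.xJ i) ∨
          g = X (DoVar.xKn i) * X DoVar.x1 - X DoVar.x1n ^ 2 * X (DoVar.xK1 i) ∨
          g = X (DoVar.yK1 i) - X DoVar.x1n * X (DoVar.xK1 i) ∨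
          g = X (DoVar.yKn i) - X DoVar.x1n * X (DoVar.xKn i) ∨
          g = X (DoVar.xK1 i) * X DoVar.xn - X DoVar.x1n ^ 2 * X (DoVar.xKn i)) ∨
      g = X DoVar.x1 * X DoVar.xn - X DoVar.x1n ^ 4}

/-- The set `in(𝒢_{D_{2m+1}})` of the first-written monomials of the binomials of
`𝒢_{D_{2m+1}}`. -/
noncomputable def inGDo (K : Type*) [Field K] (m : ℕ) : Set (MvPolynomial (DoVar m) K) :=
  {g | (∃ (i j k l : Fin m) (hij : i < j) (hjk : j < k) (hkl : k < l),
          g = X (DoVar.xP i k (hij.trans hjk)) * X (DoVar.xP j l (hjk.trans hkl)) ∨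
          g = X (DoVar.xP i l (hij.trans (hjk.trans hkl))) * X (DoVar.xP j k hjk)) ∨
      (∃ (i j k : Fin m) (hij : i < j) (hjk : j < k),
          g = X (DoVar.xP j k hjk) * X (DoVar.xK1 i) ∨
          g = X (DoVar.xP i k (hij.trans hjk)) * X (DoVar.xK1 j) ∨
          g = X (DoVar.xP j k hjk) * X (DoVar.xKn i) ∨
          g = X (DoVar.xP i k (hij.trans hjk)) * X (DoVar.xKn j) ∨
          g = X (DoVar.xJ j) * X (DoVar.xP i k (hij.trans hjk)) ∨
          g = X (DoVar.xP i j hij) * X (DoVar.xP i k (hij.trans hjk)) ∨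
          g = X (DoVar.xJ k) * X (DoVar.xP i j hij)) ∨
      (∃ (i j : Fin m) (hij : i < j),
          g = X (DoVar.xJ i) * X (DoVar.xJ j) ∨
          g = X (DoVar.xP i j hij) * X DoVar.x1 ∨
          g = X (DoVar.xP i j hij) * X DoVar.xn ∨
          g = X (DoVar.xP i j hij) * X (DoVar.xK1 i) ∨
          g = X (DoVar.xP i j hij) * X (DoVar.xKn i) ∨
          g = X (DoVar.xJ j) * X (DoVar.xK1 i) ∨
          g = X (DoVar.xJ j) * X (DoVar.xKn i) ∨
          g = X (DoVar.xK1 j) * X (DoVar.xKn i) ∨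
          g = X (DoVar.xK1 i) * X (DoVar.xKn j)) ∨
      (∃ i : Fin m,
          g = X (DoVar.xJ i) * X DoVar.x1 ∨
          g = X (DoVar.xJ i) * X DoVar.xn ∨
          g = X (DoVar.xK1 i) * X (DoVar.xKn i) ∨
          g = X (DoVar.xKn i) * X DoVar.x1 ∨
          g = X (DoVar.yK1 i) ∨
          g = X (DoVar.yKn i) ∨
          g = X (DoVar.xK1 i) * X DoVar.xn) ∨
      g = X DoVar.x1 * X DoVar.xn}



open Finset

namespace DoAux

variable {m : ℕ}

def Vf (J K : Fin m → ℕ) (P : Fin m → Fin m → ℕ) (t : Fin m) : ℕ :=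
  2 * J t + K t + (∑ s, P s t) + (∑ s, P t s)

structure BC (J K : Fin m → ℕ) (P : Fin m → Fin m → ℕ) : Prop where
  psupp : ∀ s t, ¬ s < t → P s t = 0
  jj : ∀ s t, s < t → 0 < J s → J t = 0
  pk : ∀ i k, 0 < P i k → ∀ t, t < k → K t = 0
  pjmid : ∀ i j k, i < j → j < k → 0 < P i k → J j = 0
  pjhigh : ∀ i j k, i < j → j < k → 0 < P i j → J k = 0
  pmin : ∀ i j k, i < j → j < k → 0 < P i j → P i k = 0
  pcross : ∀ i j k l, i < j → j < k → k < l → 0 < P i k → P j l = 0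
  pnest : ∀ i j k l, i < j → j < k → k < l → 0 < P i l → P j k = 0
  kj : ∀ i j, i < j → 0 < K i → J j = 0

lemma BC.mono {J K P J₁ K₁ P₁} (h : BC (m := m) J K P)
    (hJ : ∀ t, J₁ t ≤ J t) (hK : ∀ t, K₁ t ≤ K t) (hP : ∀ s t, P₁ s t ≤ P s t) :
    BC J₁ K₁ P₁ where
  psupp s t hst := Nat.le_zero.1 ((hP s t).trans_eq (h.psupp s t hst))
  jj s t hst hp := Nat.le_zero.1 ((hJ t).trans_eq (h.jj s t hst (lt_of_lt_of_le hp (hJ s))))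
  pk i k hp t ht := Nat.le_zero.1 ((hK t).trans_eq (h.pk i k (lt_of_lt_of_le hp (hP i k)) t ht))
  pjmid i j k h1 h2 hp := Nat.le_zero.1 ((hJ j).trans_eq (h.pjmid i j k h1 h2 (lt_of_lt_of_le hp (hP i k))))
  pjhigh i j k h1 h2 hp := Nat.le_zero.1 ((hJ k).trans_eq (h.pjhigh i j k h1 h2 (lt_of_lt_of_le hp (hP i j))))
  pmin i j k h1 h2 hp := Nat.le_zero.1 ((hP i k).trans_eq (h.pmin i j k h1 h2 (lt_of_lt_of_le hp (hP i j))))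
  pcross i j k l h1 h2 h3 hp := Nat.le_zero.1 ((hP j l).trans_eq (h.pcross i j k l h1 h2 h3 (lt_of_lt_of_le hp (hP i k))))
  pnest i j k l h1 h2 h3 hp := Nat.le_zero.1 ((hP j k).trans_eq (h.pnest i j k l h1 h2 h3 (lt_of_lt_of_le hp (hP i l))))
  kj i j hij hp := Nat.le_zero.1 ((hJ j).trans_eq (h.kj i j hij (lt_of_lt_of_le hp (hK i))))

lemma K_le_Vf (J K : Fin m → ℕ) (P) (t) : K t ≤ Vf J K P t := by unfold Vf; omega

lemma J_le_Vf (J K : Fin m → ℕ) (P) (t) : 2 * J t ≤ Vf J K P t := by unfold Vf; omega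

lemma col_le_Vf (J K : Fin m → ℕ) (P) (i t) : P i t ≤ Vf J K P t := by
  have : P i t ≤ ∑ s, P s t := Finset.single_le_sum (f := fun s => P s t) (fun s _ => Nat.zero_le _) (mem_univ i)
  unfold Vf; omega

lemma row_le_Vf (J K : Fin m → ℕ) (P) (t s) : P t s ≤ Vf J K P t := by
  have : P t s ≤ ∑ u, P t u := Finset.single_le_sum (f := fun u => P t u) (fun u _ => Nat.zero_le _) (mem_univ s)
  unfold Vf; omega

lemma sum_pos_exists {f : Fin m → ℕ} (h : (∑ t, f t) ≠ 0) : ∃ t, 0 < f t := by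
  by_contra hc
  push_neg at hc
  exact h (Finset.sum_eq_zero fun t _ => Nat.le_zero.1 (hc t))

variable {J K : Fin m → ℕ} {P : Fin m → Fin m → ℕ}
variable {J' K' : Fin m → ℕ} {P' : Fin m → Fin m → ℕ}

lemma rowsum_top {tstar : Fin m} (hB : BC J K P)
    (hbd : ∀ t, Vf J K P t ≠ 0 → t ≤ tstar) : ∑ s, P tstar s = 0 := by
  refine Finset.sum_eq_zero fun s _ => ?_
  by_contra hp
  have hp' : 0 < P tstar s := Nat.pos_of_ne_zero hp
  have hlt : tstar < s := by
    by_contra hn; exact hp (hB.psupp tstar s hn)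
  have : s ≤ tstar := hbd s (by
    have := col_le_Vf J K P tstar s; omega)
  omega

/-- Case 2: J positive at top for first solution, zero for second: contradiction. -/
lemma case2 {tstar : Fin m} (hB : BC J K P) (hB' : BC J' K' P')
    (hV : ∀ t, Vf J K P t = Vf J' K' P' t)
    (hSK : (∑ t, K t) = ∑ t, K' t)
    (hbd : ∀ t, Vf J K P t ≠ 0 → t ≤ tstar)
    (hJt : 0 < J tstar) (hJ't : J' tstar = 0)
    (hP : ∀ i k, ¬ (0 < P i k ∧ 0 < P' i k)) : False := by
  have hbd' : ∀ t, Vf J' K' P' t ≠ 0 → t ≤ tstar := fun t ht => hbd t (by rw [hV t]; exact ht)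
  -- K vanishes below and above tstar
  have hKlow : ∀ t, t < tstar → K t = 0 := by
    intro t ht
    by_contra hk
    exact absurd (hB.kj t tstar ht (Nat.pos_of_ne_zero hk)) (by omega)
  have hKhigh : ∀ t, tstar < t → K t = 0 := by
    intro t ht
    have hV0 : Vf J K P t = 0 := by
      by_contra h0; exact absurd (hbd t h0) (by omega)
    have := K_le_Vf J K P t; omega
  have hSKt : (∑ t, K t) = K tstar := by
    refine Finset.sum_eq_single tstar (fun b _ hb => ?_) (fun h => absurd (mem_univ tstar) h)
    rcases lt_or_gt_of_ne hb with h | h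
    · exact hKlow b h
    · exact hKhigh b h
  -- all pairs of X end at tstar
  have hpairtop : ∀ i k, 0 < P i k → k = tstar := by
    intro i k hp
    have hik : i < k := by by_contra hn; exact absurd (hB.psupp i k hn) (by omega)
    have hk : k ≤ tstar := hbd k (by have := col_le_Vf J K P i k; omega)
    rcases eq_or_lt_of_le hk with h | h
    · exact h
    · exact absurd (hB.pjhigh i k tstar hik h hp) (by omega)
  -- V below tstar is the top fan
  have hVlow : ∀ t, t < tstar → Vf J K P t = P t tstar := by
    intro t ht
    have hJt0 : J t = 0 := by
      by_contra hj
      exact absurd (hB.jj t tstar ht (Nat.pos_of_ne_zero hj)) (by omega)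
    have hcol : (∑ s, P s t) = 0 := by
      refine Finset.sum_eq_zero fun s _ => ?_
      by_contra hp
      have := hpairtop s t (Nat.pos_of_ne_zero hp); omega
    have hrow : (∑ s, P t s) = P t tstar := by
      refine Finset.sum_eq_single tstar (fun b _ hb => ?_) (fun h => absurd (mem_univ tstar) h)
      by_contra hp
      exact hb (hpairtop t b (Nat.pos_of_ne_zero hp))
    unfold Vf
    rw [hcol, hrow, hJt0, hKlow t ht]
    omega
  -- second solution: top fan vanishes
  have hcol' : (∑ s, P' s tstar) = 0 := by
    refine Finset.sum_eq_zero fun s _ => ?_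
    by_contra hp
    have hp' : 0 < P' s tstar := Nat.pos_of_ne_zero hp
    have hst : s < tstar := by
      by_contra hn; exact hp (hB'.psupp s tstar hn)
    have hVs : 0 < Vf J K P s := by
      have := row_le_Vf J' K' P' s tstar; rw [hV s]; omega
    have : 0 < P s tstar := by rw [← hVlow s hst]; exact hVs
    exact hP s tstar ⟨this, hp'⟩
  have hrow' : (∑ s, P' tstar s) = 0 := rowsum_top hB' hbd'
  have hKle : K' tstar ≤ ∑ t, K' t :=
    Finset.single_le_sum (fun t _ => Nat.zero_le _) (mem_univ tstar)
  have h1 : Vf J' K' P' tstar = K' tstar := by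
    unfold Vf; rw [hJ't, hcol', hrow']; omega
  have h2 := hV tstar
  have h3 : 2 * J tstar + K tstar ≤ Vf J K P tstar := by unfold Vf; omega
  omega

/-- Case 3a : K positive at top for first, zero for second (J both zero at top). -/
lemma case3a {tstar : Fin m} (hB : BC J K P) (hB' : BC J' K' P')
    (hV : ∀ t, Vf J K P t = Vf J' K' P' t)
    (hSK : (∑ t, K t) = ∑ t, K' t)
    (hbd : ∀ t, Vf J K P t ≠ 0 → t ≤ tstar)
    (htop : Vf J K P tstar ≠ 0)
    (hJ't : J' tstar = 0) (hKt : 0 < K tstar) (hK't : K' tstar = 0) : False := by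
  have hbd' : ∀ t, Vf J' K' P' t ≠ 0 → t ≤ tstar := fun t ht => hbd t (by rw [hV t]; exact ht)
  have hrow' : (∑ s, P' tstar s) = 0 := rowsum_top hB' hbd'
  have h1 : Vf J' K' P' tstar = ∑ s, P' s tstar := by
    unfold Vf; rw [hJ't, hK't, hrow']; omega
  have hcolpos : (∑ s, P' s tstar) ≠ 0 := by rw [← h1, ← hV tstar]; exact htop
  obtain ⟨i0, hi0⟩ := sum_pos_exists hcolpos
  have hK'pos : (∑ t, K' t) ≠ 0 := by
    have : K tstar ≤ ∑ t, K t := Finset.single_le_sum (fun t _ => Nat.zero_le _) (mem_univ tstar)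
    omega
  obtain ⟨t1, ht1⟩ := sum_pos_exists hK'pos
  have ht1le : t1 ≤ tstar := hbd' t1 (by have := K_le_Vf J' K' P' t1; omega)
  have ht1lt : t1 < tstar := by
    rcases eq_or_lt_of_le ht1le with h | h
    · exact absurd (h ▸ ht1) (by omega)
    · exact h
  exact absurd (hB'.pk i0 tstar hi0 t1 ht1lt) (by omega)

/-- Top fan lemma: the maximal lower index carries a pair to the top. -/
lemma topfan {tstar i1 : Fin m} (hB : BC J K P)
    (hbd : ∀ t, Vf J K P t ≠ 0 → t ≤ tstar)
    (htop : Vf J K P tstar ≠ 0)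
    (hJt : J tstar = 0) (hKt : K tstar = 0)
    (hi1t : i1 < tstar) (hVi1 : Vf J K P i1 ≠ 0)
    (hi1max : ∀ t, t < tstar → Vf J K P t ≠ 0 → t ≤ i1) : 0 < P i1 tstar := by
  have hrow : (∑ s, P tstar s) = 0 := rowsum_top hB hbd
  have h1 : Vf J K P tstar = ∑ s, P s tstar := by
    unfold Vf; rw [hJt, hKt, hrow]; omega
  obtain ⟨i2, hi2⟩ := sum_pos_exists (h1 ▸ htop)
  have hi2lt : i2 < tstar := by
    by_contra hn; exact absurd (hB.psupp i2 tstar hn) (by omega)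
  have hi2le : i2 ≤ i1 := hi1max i2 hi2lt (by have := row_le_Vf J K P i2 tstar; omega)
  by_contra hP0
  have hP0' : P i1 tstar = 0 := by omega
  have hi2i1 : i2 < i1 := by
    rcases eq_or_lt_of_le hi2le with h | h
    · exact absurd (h ▸ hi2) (by omega)
    · exact h
  have hJ1 : J i1 = 0 := hB.pjmid i2 i1 tstar hi2i1 hi1t hi2
  have hK1 : K i1 = 0 := hB.pk i2 tstar hi2 i1 hi1t
  have hcol : (∑ s, P s i1) = 0 := by
    refine Finset.sum_eq_zero fun s _ => ?_
    by_contra hp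
    have hp' : 0 < P s i1 := Nat.pos_of_ne_zero hp
    have hsi1 : s < i1 := by by_contra hn; exact hp (hB.psupp s i1 hn)
    rcases lt_trichotomy s i2 with h | h | h
    · exact absurd (hB.pcross s i2 i1 tstar h hi2i1 hi1t hp') (by omega)
    · subst h; exact absurd (hB.pmin s i1 tstar hsi1 hi1t hp') (by omega)
    · exact absurd (hB.pnest i2 s i1 tstar h hsi1 hi1t hi2) (by omega)
  have hrow1 : (∑ s, P i1 s) = 0 := by
    refine Finset.sum_eq_zero fun s _ => ?_
    by_contra hp
    have hp' : 0 < P i1 s := Nat.pos_of_ne_zero hp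
    have hi1s : i1 < s := by by_contra hn; exact hp (hB.psupp i1 s hn)
    have hsle : s ≤ tstar := hbd s (by have := col_le_Vf J K P i1 s; omega)
    rcases eq_or_lt_of_le hsle with h | h
    · subst h; omega
    · have := hi1max s h (by have := col_le_Vf J K P i1 s; omega); omega
  have : Vf J K P i1 = 0 := by unfold Vf; rw [hJ1, hK1, hcol, hrow1]
  exact hVi1 this

lemma keystep (hB : BC J K P) (hB' : BC J' K' P')
    (hV : ∀ t, Vf J K P t = Vf J' K' P' t)
    (hSK : (∑ t, K t) = ∑ t, K' t)
    (hne : ∃ t, Vf J K P t ≠ 0) :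
    (∃ t, 0 < J t ∧ 0 < J' t) ∨ (∃ t, 0 < K t ∧ 0 < K' t) ∨
      ∃ i k, 0 < P i k ∧ 0 < P' i k := by
  by_contra hc
  have hJn : ∀ t, ¬ (0 < J t ∧ 0 < J' t) := fun t h => hc (Or.inl ⟨t, h⟩)
  have hKn : ∀ t, ¬ (0 < K t ∧ 0 < K' t) := fun t h => hc (Or.inr (Or.inl ⟨t, h⟩))
  have hPn : ∀ i k, ¬ (0 < P i k ∧ 0 < P' i k) := fun i k h => hc (Or.inr (Or.inr ⟨i, k, h⟩))
  obtain ⟨t0, ht0⟩ := hne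
  have hFne : (univ.filter fun t => Vf J K P t ≠ 0).Nonempty :=
    ⟨t0, mem_filter.2 ⟨mem_univ _, ht0⟩⟩
  set tstar := (univ.filter fun t => Vf J K P t ≠ 0).max' hFne with htdef
  have htop : Vf J K P tstar ≠ 0 := (mem_filter.1 (Finset.max'_mem _ hFne)).2
  have hbd : ∀ t, Vf J K P t ≠ 0 → t ≤ tstar := fun t ht =>
    Finset.le_max' _ t (mem_filter.2 ⟨mem_univ _, ht⟩)
  have hbd' : ∀ t, Vf J' K' P' t ≠ 0 → t ≤ tstar := fun t ht => hbd t (by rw [hV t]; exact ht)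
  have htop' : Vf J' K' P' tstar ≠ 0 := by rw [← hV tstar]; exact htop
  have hP' : ∀ i k, ¬ (0 < P' i k ∧ 0 < P i k) := fun i k h => hPn i k ⟨h.2, h.1⟩
  have hV' : ∀ t, Vf J' K' P' t = Vf J K P t := fun t => (hV t).symm
  rcases Nat.eq_zero_or_pos (J tstar) with hJ0 | hJpos
  · rcases Nat.eq_zero_or_pos (J' tstar) with hJ'0 | hJ'pos
    · -- both J zero at top
      rcases Nat.eq_zero_or_pos (K tstar) with hK0 | hKpos
      · rcases Nat.eq_zero_or_pos (K' tstar) with hK'0 | hK'pos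
        · -- both K zero at top: use topfan
          have hrow : (∑ s, P tstar s) = 0 := rowsum_top hB hbd
          have h1 : Vf J K P tstar = ∑ s, P s tstar := by
            unfold Vf; rw [hJ0, hK0, hrow]; omega
          obtain ⟨i2, hi2⟩ := sum_pos_exists (h1 ▸ htop)
          have hi2lt : i2 < tstar := by
            by_contra hn; exact absurd (hB.psupp i2 tstar hn) (by omega)
          have hVi2 : Vf J K P i2 ≠ 0 := by have := row_le_Vf J K P i2 tstar; omega
          have hGne : (univ.filter fun t => t < tstar ∧ Vf J K P t ≠ 0).Nonempty :=
            ⟨i2, mem_filter.2 ⟨mem_univ _, hi2lt, hVi2⟩⟩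
          set i1 := (univ.filter fun t => t < tstar ∧ Vf J K P t ≠ 0).max' hGne with hi1def
          have hi1mem := mem_filter.1 (Finset.max'_mem _ hGne)
          have hi1t : i1 < tstar := hi1mem.2.1
          have hVi1 : Vf J K P i1 ≠ 0 := hi1mem.2.2
          have hi1max : ∀ t, t < tstar → Vf J K P t ≠ 0 → t ≤ i1 := fun t h1 h2 =>
            Finset.le_max' _ t (mem_filter.2 ⟨mem_univ _, h1, h2⟩)
          have hp1 := topfan hB hbd htop hJ0 hK0 hi1t hVi1 hi1max
          have hp2 := topfan hB' hbd' htop' hJ'0 hK'0 hi1t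
            (by rw [← hV i1]; exact hVi1)
            (fun t h1 h2 => hi1max t h1 (by rw [hV t]; exact h2))
          exact hPn i1 tstar ⟨hp1, hp2⟩
        · exact case3a hB' hB hV' hSK.symm hbd' htop' hJ0 hK'pos hK0
      · rcases Nat.eq_zero_or_pos (K' tstar) with hK'0 | hK'pos
        · exact case3a hB hB' hV hSK hbd htop hJ'0 hKpos hK'0
        · exact hKn tstar ⟨hKpos, hK'pos⟩
    · exact case2 hB' hB hV' hSK.symm hbd' hJ'pos hJ0 hP'
  · rcases Nat.eq_zero_or_pos (J' tstar) with hJ'0 | hJ'pos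
    · exact case2 hB hB' hV hSK hbd hJpos hJ'0 hPn
    · exact hJn tstar ⟨hJpos, hJ'pos⟩


lemma sum_split (f : Fin m → ℕ) (i : Fin m) (h : 0 < f i) :
    ∑ t, f t = (∑ t, (if t = i then f t - 1 else f t)) + 1 := by
  classical
  rw [← Finset.add_sum_erase _ f (mem_univ i), ← Finset.add_sum_erase _ _ (mem_univ i)]
  have h1 : (∑ x ∈ univ.erase i, (if x = i then f x - 1 else f x)) = ∑ x ∈ univ.erase i, f x :=
    Finset.sum_congr rfl fun x hx => if_neg (Finset.ne_of_mem_erase hx)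
  rw [h1, if_pos rfl]
  omega

lemma sum_ite_one (i : Fin m) (c : ℕ) : (∑ t, if t = i then c else 0) = c := by
  simp

lemma core_zero_aux (J K : Fin m → ℕ) (P : Fin m → Fin m → ℕ)
    (J' K' : Fin m → ℕ) (P' : Fin m → Fin m → ℕ) (hB : BC J K P) (hB' : BC J' K' P')
    (hV : ∀ t, Vf J K P t = Vf J' K' P' t) (h0 : ∀ t, Vf J K P t = 0) :
    J = J' ∧ K = K' ∧ P = P' := by
  have hV0' : ∀ t, Vf J' K' P' t = 0 := fun t => (hV t) ▸ h0 t
  refine ⟨funext fun t => ?_, funext fun t => ?_, funext fun s => funext fun t => ?_⟩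
  · have h1 := h0 t; have h2 := hV0' t; unfold Vf at h1 h2; omega
  · have h1 := h0 t; have h2 := hV0' t; unfold Vf at h1 h2; omega
  · have h1 := col_le_Vf J K P s t; have h2 := col_le_Vf J' K' P' s t
    rw [h0 t] at h1; rw [hV0' t] at h2; omega

lemma core : ∀ (N : ℕ) (J K : Fin m → ℕ) (P : Fin m → Fin m → ℕ)
    (J' K' : Fin m → ℕ) (P' : Fin m → Fin m → ℕ), BC J K P → BC J' K' P' →
    (∀ t, Vf J K P t = Vf J' K' P' t) → (∑ t, K t) = (∑ t, K' t) →
    (∑ t, Vf J K P t) ≤ N → J = J' ∧ K = K' ∧ P = P' := by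
  intro N
  induction N with
  | zero =>
    intro J K P J' K' P' hB hB' hV hSK hle
    refine core_zero_aux J K P J' K' P' hB hB' hV fun t => ?_
    have : Vf J K P t ≤ ∑ t, Vf J K P t :=
      Finset.single_le_sum (f := fun t => Vf J K P t) (fun t _ => Nat.zero_le _) (mem_univ t)
    omega
  | succ n ih =>
    intro J K P J' K' P' hB hB' hV hSK hle
    by_cases h0 : ∀ t, Vf J K P t = 0
    · exact core_zero_aux J K P J' K' P' hB hB' hV h0
    · push_neg at h0
      have hpos : 0 < ∑ t, Vf J K P t := by
        obtain ⟨t, ht⟩ := h0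
        have : Vf J K P t ≤ ∑ t, Vf J K P t :=
          Finset.single_le_sum (f := fun t => Vf J K P t) (fun t _ => Nat.zero_le _) (mem_univ t)
        omega
      have updle : ∀ (Q : Fin m → ℕ) (t0 t : Fin m), Function.update Q t0 (Q t0 - 1) t ≤ Q t := by
        intro Q t0 t
        rcases eq_or_ne t t0 with h | hne
        · subst h; rw [Function.update_self]; omega
        · rw [Function.update_of_ne hne]
      have updrel : ∀ (Q : Fin m → ℕ) (t0 : Fin m), 0 < Q t0 → ∀ t,
          Q t = Function.update Q t0 (Q t0 - 1) t + (if t = t0 then 1 else 0) := by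
        intro Q t0 hQ t
        rcases eq_or_ne t t0 with h | hne
        · subst h; rw [Function.update_self, if_pos rfl]; omega
        · rw [Function.update_of_ne hne, if_neg hne, add_zero]
      rcases keystep hB hB' hV hSK h0 with ⟨t0, hJ1, hJ2⟩ | ⟨t0, hK1, hK2⟩ | ⟨i0, k0, hP1, hP2⟩
      · -- subtract from J
        have hBn : BC (Function.update J t0 (J t0 - 1)) K P :=
          hB.mono (updle J t0) (fun _ => le_rfl) (fun _ _ => le_rfl)
        have hBn' : BC (Function.update J' t0 (J' t0 - 1)) K' P' :=
          hB'.mono (updle J' t0) (fun _ => le_rfl) (fun _ _ => le_rfl)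
        have hrelV : ∀ t, Vf J K P t =
            Vf (Function.update J t0 (J t0 - 1)) K P t + 2 * (if t = t0 then 1 else 0) := by
          intro t; unfold Vf; have := updrel J t0 hJ1 t; omega
        have hrelV' : ∀ t, Vf J' K' P' t =
            Vf (Function.update J' t0 (J' t0 - 1)) K' P' t + 2 * (if t = t0 then 1 else 0) := by
          intro t; unfold Vf; have := updrel J' t0 hJ2 t; omega
        have hVn : ∀ t, Vf (Function.update J t0 (J t0 - 1)) K P t =
            Vf (Function.update J' t0 (J' t0 - 1)) K' P' t := by
          intro t; have h1 := hrelV t; have h2 := hrelV' t; have h3 := hV t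
          rcases eq_or_ne t t0 with h | hne
          · rw [if_pos h] at h1 h2; omega
          · rw [if_neg hne] at h1 h2; omega
        have hsum : (∑ t, Vf J K P t) =
            (∑ t, Vf (Function.update J t0 (J t0 - 1)) K P t) + 2 := by
          rw [Finset.sum_congr rfl fun t _ => hrelV t, Finset.sum_add_distrib,
            ← Finset.mul_sum, sum_ite_one]
          omega
        obtain ⟨e1, e2, e3⟩ := ih _ K P _ K' P' hBn hBn' hVn hSK (by omega)
        refine ⟨funext fun t => ?_, e2, e3⟩
        have h := congrFun e1 t
        rcases eq_or_ne t t0 with ht | hne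
        · subst ht; rw [Function.update_self, Function.update_self] at h; omega
        · rwa [Function.update_of_ne hne, Function.update_of_ne hne] at h
      · -- subtract from K
        have hBn : BC J (Function.update K t0 (K t0 - 1)) P :=
          hB.mono (fun _ => le_rfl) (updle K t0) (fun _ _ => le_rfl)
        have hBn' : BC J' (Function.update K' t0 (K' t0 - 1)) P' :=
          hB'.mono (fun _ => le_rfl) (updle K' t0) (fun _ _ => le_rfl)
        have hrelV : ∀ t, Vf J K P t =
            Vf J (Function.update K t0 (K t0 - 1)) P t + (if t = t0 then 1 else 0) := by
          intro t; unfold Vf; have := updrel K t0 hK1 t; omega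
        have hrelV' : ∀ t, Vf J' K' P' t =
            Vf J' (Function.update K' t0 (K' t0 - 1)) P' t + (if t = t0 then 1 else 0) := by
          intro t; unfold Vf; have := updrel K' t0 hK2 t; omega
        have hVn : ∀ t, Vf J (Function.update K t0 (K t0 - 1)) P t =
            Vf J' (Function.update K' t0 (K' t0 - 1)) P' t := by
          intro t; have h1 := hrelV t; have h2 := hrelV' t; have h3 := hV t
          rcases eq_or_ne t t0 with h | hne
          · rw [if_pos h] at h1 h2; omega
          · rw [if_neg hne] at h1 h2; omega
        have hSKn : (∑ t, Function.update K t0 (K t0 - 1) t) =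
            ∑ t, Function.update K' t0 (K' t0 - 1) t := by
          have e1 : (∑ t, K t) = (∑ t, Function.update K t0 (K t0 - 1) t) + 1 := by
            rw [Finset.sum_congr rfl fun t _ => updrel K t0 hK1 t, Finset.sum_add_distrib,
              sum_ite_one]
          have e2 : (∑ t, K' t) = (∑ t, Function.update K' t0 (K' t0 - 1) t) + 1 := by
            rw [Finset.sum_congr rfl fun t _ => updrel K' t0 hK2 t, Finset.sum_add_distrib,
              sum_ite_one]
          omega
        have hsum : (∑ t, Vf J K P t) =
            (∑ t, Vf J (Function.update K t0 (K t0 - 1)) P t) + 1 := by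
          rw [Finset.sum_congr rfl fun t _ => hrelV t, Finset.sum_add_distrib, sum_ite_one]
        obtain ⟨e1, e2, e3⟩ := ih J _ P J' _ P' hBn hBn' hVn hSKn (by omega)
        refine ⟨e1, funext fun t => ?_, e3⟩
        have h := congrFun e2 t
        rcases eq_or_ne t t0 with ht | hne
        · subst ht; rw [Function.update_self, Function.update_self] at h; omega
        · rwa [Function.update_of_ne hne, Function.update_of_ne hne] at h
      · -- subtract from P
        have hik : i0 < k0 := by
          by_contra hn; exact absurd (hB.psupp i0 k0 hn) (by omega)
        have hikne : i0 ≠ k0 := ne_of_lt hik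
        have updle2 : ∀ (Q : Fin m → Fin m → ℕ) (s t : Fin m),
            Function.update Q i0 (Function.update (Q i0) k0 (Q i0 k0 - 1)) s t ≤ Q s t := by
          intro Q s t
          rcases eq_or_ne s i0 with h | hs
          · subst h
            rw [Function.update_self]
            rcases eq_or_ne t k0 with h | ht
            · subst h; rw [Function.update_self]; omega
            · rw [Function.update_of_ne ht]
          · rw [Function.update_of_ne hs]
        have hBn : BC J K (Function.update P i0 (Function.update (P i0) k0 (P i0 k0 - 1))) :=
          hB.mono (fun _ => le_rfl) (fun _ => le_rfl) (updle2 P)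
        have hBn' : BC J' K' (Function.update P' i0 (Function.update (P' i0) k0 (P' i0 k0 - 1))) :=
          hB'.mono (fun _ => le_rfl) (fun _ => le_rfl) (updle2 P')
        have colrel : ∀ (Q : Fin m → Fin m → ℕ), 0 < Q i0 k0 → ∀ t,
            (∑ s, Q s t) =
              (∑ s, Function.update Q i0 (Function.update (Q i0) k0 (Q i0 k0 - 1)) s t) +
              (if t = k0 then 1 else 0) := by
          intro Q hQ t
          rcases eq_or_ne k0 t with h | hne'
          · subst h
            rw [if_pos rfl]
            have he : (∑ s, Function.update Q i0 (Function.update (Q i0) k0 (Q i0 k0 - 1)) s k0)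
                = ∑ s, (if s = i0 then Q s k0 - 1 else Q s k0) := by
              refine Finset.sum_congr rfl fun s _ => ?_
              rcases eq_or_ne i0 s with h | hs
              · subst h
                rw [Function.update_self, Function.update_self, if_pos rfl]
              · rw [Function.update_of_ne (Ne.symm hs), if_neg (Ne.symm hs)]
            rw [he, ← sum_split (fun s => Q s k0) i0 hQ]
          · have hne : t ≠ k0 := Ne.symm hne'
            rw [if_neg hne, add_zero]
            refine Finset.sum_congr rfl fun s _ => ?_
            rcases eq_or_ne i0 s with h | hs
            · subst h
              rw [Function.update_self, Function.update_of_ne hne]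
            · rw [Function.update_of_ne (Ne.symm hs)]
        have rowrel : ∀ (Q : Fin m → Fin m → ℕ), 0 < Q i0 k0 → ∀ t,
            (∑ s, Q t s) =
              (∑ s, Function.update Q i0 (Function.update (Q i0) k0 (Q i0 k0 - 1)) t s) +
              (if t = i0 then 1 else 0) := by
          intro Q hQ t
          rcases eq_or_ne i0 t with h | hne'
          · subst h
            rw [if_pos rfl]
            have he : (∑ s, Function.update Q i0 (Function.update (Q i0) k0 (Q i0 k0 - 1)) i0 s)
                = ∑ s, (if s = k0 then Q i0 s - 1 else Q i0 s) := by
              refine Finset.sum_congr rfl fun s _ => ?_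
              rw [Function.update_self]
              rcases eq_or_ne k0 s with h | hs
              · subst h; rw [Function.update_self, if_pos rfl]
              · rw [Function.update_of_ne (Ne.symm hs), if_neg (Ne.symm hs)]
            rw [he, ← sum_split (fun s => Q i0 s) k0 hQ]
          · rw [if_neg (Ne.symm hne'), add_zero]
            refine Finset.sum_congr rfl fun s _ => ?_
            rw [Function.update_of_ne (Ne.symm hne')]
        have hrelV : ∀ (JJ KK : Fin m → ℕ) (Q : Fin m → Fin m → ℕ), 0 < Q i0 k0 → ∀ t,
            Vf JJ KK Q t =
              Vf JJ KK (Function.update Q i0 (Function.update (Q i0) k0 (Q i0 k0 - 1))) t +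
              ((if t = i0 then 1 else 0) + (if t = k0 then 1 else 0)) := by
          intro JJ KK Q hQ t
          have h1 := colrel Q hQ t
          have h2 := rowrel Q hQ t
          unfold Vf
          omega
        have hVn : ∀ t, Vf J K (Function.update P i0 (Function.update (P i0) k0 (P i0 k0 - 1))) t =
            Vf J' K' (Function.update P' i0 (Function.update (P' i0) k0 (P' i0 k0 - 1))) t := by
          intro t
          have h1 := hrelV J K P hP1 t
          have h2 := hrelV J' K' P' hP2 t
          have h3 := hV t
          omega
        have hsum : (∑ t, Vf J K P t) =
            (∑ t, Vf J K (Function.update P i0 (Function.update (P i0) k0 (P i0 k0 - 1))) t)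
              + 2 := by
          rw [Finset.sum_congr rfl fun t _ => hrelV J K P hP1 t, Finset.sum_add_distrib,
            Finset.sum_add_distrib, sum_ite_one, sum_ite_one]
        obtain ⟨e1, e2, e3⟩ := ih J K _ J' K' _ hBn hBn' hVn hSK (by omega)
        refine ⟨e1, e2, funext fun s => funext fun t => ?_⟩
        have h := congrFun (congrFun e3 s) t
        rcases eq_or_ne i0 s with hs | hs
        · subst hs
          rw [Function.update_self, Function.update_self] at h
          rcases eq_or_ne k0 t with ht | ht
          · subst ht
            rw [Function.update_self, Function.update_self] at h; omega
          · rwa [Function.update_of_ne (Ne.symm ht), Function.update_of_ne (Ne.symm ht)] at h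
        · rwa [Function.update_of_ne (Ne.symm hs), Function.update_of_ne (Ne.symm hs)] at h


def Wf (J K L : Fin m → ℕ) (P : Fin m → Fin m → ℕ) (t : Fin m) : ℕ :=
  2 * J t + K t + L t + (∑ s, P s t) + (∑ s, P t s)

structure SC (a b : ℕ) (J K L : Fin m → ℕ) (P : Fin m → Fin m → ℕ) : Prop where
  psupp : ∀ s t, ¬ s < t → P s t = 0
  ab : 0 < a → b = 0
  ja : ∀ t, 0 < J t → a = 0
  jb : ∀ t, 0 < J t → b = 0
  kl : ∀ s t, 0 < K s → L t = 0
  la : ∀ t, 0 < L t → a = 0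
  kb : ∀ t, 0 < K t → b = 0
  jj : ∀ s t, s < t → 0 < J s → J t = 0
  pa : ∀ s t, 0 < P s t → a = 0
  pb : ∀ s t, 0 < P s t → b = 0
  pk : ∀ i k, 0 < P i k → ∀ t, t < k → K t = 0
  pl : ∀ i k, 0 < P i k → ∀ t, t < k → L t = 0
  pjmid : ∀ i j k, i < j → j < k → 0 < P i k → J j = 0
  pjhigh : ∀ i j k, i < j → j < k → 0 < P i j → J k = 0
  pmin : ∀ i j k, i < j → j < k → 0 < P i j → P i k = 0
  pcross : ∀ i j k l, i < j → j < k → k < l → 0 < P i k → P j l = 0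
  pnest : ∀ i j k l, i < j → j < k → k < l → 0 < P i l → P j k = 0
  kj : ∀ i j, i < j → 0 < K i → J j = 0
  lj : ∀ i j, i < j → 0 < L i → J j = 0

variable {a b a' b' : ℕ} {L L' : Fin m → ℕ}

lemma SC.swap (h : SC a b J K L P) : SC b a J L K P where
  psupp := h.psupp
  ab hb := by
    by_contra hn
    exact absurd (h.ab (Nat.pos_of_ne_zero hn)) (by omega)
  ja t ht := h.jb t ht
  jb t ht := h.ja t ht
  kl s t hs := by
    by_contra hn
    exact absurd (h.kl t s (Nat.pos_of_ne_zero hn)) (by omega)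
  la t ht := h.kb t ht
  kb t ht := h.la t ht
  jj := h.jj
  pa s t ht := h.pb s t ht
  pb s t ht := h.pa s t ht
  pk := h.pl
  pl := h.pk
  pjmid := h.pjmid
  pjhigh := h.pjhigh
  pmin := h.pmin
  pcross := h.pcross
  pnest := h.pnest
  kj := h.lj
  lj := h.kj

lemma SC.toBC (h : SC a b J K L P) : BC J K P where
  psupp := h.psupp
  jj := h.jj
  pk := h.pk
  pjmid := h.pjmid
  pjhigh := h.pjhigh
  pmin := h.pmin
  pcross := h.pcross
  pnest := h.pnest
  kj := h.kj

lemma Wf_comm (J K L : Fin m → ℕ) (P) (t) : Wf J K L P t = Wf J L K P t := by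
  unfold Wf; omega

lemma emin (h : SC a b J K L P) (e : ℕ) :
    e = min (4 * a + e + 2 * ∑ t, K t) (4 * b + e + 2 * ∑ t, L t) := by
  by_cases hK : ∀ t, K t = 0
  · by_cases hL : ∀ t, L t = 0
    · have h1 : (∑ t, K t) = 0 := Finset.sum_eq_zero fun t _ => hK t
      have h2 : (∑ t, L t) = 0 := Finset.sum_eq_zero fun t _ => hL t
      have hab : a = 0 ∨ b = 0 := by
        rcases Nat.eq_zero_or_pos a with ha | ha
        · exact Or.inl ha
        · exact Or.inr (h.ab ha)
      omega
    · push_neg at hL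
      obtain ⟨t0, ht0⟩ := hL
      have ha : a = 0 := h.la t0 (Nat.pos_of_ne_zero ht0)
      have h1 : (∑ t, K t) = 0 := Finset.sum_eq_zero fun t _ => hK t
      omega
  · push_neg at hK
    obtain ⟨t0, ht0⟩ := hK
    have hb : b = 0 := h.kb t0 (Nat.pos_of_ne_zero ht0)
    have h2 : (∑ t, L t) = 0 :=
      Finset.sum_eq_zero fun t _ => h.kl t0 t (Nat.pos_of_ne_zero ht0)
    omega

lemma caseA (ha : 0 < a) (h : SC a b J K L P) (h' : SC a' b' J' K' L' P')
    (E1 : 4 * a + 2 * (∑ t, K t) = 4 * a' + 2 * ∑ t, K' t)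
    (E3 : ∀ t, Wf J K L P t = Wf J' K' L' P' t) :
    a = a' ∧ b = b' ∧ J = J' ∧ K = K' ∧ L = L' ∧ P = P' := by
  have zeros : ∀ (aa bb : ℕ) (JJ KK LL : Fin m → ℕ) (PP : Fin m → Fin m → ℕ),
      SC aa bb JJ KK LL PP → 0 < aa →
      bb = 0 ∧ (∀ t, JJ t = 0) ∧ (∀ t, LL t = 0) ∧ (∀ s t, PP s t = 0) ∧
        (∀ t, Wf JJ KK LL PP t = KK t) := by
    intro aa bb JJ KK LL PP hh haa
    have hb : bb = 0 := hh.ab haa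
    have hJ : ∀ t, JJ t = 0 := fun t => by
      by_contra hn; exact absurd (hh.ja t (Nat.pos_of_ne_zero hn)) (by omega)
    have hL : ∀ t, LL t = 0 := fun t => by
      by_contra hn; exact absurd (hh.la t (Nat.pos_of_ne_zero hn)) (by omega)
    have hP : ∀ s t, PP s t = 0 := fun s t => by
      by_contra hn; exact absurd (hh.pa s t (Nat.pos_of_ne_zero hn)) (by omega)
    refine ⟨hb, hJ, hL, hP, fun t => ?_⟩
    have c1 : (∑ s, PP s t) = 0 := Finset.sum_eq_zero fun s _ => hP s t
    have c2 : (∑ s, PP t s) = 0 := Finset.sum_eq_zero fun s _ => hP t s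
    unfold Wf; rw [c1, c2, hJ t, hL t]; omega
  obtain ⟨hb, hJ, hL, hP, hW⟩ := zeros a b J K L P h ha
  have hKW' : ∀ t, K t = Wf J' K' L' P' t := fun t => by rw [← hW t]; exact E3 t
  have hKsum : (∑ t, K t) = 2 * (∑ t, J' t) + (∑ t, K' t) + (∑ t, L' t) +
      (∑ t, ∑ s, P' s t) + (∑ t, ∑ s, P' t s) := by
    rw [Finset.sum_congr rfl fun t _ => hKW' t]
    unfold Wf
    rw [Finset.sum_add_distrib, Finset.sum_add_distrib, Finset.sum_add_distrib,
      Finset.sum_add_distrib, ← Finset.mul_sum]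
  have ha' : 0 < a' := by omega
  obtain ⟨hb', hJ', hL', hP', hW'⟩ := zeros a' b' J' K' L' P' h' ha'
  have hKK : K = K' := funext fun t => by
    have e1 := E3 t
    rw [hW t, hW' t] at e1
    exact e1
  have hKsum2 : (∑ t, K t) = (∑ t, K' t) := by rw [hKK]
  refine ⟨by omega, by omega, funext fun t => by rw [hJ t, hJ' t], hKK,
    funext fun t => by rw [hL t, hL' t],
    funext fun s => funext fun t => by rw [hP s t, hP' s t]⟩

lemma master (h : SC a b J K L P) (h' : SC a' b' J' K' L' P') {e e' : ℕ}
    (E1 : 4 * a + e + 2 * (∑ t, K t) = 4 * a' + e' + 2 * ∑ t, K' t)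
    (E2 : 4 * b + e + 2 * (∑ t, L t) = 4 * b' + e' + 2 * ∑ t, L' t)
    (E3 : ∀ t, Wf J K L P t = Wf J' K' L' P' t) :
    a = a' ∧ b = b' ∧ e = e' ∧ J = J' ∧ K = K' ∧ L = L' ∧ P = P' := by
  have he : e = e' := by
    have h1 := emin h e
    have h2 := emin h' e'
    omega
  have E1' : 4 * a + 2 * (∑ t, K t) = 4 * a' + 2 * ∑ t, K' t := by omega
  have E2' : 4 * b + 2 * (∑ t, L t) = 4 * b' + 2 * ∑ t, L' t := by omega
  have E3s : ∀ t, Wf J L K P t = Wf J' L' K' P' t := fun t => by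
    have := E3 t; unfold Wf at this ⊢; omega
  rcases Nat.eq_zero_or_pos a with ha | ha
  · rcases Nat.eq_zero_or_pos a' with ha' | ha'
    · rcases Nat.eq_zero_or_pos b with hb | hb
      · rcases Nat.eq_zero_or_pos b' with hb' | hb'
        · -- all of a, b, a', b' are zero
          have hSK : (∑ t, K t) = ∑ t, K' t := by omega
          have hSL : (∑ t, L t) = ∑ t, L' t := by omega
          by_cases hKz : ∀ t, K t = 0
          · have hSK0 : (∑ t, K t) = 0 := Finset.sum_eq_zero fun t _ => hKz t
            have hKz' : ∀ t, K' t = 0 := fun t => by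
              have h1 : K' t ≤ ∑ t, K' t :=
                Finset.single_le_sum (f := fun t => K' t) (fun t _ => Nat.zero_le _) (mem_univ t)
              omega
            have hVW : ∀ t, Vf J L P t = Wf J K L P t := fun t => by
              unfold Vf Wf; rw [hKz t]; omega
            have hVW' : ∀ t, Vf J' L' P' t = Wf J' K' L' P' t := fun t => by
              unfold Vf Wf; rw [hKz' t]; omega
            obtain ⟨e1, e2, e3⟩ := core (∑ t, Vf J L P t) J L P J' L' P'
              (h.swap.toBC) (h'.swap.toBC)
              (fun t => by rw [hVW t, hVW' t]; exact E3 t) hSL le_rfl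
            exact ⟨by omega, by omega, he, e1,
              funext fun t => by rw [hKz t, hKz' t], e2, e3⟩
          · push_neg at hKz
            obtain ⟨t0, ht0⟩ := hKz
            have hLz : ∀ t, L t = 0 := fun t => h.kl t0 t (Nat.pos_of_ne_zero ht0)
            have hSKpos : 0 < ∑ t, K t := by
              have h1 : K t0 ≤ ∑ t, K t :=
                Finset.single_le_sum (f := fun t => K t) (fun t _ => Nat.zero_le _) (mem_univ t0)
              omega
            obtain ⟨t1, ht1⟩ := sum_pos_exists (f := K') (by omega)
            have hLz' : ∀ t, L' t = 0 := fun t => h'.kl t1 t ht1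
            have hVW : ∀ t, Vf J K P t = Wf J K L P t := fun t => by
              unfold Vf Wf; rw [hLz t]; omega
            have hVW' : ∀ t, Vf J' K' P' t = Wf J' K' L' P' t := fun t => by
              unfold Vf Wf; rw [hLz' t]; omega
            obtain ⟨e1, e2, e3⟩ := core (∑ t, Vf J K P t) J K P J' K' P'
              (h.toBC) (h'.toBC)
              (fun t => by rw [hVW t, hVW' t]; exact E3 t) hSK le_rfl
            exact ⟨by omega, by omega, he, e1, e2,
              funext fun t => by rw [hLz t, hLz' t], e3⟩
        · -- 0 < b'
          obtain ⟨c1, c2, c3, c4, c5, c6⟩ := caseA hb' h'.swap h.swap E2'.symm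
            (fun t => (E3s t).symm)
          exact ⟨c2.symm, c1.symm, he, c3.symm, c5.symm, c4.symm, c6.symm⟩
      · -- 0 < b
        obtain ⟨c1, c2, c3, c4, c5, c6⟩ := caseA hb h.swap h'.swap E2' E3s
        exact ⟨c2, c1, he, c3, c5, c4, c6⟩
    · -- 0 < a'
      obtain ⟨c1, c2, c3, c4, c5, c6⟩ := caseA ha' h' h E1'.symm (fun t => (E3 t).symm)
      exact ⟨c1.symm, c2.symm, he, c3.symm, c4.symm, c5.symm, c6.symm⟩
  · -- 0 < a
    obtain ⟨c1, c2, c3, c4, c5, c6⟩ := caseA ha h h' E1' E3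
    exact ⟨c1, c2, he, c3, c4, c5, c6⟩

end DoAux

namespace DoAux2

open Finset MvPolynomial

variable {m : ℕ}

abbrev DoPairs (m : ℕ) := {p : Fin m × Fin m // p.1 < p.2}

def dEquiv (m : ℕ) :
    (Unit ⊕ Unit ⊕ Fin m ⊕ Fin (m - 1) ⊕ DoPairs m ⊕ Unit ⊕ Fin m ⊕ Fin m ⊕ Fin m ⊕ Fin m) ≃
      DoVar m where
  toFun x :=
    match x with
    | .inl _ => .x1
    | .inr (.inl _) => .xn
    | .inr (.inr (.inl t)) => .xJ t
    | .inr (.inr (.inr (.inl t))) => .xJc t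
    | .inr (.inr (.inr (.inr (.inl p)))) => .xP p.1.1 p.1.2 p.2
    | .inr (.inr (.inr (.inr (.inr (.inl _))))) => .x1n
    | .inr (.inr (.inr (.inr (.inr (.inr (.inl t)))))) => .xK1 t
    | .inr (.inr (.inr (.inr (.inr (.inr (.inr (.inl t))))))) => .xKn t
    | .inr (.inr (.inr (.inr (.inr (.inr (.inr (.inr (.inl t)))))))) => .yK1 t
    | .inr (.inr (.inr (.inr (.inr (.inr (.inr (.inr (.inr t)))))))) => .yKn t
  invFun v :=
    match v with
    | .x1 => .inl ()
    | .xn => .inr (.inl ())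
    | .xJ t => .inr (.inr (.inl t))
    | .xJc t => .inr (.inr (.inr (.inl t)))
    | .xP s t h => .inr (.inr (.inr (.inr (.inl ⟨(s, t), h⟩))))
    | .x1n => .inr (.inr (.inr (.inr (.inr (.inl ())))))
    | .xK1 t => .inr (.inr (.inr (.inr (.inr (.inr (.inl t))))))
    | .xKn t => .inr (.inr (.inr (.inr (.inr (.inr (.inr (.inl t)))))))
    | .yK1 t => .inr (.inr (.inr (.inr (.inr (.inr (.inr (.inr (.inl t))))))))
    | .yKn t => .inr (.inr (.inr (.inr (.inr (.inr (.inr (.inr (.inr t))))))))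
  left_inv x := by
    rcases x with _ | (_ | (t | (t | (⟨⟨s, t⟩, h⟩ | (_ | (t | (t | (t | t))))))))  <;> rfl
  right_inv v := by cases v <;> rfl

instance : Fintype (DoVar m) := Fintype.ofEquiv _ (dEquiv m)

lemma sum_DoVar {M : Type*} [AddCommMonoid M] (g : DoVar m → M) :
    ∑ v : DoVar m, g v =
      g .x1 + (g .xn + ((∑ t, g (.xJ t)) + ((∑ t : Fin (m - 1), g (.xJc t)) +
        ((∑ p : DoPairs m, g (.xP p.1.1 p.1.2 p.2)) + (g .x1n +
        ((∑ t, g (.xK1 t)) + ((∑ t, g (.xKn t)) +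
        ((∑ t, g (.yK1 t)) + (∑ t, g (.yKn t)))))))))) := by
  rw [← Equiv.sum_comp (dEquiv m) g]
  simp only [Fintype.sum_sum_type, Finset.univ_unique, Finset.sum_singleton]
  rfl

lemma sum_DoPairs (f : Fin m → Fin m → ℕ) (hf : ∀ s t, ¬ s < t → f s t = 0) :
    (∑ p : DoPairs m, f p.1.1 p.1.2) = ∑ s, ∑ t, f s t := by
  classical
  have h1 : (∑ p : DoPairs m, f p.1.1 p.1.2) =
      ∑ x ∈ Finset.filter (fun p : Fin m × Fin m => p.1 < p.2) Finset.univ, f x.1 x.2 :=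
    (Finset.sum_subtype (Finset.filter (fun p : Fin m × Fin m => p.1 < p.2) Finset.univ)
      (fun x : Fin m × Fin m => by simp) (fun x : Fin m × Fin m => f x.1 x.2)).symm
  rw [h1, Finset.sum_subset (Finset.filter_subset _ Finset.univ)
    (fun x _ hx => hf x.1 x.2 (by simpa using hx)), ← Finset.sum_product']
  rw [Finset.univ_product_univ]

end DoAux2

namespace DoAux2

open Finset MvPolynomial Finsupp

variable {m : ℕ}

lemma X_eq_monomial' {K : Type*} [Field K] (n : ℕ) :
    (X n : MvPolynomial ℕ K) = monomial (Finsupp.single n 1) 1 := by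
  rw [← X_pow_eq_monomial, pow_one]

noncomputable def wgt (m : ℕ) : DoVar m → (ℕ →₀ ℕ)
  | .x1 => Finsupp.single 1 4
  | .xn => Finsupp.single (2 * m + 1) 4
  | .xJ t => Finsupp.single (2 * t.val + 2) 2
  | .xJc t => Finsupp.single (2 * t.val + 3) 1
  | .xP s t _ => Finsupp.single (2 * s.val + 2) 1 + Finsupp.single (2 * t.val + 2) 1
  | .x1n => Finsupp.single 1 1 + Finsupp.single (2 * m + 1) 1
  | .xK1 t => Finsupp.single (2 * t.val + 2) 1 + Finsupp.single 1 2
  | .xKn t => Finsupp.single (2 * t.val + 2) 1 + Finsupp.single (2 * m + 1) 2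
  | .yK1 t => Finsupp.single (2 * t.val + 2) 1 + Finsupp.single 1 3 + Finsupp.single (2 * m + 1) 1
  | .yKn t => Finsupp.single (2 * t.val + 2) 1 + Finsupp.single 1 1 + Finsupp.single (2 * m + 1) 3

lemma doImage_eq (K : Type*) [Field K] (m : ℕ) (v : DoVar m) :
    doImage K m v = monomial (wgt m v) 1 := by
  cases v <;>
    simp [doImage, wgt, X_pow_eq_monomial, X_eq_monomial', monomial_mul, monomial_pow,
      Finsupp.smul_single, smul_eq_mul, one_pow, mul_one, one_mul]

lemma piDo_monomial (K : Type*) [Field K] (m : ℕ) (d : DoVar m →₀ ℕ) :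
    piDo K m (monomial d 1) = monomial (d.sum fun v e => e • wgt m v) 1 := by
  rw [piDo, aeval_monomial, map_one, one_mul]
  have h1 : (d.prod fun v e => doImage K m v ^ e) =
      d.prod fun v e => monomial (e • wgt m v) (1 : K) := by
    refine Finset.prod_congr rfl fun v _ => ?_
    simp only [doImage_eq K m, monomial_pow, one_pow]
  rw [h1]
  rw [monomial_finsupp_sum_index, map_one, one_mul]

end DoAux2

namespace DoAux2

open Finset MvPolynomial

variable {m : ℕ}

lemma expsum_apply (d : DoVar m →₀ ℕ) (u : ℕ) :
    (d.sum fun v e => e • wgt m v) u = ∑ v : DoVar m, d v * (wgt m v u) := by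
  classical
  rw [Finsupp.sum_fintype _ _ (fun v => by simp)]
  rw [Finset.sum_apply']
  simp [Finsupp.smul_apply]

lemma fin_ne_of_val_ne {t s : Fin m} (h : (t : ℕ) ≠ (s : ℕ)) : t ≠ s := fun hc => h (by rw [hc])

lemma eval_at_one (hm : 1 ≤ m) (d : DoVar m →₀ ℕ) :
    (∑ v : DoVar m, d v * wgt m v 1) =
      4 * d .x1 + d .x1n + 2 * (∑ t, d (.xK1 t)) + 3 * (∑ t, d (.yK1 t)) + ∑ t, d (.yKn t) := by
  rw [sum_DoVar (fun v => d v * wgt m v 1)]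
  have c1 : wgt m (.x1 : DoVar m) 1 = 4 := Finsupp.single_eq_same
  have c2 : wgt m (.xn : DoVar m) 1 = 0 := Finsupp.single_eq_of_ne (by omega)
  have c3 : ∀ t : Fin m, wgt m (.xJ t) 1 = 0 := fun t => Finsupp.single_eq_of_ne (by omega)
  have c4 : ∀ t : Fin (m - 1), wgt m (.xJc t) 1 = 0 := fun t =>
    Finsupp.single_eq_of_ne (by omega)
  have c5 : ∀ p : DoPairs m, wgt m (.xP p.1.1 p.1.2 p.2) 1 = 0 := fun p => by
    show ((Finsupp.single _ 1 + Finsupp.single _ 1 : ℕ →₀ ℕ)) 1 = 0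
    rw [Finsupp.add_apply, Finsupp.single_eq_of_ne (by omega),
      Finsupp.single_eq_of_ne (by omega)]
    all_goals omega
  have c6 : wgt m (.x1n : DoVar m) 1 = 1 := by
    show ((Finsupp.single 1 1 + Finsupp.single (2 * m + 1) 1 : ℕ →₀ ℕ)) 1 = 1
    rw [Finsupp.add_apply, Finsupp.single_eq_same, Finsupp.single_eq_of_ne (by omega)]
    all_goals omega
  have c7 : ∀ t : Fin m, wgt m (.xK1 t) 1 = 2 := fun t => by
    show ((Finsupp.single _ 1 + Finsupp.single 1 2 : ℕ →₀ ℕ)) 1 = 2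
    rw [Finsupp.add_apply, Finsupp.single_eq_of_ne (by omega), Finsupp.single_eq_same]
    all_goals omega
  have c8 : ∀ t : Fin m, wgt m (.xKn t) 1 = 0 := fun t => by
    show ((Finsupp.single _ 1 + Finsupp.single _ 2 : ℕ →₀ ℕ)) 1 = 0
    rw [Finsupp.add_apply, Finsupp.single_eq_of_ne (by omega),
      Finsupp.single_eq_of_ne (by omega)]
    all_goals omega
  have c9 : ∀ t : Fin m, wgt m (.yK1 t) 1 = 3 := fun t => by
    show ((Finsupp.single _ 1 + Finsupp.single 1 3 + Finsupp.single _ 1 : ℕ →₀ ℕ)) 1 = 3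
    rw [Finsupp.add_apply, Finsupp.add_apply, Finsupp.single_eq_of_ne (by omega),
      Finsupp.single_eq_same, Finsupp.single_eq_of_ne (by omega)]
    all_goals omega
  have c10 : ∀ t : Fin m, wgt m (.yKn t) 1 = 1 := fun t => by
    show ((Finsupp.single _ 1 + Finsupp.single 1 1 + Finsupp.single _ 3 : ℕ →₀ ℕ)) 1 = 1
    rw [Finsupp.add_apply, Finsupp.add_apply, Finsupp.single_eq_of_ne (by omega),
      Finsupp.single_eq_same, Finsupp.single_eq_of_ne (by omega)]
    all_goals omega
  have b3 : (∑ t, d (DoVar.xJ t) * wgt m (.xJ t) 1) = 0 :=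
    Finset.sum_eq_zero fun t _ => by rw [c3 t, mul_zero]
  have b4 : (∑ t : Fin (m - 1), d (DoVar.xJc t) * wgt m (.xJc t) 1) = 0 :=
    Finset.sum_eq_zero fun t _ => by rw [c4 t, mul_zero]
  have b5 : (∑ p : DoPairs m, d (DoVar.xP p.1.1 p.1.2 p.2) * wgt m (.xP p.1.1 p.1.2 p.2) 1) = 0 :=
    Finset.sum_eq_zero fun p _ => by rw [c5 p, mul_zero]
  have b7 : (∑ t, d (DoVar.xK1 t) * wgt m (.xK1 t) 1) = 2 * ∑ t, d (DoVar.xK1 t) := by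
    rw [Finset.mul_sum]
    exact Finset.sum_congr rfl fun t _ => by rw [c7 t]; ring
  have b8 : (∑ t, d (DoVar.xKn t) * wgt m (.xKn t) 1) = 0 :=
    Finset.sum_eq_zero fun t _ => by rw [c8 t, mul_zero]
  have b9 : (∑ t, d (DoVar.yK1 t) * wgt m (.yK1 t) 1) = 3 * ∑ t, d (DoVar.yK1 t) := by
    rw [Finset.mul_sum]
    exact Finset.sum_congr rfl fun t _ => by rw [c9 t]; ring
  have b10 : (∑ t, d (DoVar.yKn t) * wgt m (.yKn t) 1) = ∑ t, d (DoVar.yKn t) :=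
    Finset.sum_congr rfl fun t _ => by rw [c10 t, mul_one]
  rw [c1, c2, c6, b3, b4, b5, b7, b8, b9, b10]
  ring

lemma eval_at_n (hm : 1 ≤ m) (d : DoVar m →₀ ℕ) :
    (∑ v : DoVar m, d v * wgt m v (2 * m + 1)) =
      4 * d .xn + d .x1n + 2 * (∑ t, d (.xKn t)) + (∑ t, d (.yK1 t)) +
        3 * ∑ t, d (.yKn t) := by
  rw [sum_DoVar (fun v => d v * wgt m v (2 * m + 1))]
  have c1 : wgt m (.x1 : DoVar m) (2 * m + 1) = 0 := Finsupp.single_eq_of_ne (by omega)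
  have c2 : wgt m (.xn : DoVar m) (2 * m + 1) = 4 := Finsupp.single_eq_same
  have c3 : ∀ t : Fin m, wgt m (.xJ t) (2 * m + 1) = 0 := fun t =>
    Finsupp.single_eq_of_ne (by omega)
  have c4 : ∀ t : Fin (m - 1), wgt m (.xJc t) (2 * m + 1) = 0 := fun t =>
    Finsupp.single_eq_of_ne (by have := t.isLt; omega)
  have c5 : ∀ p : DoPairs m, wgt m (.xP p.1.1 p.1.2 p.2) (2 * m + 1) = 0 := fun p => by
    show ((Finsupp.single _ 1 + Finsupp.single _ 1 : ℕ →₀ ℕ)) _ = 0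
    rw [Finsupp.add_apply, Finsupp.single_eq_of_ne (by omega),
      Finsupp.single_eq_of_ne (by omega)]
    all_goals omega
  have c6 : wgt m (.x1n : DoVar m) (2 * m + 1) = 1 := by
    show ((Finsupp.single 1 1 + Finsupp.single (2 * m + 1) 1 : ℕ →₀ ℕ)) _ = 1
    rw [Finsupp.add_apply, Finsupp.single_eq_of_ne (by omega), Finsupp.single_eq_same]
    all_goals omega
  have c7 : ∀ t : Fin m, wgt m (.xK1 t) (2 * m + 1) = 0 := fun t => by
    show ((Finsupp.single _ 1 + Finsupp.single 1 2 : ℕ →₀ ℕ)) _ = 0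
    rw [Finsupp.add_apply, Finsupp.single_eq_of_ne (by omega),
      Finsupp.single_eq_of_ne (by omega)]
    all_goals omega
  have c8 : ∀ t : Fin m, wgt m (.xKn t) (2 * m + 1) = 2 := fun t => by
    show ((Finsupp.single _ 1 + Finsupp.single _ 2 : ℕ →₀ ℕ)) _ = 2
    rw [Finsupp.add_apply, Finsupp.single_eq_of_ne (by omega), Finsupp.single_eq_same]
    all_goals omega
  have c9 : ∀ t : Fin m, wgt m (.yK1 t) (2 * m + 1) = 1 := fun t => by
    show ((Finsupp.single _ 1 + Finsupp.single 1 3 + Finsupp.single _ 1 : ℕ →₀ ℕ)) _ = 1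
    rw [Finsupp.add_apply, Finsupp.add_apply, Finsupp.single_eq_of_ne (by omega),
      Finsupp.single_eq_of_ne (by omega), Finsupp.single_eq_same]
    all_goals omega
  have c10 : ∀ t : Fin m, wgt m (.yKn t) (2 * m + 1) = 3 := fun t => by
    show ((Finsupp.single _ 1 + Finsupp.single 1 1 + Finsupp.single _ 3 : ℕ →₀ ℕ)) _ = 3
    rw [Finsupp.add_apply, Finsupp.add_apply, Finsupp.single_eq_of_ne (by omega),
      Finsupp.single_eq_of_ne (by omega), Finsupp.single_eq_same]
    all_goals omega
  have b3 : (∑ t, d (DoVar.xJ t) * wgt m (.xJ t) (2 * m + 1)) = 0 :=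
    Finset.sum_eq_zero fun t _ => by rw [c3 t, mul_zero]
  have b4 : (∑ t : Fin (m - 1), d (DoVar.xJc t) * wgt m (.xJc t) (2 * m + 1)) = 0 :=
    Finset.sum_eq_zero fun t _ => by rw [c4 t, mul_zero]
  have b5 : (∑ p : DoPairs m,
      d (DoVar.xP p.1.1 p.1.2 p.2) * wgt m (.xP p.1.1 p.1.2 p.2) (2 * m + 1)) = 0 :=
    Finset.sum_eq_zero fun p _ => by rw [c5 p, mul_zero]
  have b7 : (∑ t, d (DoVar.xK1 t) * wgt m (.xK1 t) (2 * m + 1)) = 0 :=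
    Finset.sum_eq_zero fun t _ => by rw [c7 t, mul_zero]
  have b8 : (∑ t, d (DoVar.xKn t) * wgt m (.xKn t) (2 * m + 1)) = 2 * ∑ t, d (DoVar.xKn t) := by
    rw [Finset.mul_sum]
    exact Finset.sum_congr rfl fun t _ => by rw [c8 t]; ring
  have b9 : (∑ t, d (DoVar.yK1 t) * wgt m (.yK1 t) (2 * m + 1)) = ∑ t, d (DoVar.yK1 t) :=
    Finset.sum_congr rfl fun t _ => by rw [c9 t, mul_one]
  have b10 : (∑ t, d (DoVar.yKn t) * wgt m (.yKn t) (2 * m + 1)) = 3 * ∑ t, d (DoVar.yKn t) := by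
    rw [Finset.mul_sum]
    exact Finset.sum_congr rfl fun t _ => by rw [c10 t]; ring
  rw [c1, c2, c6, b3, b4, b5, b7, b8, b9, b10]
  ring

lemma eval_at_odd (hm : 1 ≤ m) (d : DoVar m →₀ ℕ) (s : Fin (m - 1)) :
    (∑ v : DoVar m, d v * wgt m v (2 * s.val + 3)) = d (.xJc s) := by
  rw [sum_DoVar (fun v => d v * wgt m v (2 * s.val + 3))]
  have c1 : wgt m (.x1 : DoVar m) (2 * s.val + 3) = 0 := Finsupp.single_eq_of_ne (by omega)
  have c2 : wgt m (.xn : DoVar m) (2 * s.val + 3) = 0 :=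
    Finsupp.single_eq_of_ne (by have := s.isLt; omega)
  have c3 : ∀ t : Fin m, wgt m (.xJ t) (2 * s.val + 3) = 0 := fun t =>
    Finsupp.single_eq_of_ne (by omega)
  have c4 : ∀ t : Fin (m - 1), wgt m (.xJc t) (2 * s.val + 3) = if t = s then 1 else 0 := by
    intro t
    rcases eq_or_ne t s with h | h
    · subst h; rw [if_pos rfl]; exact Finsupp.single_eq_same
    · rw [if_neg h]
      exact Finsupp.single_eq_of_ne (fun hc => h (Fin.ext (by omega)))
  have c5 : ∀ p : DoPairs m, wgt m (.xP p.1.1 p.1.2 p.2) (2 * s.val + 3) = 0 := fun p => by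
    show ((Finsupp.single _ 1 + Finsupp.single _ 1 : ℕ →₀ ℕ)) _ = 0
    rw [Finsupp.add_apply, Finsupp.single_eq_of_ne (by omega),
      Finsupp.single_eq_of_ne (by omega)]
    all_goals omega
  have c6 : wgt m (.x1n : DoVar m) (2 * s.val + 3) = 0 := by
    show ((Finsupp.single 1 1 + Finsupp.single (2 * m + 1) 1 : ℕ →₀ ℕ)) _ = 0
    rw [Finsupp.add_apply, Finsupp.single_eq_of_ne (by omega),
      Finsupp.single_eq_of_ne (by have := s.isLt; omega)]
    all_goals omega
  have c7 : ∀ t : Fin m, wgt m (.xK1 t) (2 * s.val + 3) = 0 := fun t => by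
    show ((Finsupp.single _ 1 + Finsupp.single 1 2 : ℕ →₀ ℕ)) _ = 0
    rw [Finsupp.add_apply, Finsupp.single_eq_of_ne (by omega),
      Finsupp.single_eq_of_ne (by omega)]
    all_goals omega
  have c8 : ∀ t : Fin m, wgt m (.xKn t) (2 * s.val + 3) = 0 := fun t => by
    show ((Finsupp.single _ 1 + Finsupp.single _ 2 : ℕ →₀ ℕ)) _ = 0
    rw [Finsupp.add_apply, Finsupp.single_eq_of_ne (by omega),
      Finsupp.single_eq_of_ne (by have := s.isLt; omega)]
    all_goals omega
  have c9 : ∀ t : Fin m, wgt m (.yK1 t) (2 * s.val + 3) = 0 := fun t => by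
    show ((Finsupp.single _ 1 + Finsupp.single 1 3 + Finsupp.single _ 1 : ℕ →₀ ℕ)) _ = 0
    rw [Finsupp.add_apply, Finsupp.add_apply, Finsupp.single_eq_of_ne (by omega),
      Finsupp.single_eq_of_ne (by omega), Finsupp.single_eq_of_ne (by have := s.isLt; omega)]
    all_goals omega
  have c10 : ∀ t : Fin m, wgt m (.yKn t) (2 * s.val + 3) = 0 := fun t => by
    show ((Finsupp.single _ 1 + Finsupp.single 1 1 + Finsupp.single _ 3 : ℕ →₀ ℕ)) _ = 0
    rw [Finsupp.add_apply, Finsupp.add_apply, Finsupp.single_eq_of_ne (by omega),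
      Finsupp.single_eq_of_ne (by omega), Finsupp.single_eq_of_ne (by have := s.isLt; omega)]
    all_goals omega
  have b3 : (∑ t, d (DoVar.xJ t) * wgt m (.xJ t) (2 * s.val + 3)) = 0 :=
    Finset.sum_eq_zero fun t _ => by rw [c3 t, mul_zero]
  have b4 : (∑ t : Fin (m - 1), d (DoVar.xJc t) * wgt m (.xJc t) (2 * s.val + 3))
      = d (DoVar.xJc s) := by
    rw [Finset.sum_congr rfl fun t (_ : t ∈ univ) => by
      rw [c4 t, mul_ite, mul_one, mul_zero]]
    rw [Finset.sum_ite_eq' univ s fun t => d (DoVar.xJc t), if_pos (mem_univ s)]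
  have b5 : (∑ p : DoPairs m,
      d (DoVar.xP p.1.1 p.1.2 p.2) * wgt m (.xP p.1.1 p.1.2 p.2) (2 * s.val + 3)) = 0 :=
    Finset.sum_eq_zero fun p _ => by rw [c5 p, mul_zero]
  have b7 : (∑ t, d (DoVar.xK1 t) * wgt m (.xK1 t) (2 * s.val + 3)) = 0 :=
    Finset.sum_eq_zero fun t _ => by rw [c7 t, mul_zero]
  have b8 : (∑ t, d (DoVar.xKn t) * wgt m (.xKn t) (2 * s.val + 3)) = 0 :=
    Finset.sum_eq_zero fun t _ => by rw [c8 t, mul_zero]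
  have b9 : (∑ t, d (DoVar.yK1 t) * wgt m (.yK1 t) (2 * s.val + 3)) = 0 :=
    Finset.sum_eq_zero fun t _ => by rw [c9 t, mul_zero]
  have b10 : (∑ t, d (DoVar.yKn t) * wgt m (.yKn t) (2 * s.val + 3)) = 0 :=
    Finset.sum_eq_zero fun t _ => by rw [c10 t, mul_zero]
  rw [c1, c2, c6, b3, b4, b5, b7, b8, b9, b10]
  ring

end DoAux2

namespace DoAux2

open Finset MvPolynomial

variable {m : ℕ}

lemma single_even_apply (t s : Fin m) (c : ℕ) :
    (Finsupp.single (2 * (t : ℕ) + 2) c) (2 * (s : ℕ) + 2) = if t = s then c else 0 := by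
  rcases eq_or_ne t s with h | h
  · subst h; rw [if_pos rfl]; exact Finsupp.single_eq_same
  · rw [if_neg h]; exact Finsupp.single_eq_of_ne (fun hc => h (Fin.ext (by omega)))

lemma eval_at_even (d : DoVar m →₀ ℕ) (s : Fin m) :
    (∑ v : DoVar m, d v * wgt m v (2 * s.val + 2)) =
      2 * d (.xJ s) + (∑ i, if h : i < s then d (.xP i s h) else 0) +
        (∑ k, if h : s < k then d (.xP s k h) else 0) +
        d (.xK1 s) + d (.xKn s) + d (.yK1 s) + d (.yKn s) := by
  rw [sum_DoVar (fun v => d v * wgt m v (2 * s.val + 2))]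
  have c1 : wgt m (.x1 : DoVar m) (2 * s.val + 2) = 0 := Finsupp.single_eq_of_ne (by omega)
  have c2 : wgt m (.xn : DoVar m) (2 * s.val + 2) = 0 := Finsupp.single_eq_of_ne (by omega)
  have c3 : ∀ t : Fin m, wgt m (.xJ t) (2 * s.val + 2) = if t = s then 2 else 0 := fun t =>
    single_even_apply t s 2
  have c4 : ∀ t : Fin (m - 1), wgt m (.xJc t) (2 * s.val + 2) = 0 := fun t =>
    Finsupp.single_eq_of_ne (by omega)
  have c5 : ∀ p : DoPairs m, wgt m (.xP p.1.1 p.1.2 p.2) (2 * s.val + 2) =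
      (if p.1.1 = s then 1 else 0) + (if p.1.2 = s then 1 else 0) := fun p => by
    show ((Finsupp.single _ 1 + Finsupp.single _ 1 : ℕ →₀ ℕ)) _ = _
    rw [Finsupp.add_apply, single_even_apply p.1.1 s 1, single_even_apply p.1.2 s 1]
  have c6 : wgt m (.x1n : DoVar m) (2 * s.val + 2) = 0 := by
    show ((Finsupp.single 1 1 + Finsupp.single (2 * m + 1) 1 : ℕ →₀ ℕ)) _ = 0
    rw [Finsupp.add_apply, Finsupp.single_eq_of_ne (by omega),
      Finsupp.single_eq_of_ne (by omega)]
    all_goals omega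
  have c7 : ∀ t : Fin m, wgt m (.xK1 t) (2 * s.val + 2) = if t = s then 1 else 0 := fun t => by
    show ((Finsupp.single _ 1 + Finsupp.single 1 2 : ℕ →₀ ℕ)) _ = _
    rw [Finsupp.add_apply, single_even_apply t s 1, Finsupp.single_eq_of_ne (by omega)]
    all_goals omega
  have c8 : ∀ t : Fin m, wgt m (.xKn t) (2 * s.val + 2) = if t = s then 1 else 0 := fun t => by
    show ((Finsupp.single _ 1 + Finsupp.single _ 2 : ℕ →₀ ℕ)) _ = _
    rw [Finsupp.add_apply, single_even_apply t s 1, Finsupp.single_eq_of_ne (by omega)]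
    all_goals omega
  have c9 : ∀ t : Fin m, wgt m (.yK1 t) (2 * s.val + 2) = if t = s then 1 else 0 := fun t => by
    show ((Finsupp.single _ 1 + Finsupp.single 1 3 + Finsupp.single _ 1 : ℕ →₀ ℕ)) _ = _
    rw [Finsupp.add_apply, Finsupp.add_apply, single_even_apply t s 1,
      Finsupp.single_eq_of_ne (by omega), Finsupp.single_eq_of_ne (by omega)]
    all_goals omega
  have c10 : ∀ t : Fin m, wgt m (.yKn t) (2 * s.val + 2) = if t = s then 1 else 0 := fun t => by
    show ((Finsupp.single _ 1 + Finsupp.single 1 1 + Finsupp.single _ 3 : ℕ →₀ ℕ)) _ = _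
    rw [Finsupp.add_apply, Finsupp.add_apply, single_even_apply t s 1,
      Finsupp.single_eq_of_ne (by omega), Finsupp.single_eq_of_ne (by omega)]
    all_goals omega
  have b3 : (∑ t, d (DoVar.xJ t) * wgt m (.xJ t) (2 * s.val + 2)) = 2 * d (DoVar.xJ s) := by
    rw [Finset.sum_congr rfl fun t (_ : t ∈ univ) => by
      rw [c3 t, mul_ite, mul_zero]]
    rw [Finset.sum_ite_eq' univ s fun t => d (DoVar.xJ t) * 2, if_pos (mem_univ s)]
    ring
  have b4 : (∑ t : Fin (m - 1), d (DoVar.xJc t) * wgt m (.xJc t) (2 * s.val + 2)) = 0 :=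
    Finset.sum_eq_zero fun t _ => by rw [c4 t, mul_zero]
  have b7 : (∑ t, d (DoVar.xK1 t) * wgt m (.xK1 t) (2 * s.val + 2)) = d (DoVar.xK1 s) := by
    rw [Finset.sum_congr rfl fun t (_ : t ∈ univ) => by
      rw [c7 t, mul_ite, mul_one, mul_zero]]
    rw [Finset.sum_ite_eq' univ s fun t => d (DoVar.xK1 t), if_pos (mem_univ s)]
  have b8 : (∑ t, d (DoVar.xKn t) * wgt m (.xKn t) (2 * s.val + 2)) = d (DoVar.xKn s) := by
    rw [Finset.sum_congr rfl fun t (_ : t ∈ univ) => by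
      rw [c8 t, mul_ite, mul_one, mul_zero]]
    rw [Finset.sum_ite_eq' univ s fun t => d (DoVar.xKn t), if_pos (mem_univ s)]
  have b9 : (∑ t, d (DoVar.yK1 t) * wgt m (.yK1 t) (2 * s.val + 2)) = d (DoVar.yK1 s) := by
    rw [Finset.sum_congr rfl fun t (_ : t ∈ univ) => by
      rw [c9 t, mul_ite, mul_one, mul_zero]]
    rw [Finset.sum_ite_eq' univ s fun t => d (DoVar.yK1 t), if_pos (mem_univ s)]
  have b10 : (∑ t, d (DoVar.yKn t) * wgt m (.yKn t) (2 * s.val + 2)) = d (DoVar.yKn s) := by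
    rw [Finset.sum_congr rfl fun t (_ : t ∈ univ) => by
      rw [c10 t, mul_ite, mul_one, mul_zero]]
    rw [Finset.sum_ite_eq' univ s fun t => d (DoVar.yKn t), if_pos (mem_univ s)]
  have b5 : (∑ p : DoPairs m,
      d (DoVar.xP p.1.1 p.1.2 p.2) * wgt m (.xP p.1.1 p.1.2 p.2) (2 * s.val + 2)) =
      (∑ k, if h : s < k then d (.xP s k h) else 0) +
        (∑ i, if h : i < s then d (.xP i s h) else 0) := by
    have step1 : (∑ p : DoPairs m,
        d (DoVar.xP p.1.1 p.1.2 p.2) * wgt m (.xP p.1.1 p.1.2 p.2) (2 * s.val + 2)) =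
        (∑ p : DoPairs m, (if h : p.1.1 < p.1.2 then d (.xP p.1.1 p.1.2 h) else 0) *
            (if p.1.1 = s then 1 else 0)) +
          ∑ p : DoPairs m, (if h : p.1.1 < p.1.2 then d (.xP p.1.1 p.1.2 h) else 0) *
            (if p.1.2 = s then 1 else 0) := by
      rw [← Finset.sum_add_distrib]
      refine Finset.sum_congr rfl fun p _ => ?_
      rw [c5 p, mul_add, dif_pos p.2]
    rw [step1]
    have step2 : (∑ p : DoPairs m, (if h : p.1.1 < p.1.2 then d (.xP p.1.1 p.1.2 h) else 0) *
        (if p.1.1 = s then 1 else 0)) = ∑ k, if h : s < k then d (.xP s k h) else 0 := by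
      rw [sum_DoPairs (fun i k => (if h : i < k then d (.xP i k h) else 0) *
        (if i = s then 1 else 0)) (fun i k hik => by simp only [dif_neg hik, zero_mul])]
      have inner : ∀ i : Fin m, (∑ k, (if h : i < k then d (.xP i k h) else 0) *
          (if i = s then 1 else 0)) =
          if i = s then (∑ k, if h : i < k then d (.xP i k h) else 0) else 0 := by
        intro i
        rcases eq_or_ne i s with h | h
        · simp only [if_pos h, mul_one]
        · simp only [if_neg h, mul_zero, Finset.sum_const_zero]
      rw [Finset.sum_congr rfl fun i _ => inner i,
        Finset.sum_ite_eq' univ s fun i => ∑ k, if h : i < k then d (.xP i k h) else 0,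
        if_pos (mem_univ s)]
    have step3 : (∑ p : DoPairs m, (if h : p.1.1 < p.1.2 then d (.xP p.1.1 p.1.2 h) else 0) *
        (if p.1.2 = s then 1 else 0)) = ∑ i, if h : i < s then d (.xP i s h) else 0 := by
      rw [sum_DoPairs (fun i k => (if h : i < k then d (.xP i k h) else 0) *
        (if k = s then 1 else 0)) (fun i k hik => by simp only [dif_neg hik, zero_mul])]
      have inner : ∀ i : Fin m, (∑ k, (if h : i < k then d (.xP i k h) else 0) *
          (if k = s then 1 else 0)) = if h : i < s then d (.xP i s h) else 0 := by
        intro i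
        have e1 : ∀ k : Fin m, (if h : i < k then d (.xP i k h) else 0) *
            (if k = s then 1 else 0) =
            if k = s then (if h : i < s then d (.xP i s h) else 0) else 0 := by
          intro k
          rcases eq_or_ne k s with h | h
          · subst h; rw [if_pos rfl, if_pos rfl, mul_one]
          · rw [if_neg h, if_neg h, mul_zero]
        rw [Finset.sum_congr rfl fun k _ => e1 k,
          Finset.sum_ite_eq' univ s fun _ => if h : i < s then d (.xP i s h) else 0,
          if_pos (mem_univ s)]
      exact Finset.sum_congr rfl fun i _ => inner i
    rw [step2, step3]
  rw [c1, c2, c6, b3, b4, b5, b7, b8, b9, b10]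
  ring

end DoAux2

namespace DoAux2

open Finset MvPolynomial

variable {K : Type*} [Field K] {m : ℕ}

lemma X_as_monomial (v : DoVar m) :
    (X v : MvPolynomial (DoVar m) K) = monomial (Finsupp.single v 1) 1 := by
  rw [← X_pow_eq_monomial, pow_one]

lemma X_dvd_mono (v : DoVar m) (d : DoVar m →₀ ℕ) (h : 0 < d v) :
    (X v : MvPolynomial (DoVar m) K) ∣ monomial d 1 := by
  rw [X_as_monomial, monomial_dvd_monomial]
  exact ⟨Or.inr (Finsupp.single_le_iff.2 h), dvd_refl 1⟩

lemma XX_dvd_mono (v w : DoVar m) (hvw : v ≠ w) (d : DoVar m →₀ ℕ)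
    (hv : 0 < d v) (hw : 0 < d w) :
    (X v * X w : MvPolynomial (DoVar m) K) ∣ monomial d 1 := by
  classical
  have h1 : (X v * X w : MvPolynomial (DoVar m) K) =
      monomial (Finsupp.single v 1 + Finsupp.single w 1) 1 := by
    rw [X_as_monomial, X_as_monomial, monomial_mul, mul_one]
  rw [h1, monomial_dvd_monomial]
  refine ⟨Or.inr ?_, dvd_refl 1⟩
  rw [Finsupp.le_def]
  intro x
  rw [Finsupp.add_apply]
  rcases eq_or_ne v x with h | h
  · subst h
    rw [Finsupp.single_eq_same, Finsupp.single_eq_of_ne' (Ne.symm hvw)]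
    omega
  · rw [Finsupp.single_eq_of_ne' h]
    rcases eq_or_ne w x with h2 | h2
    · subst h2; rw [Finsupp.single_eq_same]; omega
    · rw [Finsupp.single_eq_of_ne' h2]; omega

lemma extract (d : DoVar m →₀ ℕ)
    (hd : ∀ g ∈ inGDo K m, ¬ g ∣ (monomial d 1 : MvPolynomial (DoVar m) K)) :
    DoAux.SC (d .x1) (d .xn) (fun t => d (.xJ t)) (fun t => d (.xK1 t)) (fun t => d (.xKn t))
        (fun s t => if h : s < t then d (.xP s t h) else 0) ∧
      (∀ t, d (.yK1 t) = 0) ∧ (∀ t, d (.yKn t) = 0) := by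
  have hnb : ∀ (v w : DoVar m), v ≠ w →
      ((X v * X w : MvPolynomial (DoVar m) K) ∈ inGDo K m) → 0 < d v → d w = 0 := by
    intro v w hne hmem hv
    by_contra hn
    exact hd _ hmem (XX_dvd_mono v w hne d hv (Nat.pos_of_ne_zero hn))
  have hnb' : ∀ (v w : DoVar m), v ≠ w →
      ((X v * X w : MvPolynomial (DoVar m) K) ∈ inGDo K m) → 0 < d w → d v = 0 := by
    intro v w hne hmem hw
    by_contra hn
    exact hd _ hmem (XX_dvd_mono v w hne d (Nat.pos_of_ne_zero hn) hw)
  have hy1 : ∀ t, d (.yK1 t) = 0 := by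
    intro t
    by_contra hn
    exact hd (X (DoVar.yK1 t))
      (Or.inr (Or.inr (Or.inr (Or.inl ⟨t, Or.inr (Or.inr (Or.inr (Or.inr (Or.inl rfl))))⟩))))
      (X_dvd_mono _ d (Nat.pos_of_ne_zero hn))
  have hy2 : ∀ t, d (.yKn t) = 0 := by
    intro t
    by_contra hn
    exact hd (X (DoVar.yKn t))
      (Or.inr (Or.inr (Or.inr (Or.inl ⟨t,
        Or.inr (Or.inr (Or.inr (Or.inr (Or.inr (Or.inl rfl)))))⟩))))
      (X_dvd_mono _ d (Nat.pos_of_ne_zero hn))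
  refine ⟨?_, hy1, hy2⟩
  have getP : ∀ (s t : Fin m), 0 < (if h : s < t then d (.xP s t h) else 0) →
      ∃ h : s < t, 0 < d (.xP s t h) := by
    intro s t hp
    by_cases h : s < t
    · exact ⟨h, by rwa [dif_pos h] at hp⟩
    · rw [dif_neg h] at hp; omega
  constructor
  · -- psupp
    intro s t h; exact dif_neg h
  · -- ab
    intro ha
    exact hnb .x1 .xn (fun hc => by cases hc)
      (Or.inr (Or.inr (Or.inr (Or.inr rfl)))) ha
  · -- ja
    intro t ht
    exact hnb (.xJ t) .x1 (fun hc => by cases hc)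
      (Or.inr (Or.inr (Or.inr (Or.inl ⟨t, Or.inl rfl⟩)))) ht
  · -- jb
    intro t ht
    exact hnb (.xJ t) .xn (fun hc => by cases hc)
      (Or.inr (Or.inr (Or.inr (Or.inl ⟨t, Or.inr (Or.inl rfl)⟩)))) ht
  · -- kl
    intro s t hs
    rcases lt_trichotomy s t with h | h | h
    · exact hnb (.xK1 s) (.xKn t) (fun hc => by cases hc)
        (Or.inr (Or.inr (Or.inl ⟨s, t, h, Or.inr (Or.inr (Or.inr (Or.inr (Or.inr
          (Or.inr (Or.inr (Or.inr rfl)))))))⟩))) hs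
    · subst h
      exact hnb (.xK1 s) (.xKn s) (fun hc => by cases hc)
        (Or.inr (Or.inr (Or.inr (Or.inl ⟨s, Or.inr (Or.inr (Or.inl rfl))⟩)))) hs
    · exact hnb (.xK1 s) (.xKn t) (fun hc => by cases hc)
        (Or.inr (Or.inr (Or.inl ⟨t, s, h, Or.inr (Or.inr (Or.inr (Or.inr (Or.inr
          (Or.inr (Or.inr (Or.inl rfl)))))))⟩))) hs
  · -- la
    intro t ht
    exact hnb (.xKn t) .x1 (fun hc => by cases hc)
      (Or.inr (Or.inr (Or.inr (Or.inl ⟨t, Or.inr (Or.inr (Or.inr (Or.inl rfl)))⟩)))) ht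
  · -- kb
    intro t ht
    exact hnb (.xK1 t) .xn (fun hc => by cases hc)
      (Or.inr (Or.inr (Or.inr (Or.inl ⟨t,
        Or.inr (Or.inr (Or.inr (Or.inr (Or.inr (Or.inr rfl)))))⟩)))) ht
  · -- jj
    intro s t hst hs
    exact hnb (.xJ s) (.xJ t) (fun hc => by injection hc with h; exact absurd h (ne_of_lt hst))
      (Or.inr (Or.inr (Or.inl ⟨s, t, hst, Or.inl rfl⟩))) hs
  · -- pa
    intro s t hp
    obtain ⟨hst, hp⟩ := getP s t hp
    exact hnb (.xP s t hst) .x1 (fun hc => by cases hc)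
      (Or.inr (Or.inr (Or.inl ⟨s, t, hst, Or.inr (Or.inl rfl)⟩))) hp
  · -- pb
    intro s t hp
    obtain ⟨hst, hp⟩ := getP s t hp
    exact hnb (.xP s t hst) .xn (fun hc => by cases hc)
      (Or.inr (Or.inr (Or.inl ⟨s, t, hst, Or.inr (Or.inr (Or.inl rfl))⟩))) hp
  · -- pk
    intro i k hp t ht
    obtain ⟨hik, hp⟩ := getP i k hp
    rcases lt_trichotomy t i with h | h | h
    · exact hnb (.xP i k hik) (.xK1 t) (fun hc => by cases hc)
        (Or.inr (Or.inl ⟨t, i, k, h, hik, Or.inl rfl⟩)) hp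
    · subst h
      exact hnb (.xP t k hik) (.xK1 t) (fun hc => by cases hc)
        (Or.inr (Or.inr (Or.inl ⟨t, k, hik, Or.inr (Or.inr (Or.inr (Or.inl rfl)))⟩))) hp
    · exact hnb (.xP i k hik) (.xK1 t) (fun hc => by cases hc)
        (Or.inr (Or.inl ⟨i, t, k, h, ht, Or.inr (Or.inl rfl)⟩)) hp
  · -- pl
    intro i k hp t ht
    obtain ⟨hik, hp⟩ := getP i k hp
    rcases lt_trichotomy t i with h | h | h
    · exact hnb (.xP i k hik) (.xKn t) (fun hc => by cases hc)
        (Or.inr (Or.inl ⟨t, i, k, h, hik, Or.inr (Or.inr (Or.inl rfl))⟩)) hp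
    · subst h
      exact hnb (.xP t k hik) (.xKn t) (fun hc => by cases hc)
        (Or.inr (Or.inr (Or.inl ⟨t, k, hik,
          Or.inr (Or.inr (Or.inr (Or.inr (Or.inl rfl))))⟩))) hp
    · exact hnb (.xP i k hik) (.xKn t) (fun hc => by cases hc)
        (Or.inr (Or.inl ⟨i, t, k, h, ht, Or.inr (Or.inr (Or.inr (Or.inl rfl)))⟩)) hp
  · -- pjmid
    intro i j k hij hjk hp
    obtain ⟨hik, hp⟩ := getP i k hp
    exact hnb' (.xJ j) (.xP i k hik) (fun hc => by cases hc)
      (Or.inr (Or.inl ⟨i, j, k, hij, hjk, Or.inr (Or.inr (Or.inr (Or.inr (Or.inl rfl))))⟩))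
      hp
  · -- pjhigh
    intro i j k hij hjk hp
    obtain ⟨hij', hp⟩ := getP i j hp
    exact hnb' (.xJ k) (.xP i j hij') (fun hc => by cases hc)
      (Or.inr (Or.inl ⟨i, j, k, hij', hjk,
        Or.inr (Or.inr (Or.inr (Or.inr (Or.inr (Or.inr rfl)))))⟩)) hp
  · -- pmin
    intro i j k hij hjk hp
    have hik : i < k := hij.trans hjk
    obtain ⟨hij', hp⟩ := getP i j hp
    rw [dif_pos hik]
    by_contra hn
    exact absurd (hnb (.xP i j hij') (.xP i k hik)
      (fun hc => by injection hc with h1 h2; exact absurd h2 (ne_of_lt hjk))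
      (Or.inr (Or.inl ⟨i, j, k, hij', hjk,
        Or.inr (Or.inr (Or.inr (Or.inr (Or.inr (Or.inl rfl)))))⟩)) hp) hn
  · -- pcross
    intro i j k l hij hjk hkl hp
    have hik : i < k := hij.trans hjk
    have hjl : j < l := hjk.trans hkl
    obtain ⟨hik', hp⟩ := getP i k hp
    rw [dif_pos hjl]
    by_contra hn
    exact absurd (hnb (.xP i k hik') (.xP j l hjl)
      (fun hc => by injection hc with h1 h2; exact absurd h1 (ne_of_lt hij))
      (Or.inl ⟨i, j, k, l, hij, hjk, hkl, Or.inl rfl⟩) hp) hn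
  · -- pnest
    intro i j k l hij hjk hkl hp
    have hil : i < l := (hij.trans hjk).trans hkl
    obtain ⟨hil', hp⟩ := getP i l hp
    rw [dif_pos hjk]
    by_contra hn
    exact absurd (hnb (.xP i l hil') (.xP j k hjk)
      (fun hc => by injection hc with h1 h2; exact absurd h1 (ne_of_lt hij))
      (Or.inl ⟨i, j, k, l, hij, hjk, hkl, Or.inr rfl⟩) hp) hn
  · -- kj
    intro i j hij hi
    exact hnb' (.xJ j) (.xK1 i) (fun hc => by cases hc)
      (Or.inr (Or.inr (Or.inl ⟨i, j, hij,
        Or.inr (Or.inr (Or.inr (Or.inr (Or.inr (Or.inl rfl)))))⟩))) hi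
  · -- lj
    intro i j hij hi
    exact hnb' (.xJ j) (.xKn i) (fun hc => by cases hc)
      (Or.inr (Or.inr (Or.inl ⟨i, j, hij,
        Or.inr (Or.inr (Or.inr (Or.inr (Or.inr (Or.inr (Or.inl rfl))))))⟩))) hi

end DoAux2

/-- if `M` and `M′` are monomials of `R` such that no monomial of
`in(𝒢_{D_{2m+1}})` divides `M` and no monomial of `in(𝒢_{D_{2m+1}})` divides `M′`, then
`π(M) = π(M′)` implies `M = M′`. -/
theorem piDo_inj_on_standard_monomials (K : Type*) [Field K] (m : ℕ) (hm : 2 ≤ m)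
    (M M' : MvPolynomial (DoVar m) K)
    (hM : ∃ d : DoVar m →₀ ℕ, M = monomial d (1 : K))
    (hM' : ∃ d : DoVar m →₀ ℕ, M' = monomial d (1 : K))
    (hMdvd : ∀ g ∈ inGDo K m, ¬ g ∣ M)
    (hM'dvd : ∀ g ∈ inGDo K m, ¬ g ∣ M')
    (heq : piDo K m M = piDo K m M') :
    M = M' := by
  classical
  obtain ⟨d, rfl⟩ := hM
  obtain ⟨d', rfl⟩ := hM'
  have hm1 : 1 ≤ m := by omega
  obtain ⟨hS, hy1, hy2⟩ := DoAux2.extract d hMdvd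
  obtain ⟨hS', hy1', hy2'⟩ := DoAux2.extract d' hM'dvd
  rw [DoAux2.piDo_monomial, DoAux2.piDo_monomial] at heq
  have hE : (d.sum fun v e => e • DoAux2.wgt m v) = d'.sum fun v e => e • DoAux2.wgt m v := by
    rcases (monomial_eq_monomial_iff _ _ (1 : K) 1).1 heq with ⟨h1, _⟩ | ⟨h1, _⟩
    · exact h1
    · exact absurd h1 one_ne_zero
  have hEq : ∀ u, (∑ v : DoVar m, d v * DoAux2.wgt m v u) =
      ∑ v : DoVar m, d' v * DoAux2.wgt m v u := by
    intro u
    rw [← DoAux2.expsum_apply, ← DoAux2.expsum_apply, hE]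
  have SY1 : (∑ t : Fin m, d (DoVar.yK1 t)) = 0 := Finset.sum_eq_zero fun t _ => hy1 t
  have SY2 : (∑ t : Fin m, d (DoVar.yKn t)) = 0 := Finset.sum_eq_zero fun t _ => hy2 t
  have SY1' : (∑ t : Fin m, d' (DoVar.yK1 t)) = 0 := Finset.sum_eq_zero fun t _ => hy1' t
  have SY2' : (∑ t : Fin m, d' (DoVar.yKn t)) = 0 := Finset.sum_eq_zero fun t _ => hy2' t
  have E1 : 4 * d DoVar.x1 + d DoVar.x1n + 2 * (∑ t : Fin m, d (DoVar.xK1 t)) =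
      4 * d' DoVar.x1 + d' DoVar.x1n + 2 * ∑ t : Fin m, d' (DoVar.xK1 t) := by
    have h := hEq 1
    rw [DoAux2.eval_at_one hm1 d, DoAux2.eval_at_one hm1 d'] at h
    omega
  have E2 : 4 * d DoVar.xn + d DoVar.x1n + 2 * (∑ t : Fin m, d (DoVar.xKn t)) =
      4 * d' DoVar.xn + d' DoVar.x1n + 2 * ∑ t : Fin m, d' (DoVar.xKn t) := by
    have h := hEq (2 * m + 1)
    rw [DoAux2.eval_at_n hm1 d, DoAux2.eval_at_n hm1 d'] at h
    omega
  have E3 : ∀ t, DoAux.Wf (fun t => d (DoVar.xJ t)) (fun t => d (DoVar.xK1 t))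
      (fun t => d (DoVar.xKn t))
      (fun s t => if h : s < t then d (DoVar.xP s t h) else 0) t =
      DoAux.Wf (fun t => d' (DoVar.xJ t)) (fun t => d' (DoVar.xK1 t))
      (fun t => d' (DoVar.xKn t))
      (fun s t => if h : s < t then d' (DoVar.xP s t h) else 0) t := by
    intro t
    have h := hEq (2 * t.val + 2)
    rw [DoAux2.eval_at_even d t, DoAux2.eval_at_even d' t] at h
    have g1 := hy1 t
    have g2 := hy2 t
    have g1' := hy1' t
    have g2' := hy2' t
    unfold DoAux.Wf
    simp only
    omega
  have E4 : ∀ s : Fin (m - 1), d (DoVar.xJc s) = d' (DoVar.xJc s) := by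
    intro s
    have h := hEq (2 * s.val + 3)
    rw [DoAux2.eval_at_odd hm1 d s, DoAux2.eval_at_odd hm1 d' s] at h
    exact h
  obtain ⟨ca, cb, ce, cJ, cK, cL, cP⟩ := DoAux.master hS hS' E1 E2 E3
  have hdd : d = d' := by
    ext v
    cases v with
    | x1 => exact ca
    | xn => exact cb
    | x1n => exact ce
    | xJ t => exact congrFun cJ t
    | xJc t => exact E4 t
    | xP s t hst =>
      have h := congrFun (congrFun cP s) t
      rw [dif_pos hst, dif_pos hst] at h
      exact h
    | xK1 t => exact congrFun cK t
    | xKn t => exact congrFun cL t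
    | yK1 t => rw [hy1 t, hy1' t]
    | yKn t => rw [hy2 t, hy2' t]
  rw [hdd]
end

section
/- The binomials y_{i,1} − x_{1,n}x_{i,1} and y_{i,n} − x_{1,n}x_{i,n} (for i ∈ J) and x_1 x_n − x_{1,n}⁴ are indispensable binomials of I_{D_{2m+1}}: for every set B of binomials (differences of two monomials of R) whose generated ideal equals I_{D_{2m+1}}, B contains each of these binomials or its negative. -/
open MvPolynomial

section SwMachinery
variable {σ : Type*}

/-- Weighted sum functional on exponent vectors. -/
def Sw (c : σ → ℕ) (d : σ →₀ ℕ) : ℕ := d.sum fun v n => n * c v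

theorem Sw_single (c : σ → ℕ) (v : σ) (n : ℕ) : Sw c (Finsupp.single v n) = n * c v :=
  Finsupp.sum_single_index (by simp)

theorem Sw_add (c : σ → ℕ) (d e : σ →₀ ℕ) : Sw c (d + e) = Sw c d + Sw c e :=
  Finsupp.sum_add_index' (by simp) (by intro a b₁ b₂; rw [add_mul])

theorem Sw_zero (c : σ → ℕ) : Sw c 0 = 0 := Finsupp.sum_zero_index

theorem Sw_le (c : σ → ℕ) (d : σ →₀ ℕ) (v : σ) : d v * c v ≤ Sw c d := by
  by_cases h : d v = 0
  · simp [h]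
  · rw [Sw, Finsupp.sum]
    exact Finset.single_le_sum (f := fun w => d w * c w) (fun i _ => Nat.zero_le _)
      (Finsupp.mem_support_iff.mpr h)

theorem Sw_eq_sum (c : σ → ℕ) (d : σ →₀ ℕ) (T : Finset σ)
    (hc : ∀ w ∉ T, d w * c w = 0) : Sw c d = ∑ w ∈ T, d w * c w := by
  classical
  have h1 : Sw c d = ∑ w ∈ d.support ∪ T, d w * c w := by
    refine Finset.sum_subset Finset.subset_union_left ?_
    intro x _ hx
    simp [Finsupp.notMem_support_iff.mp hx]
  have h2 : ∑ w ∈ T, d w * c w = ∑ w ∈ d.support ∪ T, d w * c w := by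
    refine Finset.sum_subset Finset.subset_union_right ?_
    intro x _ hx
    exact hc x hx
  rw [h1, ← h2]

end SwMachinery

noncomputable def Aexp (m : ℕ) : DoVar m → (ℕ →₀ ℕ)
  | .x1 => Finsupp.single 1 4
  | .xn => Finsupp.single (2*m+1) 4
  | .xJ t => Finsupp.single (2*t.val+2) 2
  | .xJc t => Finsupp.single (2*t.val+3) 1
  | .xP s t _ => Finsupp.single (2*s.val+2) 1 + Finsupp.single (2*t.val+2) 1
  | .x1n => Finsupp.single 1 1 + Finsupp.single (2*m+1) 1
  | .xK1 t => Finsupp.single (2*t.val+2) 1 + Finsupp.single 1 2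
  | .xKn t => Finsupp.single (2*t.val+2) 1 + Finsupp.single (2*m+1) 2
  | .yK1 t => Finsupp.single (2*t.val+2) 1 + Finsupp.single 1 3 + Finsupp.single (2*m+1) 1
  | .yKn t => Finsupp.single (2*t.val+2) 1 + Finsupp.single 1 1 + Finsupp.single (2*m+1) 3

theorem doImage_eq (K : Type*) [Field K] (m : ℕ) (v : DoVar m) :
    doImage K m v = monomial (Aexp m v) (1 : K) := by
  cases v <;> simp [doImage, Aexp, X, monomial_pow, monomial_mul, Finsupp.smul_single]

theorem piDo_monomial (K : Type*) [Field K] (m : ℕ) (d : DoVar m →₀ ℕ) :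
    piDo K m (monomial d (1 : K)) = monomial (d.sum fun v n => n • Aexp m v) (1 : K) := by
  induction d using Finsupp.induction with
  | zero => simp [piDo]
  | single_add v n f hvf hn ih =>
    rw [Finsupp.sum_add_index' (by simp) (by intro a b c; rw [add_smul]),
      Finsupp.sum_single_index (by simp)]
    have h1 : (monomial (Finsupp.single v n + f)) (1:K) =
        monomial (Finsupp.single v n) (1:K) * monomial f (1:K) := by
      rw [monomial_mul, one_mul]
    rw [h1, map_mul, ih]
    have h2 : piDo K m (monomial (Finsupp.single v n) (1:K)) = monomial (n • Aexp m v) (1:K) := by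
      rw [piDo, aeval_monomial, Finsupp.prod_single_index (by simp), doImage_eq,
        monomial_pow, one_pow]
      simp
    rw [h2, monomial_mul, one_mul]

def c1fun (m : ℕ) : DoVar m → ℕ
  | .x1 => 4 | .x1n => 1 | .xK1 _ => 2 | .yK1 _ => 3 | .yKn _ => 1 | _ => 0

def cnfun (m : ℕ) : DoVar m → ℕ
  | .xn => 4 | .x1n => 1 | .xKn _ => 2 | .yK1 _ => 1 | .yKn _ => 3 | _ => 0

def cJfun {m : ℕ} (i : Fin m) : DoVar m → ℕ
  | .xJ t => if t.val = i.val then 2 else 0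
  | .xP s t _ => (if s.val = i.val then 1 else 0) + (if t.val = i.val then 1 else 0)
  | .xK1 t => if t.val = i.val then 1 else 0
  | .xKn t => if t.val = i.val then 1 else 0
  | .yK1 t => if t.val = i.val then 1 else 0
  | .yKn t => if t.val = i.val then 1 else 0
  | _ => 0

def cJcfun {m : ℕ} (j : Fin (m-1)) : DoVar m → ℕ
  | .xJc t => if t.val = j.val then 1 else 0
  | _ => 0

theorem Aexp_one {m : ℕ} (hm : 1 ≤ m) (v : DoVar m) : Aexp m v 1 = c1fun m v := by
  cases v <;>
    simp only [Aexp, c1fun, Finsupp.add_apply, Finsupp.single_apply] <;>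
    split_ifs <;> omega

theorem Aexp_n {m : ℕ} (hm : 1 ≤ m) (v : DoVar m) : Aexp m v (2*m+1) = cnfun m v := by
  cases v <;>
    simp only [Aexp, cnfun, Finsupp.add_apply, Finsupp.single_apply] <;>
    split_ifs <;> omega

theorem Aexp_J {m : ℕ} (i : Fin m) (v : DoVar m) : Aexp m v (2*i.val+2) = cJfun i v := by
  cases v <;>
    simp only [Aexp, cJfun, Finsupp.add_apply, Finsupp.single_apply] <;>
    split_ifs <;> omega

theorem Aexp_Jc {m : ℕ} (j : Fin (m-1)) (v : DoVar m) : Aexp m v (2*j.val+3) = cJcfun j v := by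
  cases v <;>
    simp only [Aexp, cJcfun, Finsupp.add_apply, Finsupp.single_apply] <;>
    split_ifs <;> omega

noncomputable instance instDecEqDoVar {m : ℕ} : DecidableEq (DoVar m) := Classical.decEq _

theorem Sw_coords {K : Type*} [Field K] {m : ℕ} {d e : DoVar m →₀ ℕ}
    (h : piDo K m (monomial d (1:K)) = piDo K m (monomial e 1)) (k : ℕ) :
    Sw (fun v => Aexp m v k) d = Sw (fun v => Aexp m v k) e := by
  rw [piDo_monomial, piDo_monomial, monomial_eq_monomial_iff] at h
  rcases h with ⟨h, -⟩ | ⟨h, -⟩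
  · have hk := DFunLike.congr_fun h k
    rw [Finsupp.sum_apply, Finsupp.sum_apply] at hk
    simpa [Sw, Finsupp.smul_apply] using hk
  · exact absurd h one_ne_zero

theorem coords_of_pi {K : Type*} [Field K] {m : ℕ} (hm : 1 ≤ m) {d e : DoVar m →₀ ℕ}
    (h : piDo K m (monomial d (1:K)) = piDo K m (monomial e 1)) :
    Sw (c1fun m) d = Sw (c1fun m) e ∧ Sw (cnfun m) d = Sw (cnfun m) e ∧
    (∀ i : Fin m, Sw (cJfun i) d = Sw (cJfun i) e) ∧
    (∀ j : Fin (m-1), Sw (cJcfun j) d = Sw (cJcfun j) e) := by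
  refine ⟨?_, ?_, fun i => ?_, fun j => ?_⟩
  · have := Sw_coords h 1
    rwa [funext (Aexp_one hm)] at this
  · have := Sw_coords h (2*m+1)
    rwa [funext (Aexp_n hm)] at this
  · have := Sw_coords h (2*i.val+2)
    rwa [funext (Aexp_J i)] at this
  · have := Sw_coords h (2*j.val+3)
    rwa [funext (Aexp_Jc j)] at this
theorem fiber_zero {m : ℕ} (d : DoVar m →₀ ℕ)
    (h1 : Sw (c1fun m) d = 0) (hn : Sw (cnfun m) d = 0)
    (hJ : ∀ t : Fin m, Sw (cJfun t) d = 0)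
    (hJc : ∀ j : Fin (m-1), Sw (cJcfun j) d = 0) : d = 0 := by
  ext w
  rw [Finsupp.coe_zero, Pi.zero_apply]
  cases w with
  | x1 => have := Sw_le (c1fun m) d .x1; simp only [c1fun] at this; omega
  | xn => have := Sw_le (cnfun m) d .xn; simp only [cnfun] at this; omega
  | xJ t =>
      have h := Sw_le (cJfun t) d (.xJ t); rw [hJ t] at h
      simp only [cJfun] at h; split_ifs at h <;> omega
  | xJc t =>
      have h := Sw_le (cJcfun t) d (.xJc t); rw [hJc t] at h
      simp only [cJcfun] at h; split_ifs at h <;> omega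
  | xP s t hst =>
      have h := Sw_le (cJfun s) d (.xP s t hst); rw [hJ s] at h
      simp only [cJfun] at h; split_ifs at h <;> omega
  | x1n => have := Sw_le (c1fun m) d .x1n; simp only [c1fun] at this; omega
  | xK1 t =>
      have h := Sw_le (cJfun t) d (.xK1 t); rw [hJ t] at h
      simp only [cJfun] at h; split_ifs at h <;> omega
  | xKn t =>
      have h := Sw_le (cJfun t) d (.xKn t); rw [hJ t] at h
      simp only [cJfun] at h; split_ifs at h <;> omega
  | yK1 t =>
      have h := Sw_le (cJfun t) d (.yK1 t); rw [hJ t] at h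
      simp only [cJfun] at h; split_ifs at h <;> omega
  | yKn t =>
      have h := Sw_le (cJfun t) d (.yKn t); rw [hJ t] at h
      simp only [cJfun] at h; split_ifs at h <;> omega

theorem fiber_x1 {m : ℕ} (d : DoVar m →₀ ℕ)
    (h1 : Sw (c1fun m) d = 4) (hn : Sw (cnfun m) d = 0)
    (hJ : ∀ t : Fin m, Sw (cJfun t) d = 0)
    (hJc : ∀ j : Fin (m-1), Sw (cJcfun j) d = 0) :
    d = Finsupp.single DoVar.x1 1 := by
  have hO : ∀ w : DoVar m, w ≠ DoVar.x1 → d w = 0 := by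
    intro w hw
    cases w with
    | x1 => exact absurd rfl hw
    | xn => have := Sw_le (cnfun m) d .xn; simp only [cnfun] at this; omega
    | xJ t =>
        have h := Sw_le (cJfun t) d (.xJ t); rw [hJ t] at h
        simp only [cJfun] at h; split_ifs at h <;> omega
    | xJc t =>
        have h := Sw_le (cJcfun t) d (.xJc t); rw [hJc t] at h
        simp only [cJcfun] at h; split_ifs at h <;> omega
    | xP s t hst =>
        have h := Sw_le (cJfun s) d (.xP s t hst); rw [hJ s] at h
        simp only [cJfun] at h; split_ifs at h <;> omega
    | x1n => have := Sw_le (cnfun m) d .x1n; simp only [cnfun] at this; omega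
    | xK1 t =>
        have h := Sw_le (cJfun t) d (.xK1 t); rw [hJ t] at h
        simp only [cJfun] at h; split_ifs at h <;> omega
    | xKn t =>
        have h := Sw_le (cJfun t) d (.xKn t); rw [hJ t] at h
        simp only [cJfun] at h; split_ifs at h <;> omega
    | yK1 t => have := Sw_le (cnfun m) d (.yK1 t); simp only [cnfun] at this; omega
    | yKn t => have := Sw_le (cnfun m) d (.yKn t); simp only [cnfun] at this; omega
  have e1 : Sw (c1fun m) d = d DoVar.x1 * c1fun m DoVar.x1 := by
    rw [Sw_eq_sum (c1fun m) d {DoVar.x1} (fun w hw => by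
      rw [hO w (by simpa using hw), zero_mul]), Finset.sum_singleton]
  rw [h1] at e1; simp only [c1fun] at e1
  ext w
  by_cases hw : w = DoVar.x1
  · subst hw; rw [Finsupp.single_eq_same]; omega
  · rw [Finsupp.single_eq_of_ne' (fun h => hw h.symm)]
    exact hO w hw

theorem fiber_xn {m : ℕ} (d : DoVar m →₀ ℕ)
    (h1 : Sw (c1fun m) d = 0) (hn : Sw (cnfun m) d = 4)
    (hJ : ∀ t : Fin m, Sw (cJfun t) d = 0)
    (hJc : ∀ j : Fin (m-1), Sw (cJcfun j) d = 0) :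
    d = Finsupp.single DoVar.xn 1 := by
  have hO : ∀ w : DoVar m, w ≠ DoVar.xn → d w = 0 := by
    intro w hw
    cases w with
    | xn => exact absurd rfl hw
    | x1 => have := Sw_le (c1fun m) d .x1; simp only [c1fun] at this; omega
    | xJ t =>
        have h := Sw_le (cJfun t) d (.xJ t); rw [hJ t] at h
        simp only [cJfun] at h; split_ifs at h <;> omega
    | xJc t =>
        have h := Sw_le (cJcfun t) d (.xJc t); rw [hJc t] at h
        simp only [cJcfun] at h; split_ifs at h <;> omega
    | xP s t hst =>
        have h := Sw_le (cJfun s) d (.xP s t hst); rw [hJ s] at h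
        simp only [cJfun] at h; split_ifs at h <;> omega
    | x1n => have := Sw_le (c1fun m) d .x1n; simp only [c1fun] at this; omega
    | xK1 t =>
        have h := Sw_le (cJfun t) d (.xK1 t); rw [hJ t] at h
        simp only [cJfun] at h; split_ifs at h <;> omega
    | xKn t =>
        have h := Sw_le (cJfun t) d (.xKn t); rw [hJ t] at h
        simp only [cJfun] at h; split_ifs at h <;> omega
    | yK1 t => have := Sw_le (c1fun m) d (.yK1 t); simp only [c1fun] at this; omega
    | yKn t => have := Sw_le (c1fun m) d (.yKn t); simp only [c1fun] at this; omega
  have e1 : Sw (cnfun m) d = d DoVar.xn * cnfun m DoVar.xn := by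
    rw [Sw_eq_sum (cnfun m) d {DoVar.xn} (fun w hw => by
      rw [hO w (by simpa using hw), zero_mul]), Finset.sum_singleton]
  rw [hn] at e1; simp only [cnfun] at e1
  ext w
  by_cases hw : w = DoVar.xn
  · subst hw; rw [Finsupp.single_eq_same]; omega
  · rw [Finsupp.single_eq_of_ne' (fun h => hw h.symm)]
    exact hO w hw
theorem fiber1 {m : ℕ} (i : Fin m) (d : DoVar m →₀ ℕ)
    (h1 : Sw (c1fun m) d = 3) (hn : Sw (cnfun m) d = 1)
    (hJ : ∀ t : Fin m, Sw (cJfun t) d = if i.val = t.val then 1 else 0)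
    (hJc : ∀ j : Fin (m-1), Sw (cJcfun j) d = 0) :
    d = Finsupp.single (DoVar.yK1 i) 1 ∨
      d = Finsupp.single DoVar.x1n 1 + Finsupp.single (DoVar.xK1 i) 1 := by
  have hx1 : d DoVar.x1 = 0 := by
    have := Sw_le (c1fun m) d .x1; simp only [c1fun] at this; omega
  have hxn : d DoVar.xn = 0 := by
    have := Sw_le (cnfun m) d .xn; simp only [cnfun] at this; omega
  have hyKn : ∀ t, d (DoVar.yKn t) = 0 := fun t => by
    have := Sw_le (cnfun m) d (.yKn t); simp only [cnfun] at this; omega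
  have hxKn : ∀ t, d (DoVar.xKn t) = 0 := fun t => by
    have := Sw_le (cnfun m) d (.xKn t); simp only [cnfun] at this; omega
  have hxJ : ∀ t, d (DoVar.xJ t) = 0 := fun t => by
    have h := Sw_le (cJfun t) d (.xJ t); rw [hJ t] at h
    simp only [cJfun] at h; split_ifs at h <;> omega
  have hxJc : ∀ t, d (DoVar.xJc t) = 0 := fun t => by
    have h := Sw_le (cJcfun t) d (.xJc t); rw [hJc t] at h
    simp only [cJcfun] at h; split_ifs at h <;> omega
  have hxP : ∀ s t (hst : s < t), d (DoVar.xP s t hst) = 0 := by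
    intro s t hst
    have hst' : (s : ℕ) < (t : ℕ) := hst
    by_cases hti : (t : ℕ) = (i : ℕ)
    · have h := Sw_le (cJfun s) d (.xP s t hst); rw [hJ s] at h
      simp only [cJfun] at h; split_ifs at h <;> omega
    · have h := Sw_le (cJfun t) d (.xP s t hst); rw [hJ t] at h
      simp only [cJfun] at h; split_ifs at h <;> omega
  have hxK1t : ∀ t : Fin m, (t : ℕ) ≠ (i : ℕ) → d (DoVar.xK1 t) = 0 := fun t ht => by
    have h := Sw_le (cJfun t) d (.xK1 t); rw [hJ t] at h
    simp only [cJfun] at h; split_ifs at h <;> omega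
  have hyK1t : ∀ t : Fin m, (t : ℕ) ≠ (i : ℕ) → d (DoVar.yK1 t) = 0 := fun t ht => by
    have h := Sw_le (cJfun t) d (.yK1 t); rw [hJ t] at h
    simp only [cJfun] at h; split_ifs at h <;> omega
  have hO : ∀ w : DoVar m, w ≠ DoVar.x1n → w ≠ DoVar.xK1 i → w ≠ DoVar.yK1 i → d w = 0 := by
    intro w hw1 hw2 hw3
    cases w with
    | x1 => exact hx1
    | xn => exact hxn
    | xJ t => exact hxJ t
    | xJc t => exact hxJc t
    | xP s t hst => exact hxP s t hst
    | x1n => exact absurd rfl hw1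
    | xK1 t =>
        refine hxK1t t fun h => hw2 ?_
        rw [Fin.val_injective h]
    | xKn t => exact hxKn t
    | yK1 t =>
        refine hyK1t t fun h => hw3 ?_
        rw [Fin.val_injective h]
    | yKn t => exact hyKn t
  have Teq : ∀ c : DoVar m → ℕ, Sw c d =
      d DoVar.x1n * c DoVar.x1n + d (DoVar.xK1 i) * c (DoVar.xK1 i) +
        d (DoVar.yK1 i) * c (DoVar.yK1 i) := by
    intro c
    rw [Sw_eq_sum c d {DoVar.x1n, DoVar.xK1 i, DoVar.yK1 i} ?_]
    · rw [Finset.sum_insert (by simp), Finset.sum_insert (by simp), Finset.sum_singleton,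
        add_assoc]
    · intro w hw
      simp only [Finset.mem_insert, Finset.mem_singleton] at hw
      push_neg at hw
      rw [hO w hw.1 hw.2.1 hw.2.2, zero_mul]
  have e1 := Teq (c1fun m); rw [h1] at e1; simp only [c1fun] at e1
  have en := Teq (cnfun m); rw [hn] at en; simp only [cnfun] at en
  have eJ := Teq (cJfun i); rw [hJ i] at eJ; simp only [cJfun, if_pos rfl] at eJ
  have hcase : (d DoVar.x1n = 0 ∧ d (DoVar.xK1 i) = 0 ∧ d (DoVar.yK1 i) = 1) ∨
      (d DoVar.x1n = 1 ∧ d (DoVar.xK1 i) = 1 ∧ d (DoVar.yK1 i) = 0) := by omega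
  rcases hcase with ⟨ha, hb, hc⟩ | ⟨ha, hb, hc⟩
  · left; ext w
    by_cases hw3 : w = DoVar.yK1 i
    · subst hw3; rw [Finsupp.single_eq_same]; exact hc
    · rw [Finsupp.single_eq_of_ne' (fun h => hw3 h.symm)]
      by_cases hw1 : w = DoVar.x1n
      · subst hw1; exact ha
      by_cases hw2 : w = DoVar.xK1 i
      · subst hw2; exact hb
      exact hO w hw1 hw2 hw3
  · right; ext w
    rw [Finsupp.add_apply]
    by_cases hw1 : w = DoVar.x1n
    · subst hw1
      rw [Finsupp.single_eq_same, Finsupp.single_eq_of_ne (by simp)]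
      omega
    by_cases hw2 : w = DoVar.xK1 i
    · subst hw2
      rw [Finsupp.single_eq_same, Finsupp.single_eq_of_ne (by simp)]
      omega
    rw [Finsupp.single_eq_of_ne' (fun h => hw1 h.symm),
      Finsupp.single_eq_of_ne' (fun h => hw2 h.symm)]
    by_cases hw3 : w = DoVar.yK1 i
    · subst hw3; omega
    · simpa using hO w hw1 hw2 hw3
theorem fiber2 {m : ℕ} (i : Fin m) (d : DoVar m →₀ ℕ)
    (h1 : Sw (c1fun m) d = 1) (hn : Sw (cnfun m) d = 3)
    (hJ : ∀ t : Fin m, Sw (cJfun t) d = if i.val = t.val then 1 else 0)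
    (hJc : ∀ j : Fin (m-1), Sw (cJcfun j) d = 0) :
    d = Finsupp.single (DoVar.yKn i) 1 ∨
      d = Finsupp.single DoVar.x1n 1 + Finsupp.single (DoVar.xKn i) 1 := by
  have hx1 : d DoVar.x1 = 0 := by
    have := Sw_le (c1fun m) d .x1; simp only [c1fun] at this; omega
  have hxn : d DoVar.xn = 0 := by
    have := Sw_le (cnfun m) d .xn; simp only [cnfun] at this; omega
  have hyK1 : ∀ t, d (DoVar.yK1 t) = 0 := fun t => by
    have := Sw_le (c1fun m) d (.yK1 t); simp only [c1fun] at this; omega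
  have hxK1 : ∀ t, d (DoVar.xK1 t) = 0 := fun t => by
    have := Sw_le (c1fun m) d (.xK1 t); simp only [c1fun] at this; omega
  have hxJ : ∀ t, d (DoVar.xJ t) = 0 := fun t => by
    have h := Sw_le (cJfun t) d (.xJ t); rw [hJ t] at h
    simp only [cJfun] at h; split_ifs at h <;> omega
  have hxJc : ∀ t, d (DoVar.xJc t) = 0 := fun t => by
    have h := Sw_le (cJcfun t) d (.xJc t); rw [hJc t] at h
    simp only [cJcfun] at h; split_ifs at h <;> omega
  have hxP : ∀ s t (hst : s < t), d (DoVar.xP s t hst) = 0 := by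
    intro s t hst
    have hst' : (s : ℕ) < (t : ℕ) := hst
    by_cases hti : (t : ℕ) = (i : ℕ)
    · have h := Sw_le (cJfun s) d (.xP s t hst); rw [hJ s] at h
      simp only [cJfun] at h; split_ifs at h <;> omega
    · have h := Sw_le (cJfun t) d (.xP s t hst); rw [hJ t] at h
      simp only [cJfun] at h; split_ifs at h <;> omega
  have hxKnt : ∀ t : Fin m, (t : ℕ) ≠ (i : ℕ) → d (DoVar.xKn t) = 0 := fun t ht => by
    have h := Sw_le (cJfun t) d (.xKn t); rw [hJ t] at h
    simp only [cJfun] at h; split_ifs at h <;> omega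
  have hyKnt : ∀ t : Fin m, (t : ℕ) ≠ (i : ℕ) → d (DoVar.yKn t) = 0 := fun t ht => by
    have h := Sw_le (cJfun t) d (.yKn t); rw [hJ t] at h
    simp only [cJfun] at h; split_ifs at h <;> omega
  have hO : ∀ w : DoVar m, w ≠ DoVar.x1n → w ≠ DoVar.xKn i → w ≠ DoVar.yKn i → d w = 0 := by
    intro w hw1 hw2 hw3
    cases w with
    | x1 => exact hx1
    | xn => exact hxn
    | xJ t => exact hxJ t
    | xJc t => exact hxJc t
    | xP s t hst => exact hxP s t hst
    | x1n => exact absurd rfl hw1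
    | xKn t =>
        refine hxKnt t fun h => hw2 ?_
        rw [Fin.val_injective h]
    | xK1 t => exact hxK1 t
    | yKn t =>
        refine hyKnt t fun h => hw3 ?_
        rw [Fin.val_injective h]
    | yK1 t => exact hyK1 t
  have Teq : ∀ c : DoVar m → ℕ, Sw c d =
      d DoVar.x1n * c DoVar.x1n + d (DoVar.xKn i) * c (DoVar.xKn i) +
        d (DoVar.yKn i) * c (DoVar.yKn i) := by
    intro c
    rw [Sw_eq_sum c d {DoVar.x1n, DoVar.xKn i, DoVar.yKn i} ?_]
    · rw [Finset.sum_insert (by simp), Finset.sum_insert (by simp), Finset.sum_singleton,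
        add_assoc]
    · intro w hw
      simp only [Finset.mem_insert, Finset.mem_singleton] at hw
      push_neg at hw
      rw [hO w hw.1 hw.2.1 hw.2.2, zero_mul]
  have e1 := Teq (c1fun m); rw [h1] at e1; simp only [c1fun] at e1
  have en := Teq (cnfun m); rw [hn] at en; simp only [cnfun] at en
  have eJ := Teq (cJfun i); rw [hJ i] at eJ; simp only [cJfun, if_pos rfl] at eJ
  have hcase : (d DoVar.x1n = 0 ∧ d (DoVar.xKn i) = 0 ∧ d (DoVar.yKn i) = 1) ∨
      (d DoVar.x1n = 1 ∧ d (DoVar.xKn i) = 1 ∧ d (DoVar.yKn i) = 0) := by omega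
  rcases hcase with ⟨ha, hb, hc⟩ | ⟨ha, hb, hc⟩
  · left; ext w
    by_cases hw3 : w = DoVar.yKn i
    · subst hw3; rw [Finsupp.single_eq_same]; exact hc
    · rw [Finsupp.single_eq_of_ne' (fun h => hw3 h.symm)]
      by_cases hw1 : w = DoVar.x1n
      · subst hw1; exact ha
      by_cases hw2 : w = DoVar.xKn i
      · subst hw2; exact hb
      exact hO w hw1 hw2 hw3
  · right; ext w
    rw [Finsupp.add_apply]
    by_cases hw1 : w = DoVar.x1n
    · subst hw1
      rw [Finsupp.single_eq_same, Finsupp.single_eq_of_ne (by simp)]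
      omega
    by_cases hw2 : w = DoVar.xKn i
    · subst hw2
      rw [Finsupp.single_eq_same, Finsupp.single_eq_of_ne (by simp)]
      omega
    rw [Finsupp.single_eq_of_ne' (fun h => hw1 h.symm),
      Finsupp.single_eq_of_ne' (fun h => hw2 h.symm)]
    by_cases hw3 : w = DoVar.yKn i
    · subst hw3; omega
    · simpa using hO w hw1 hw2 hw3

theorem fiberM {m : ℕ} (d : DoVar m →₀ ℕ)
    (h1 : Sw (c1fun m) d = 4) (hn : Sw (cnfun m) d = 4)
    (hJ : ∀ t : Fin m, Sw (cJfun t) d = 0)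
    (hJc : ∀ j : Fin (m-1), Sw (cJcfun j) d = 0) :
    d = Finsupp.single DoVar.x1 1 + Finsupp.single DoVar.xn 1 ∨
      d = Finsupp.single DoVar.x1n 4 := by
  have hxJ : ∀ t, d (DoVar.xJ t) = 0 := fun t => by
    have h := Sw_le (cJfun t) d (.xJ t); rw [hJ t] at h
    simp only [cJfun] at h; split_ifs at h <;> omega
  have hxJc : ∀ t, d (DoVar.xJc t) = 0 := fun t => by
    have h := Sw_le (cJcfun t) d (.xJc t); rw [hJc t] at h
    simp only [cJcfun] at h; split_ifs at h <;> omega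
  have hxP : ∀ s t (hst : s < t), d (DoVar.xP s t hst) = 0 := by
    intro s t hst
    have h := Sw_le (cJfun s) d (.xP s t hst); rw [hJ s] at h
    simp only [cJfun] at h; split_ifs at h <;> omega
  have hxK1 : ∀ t, d (DoVar.xK1 t) = 0 := fun t => by
    have h := Sw_le (cJfun t) d (.xK1 t); rw [hJ t] at h
    simp only [cJfun] at h; split_ifs at h <;> omega
  have hxKn : ∀ t, d (DoVar.xKn t) = 0 := fun t => by
    have h := Sw_le (cJfun t) d (.xKn t); rw [hJ t] at h
    simp only [cJfun] at h; split_ifs at h <;> omega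
  have hyK1 : ∀ t, d (DoVar.yK1 t) = 0 := fun t => by
    have h := Sw_le (cJfun t) d (.yK1 t); rw [hJ t] at h
    simp only [cJfun] at h; split_ifs at h <;> omega
  have hyKn : ∀ t, d (DoVar.yKn t) = 0 := fun t => by
    have h := Sw_le (cJfun t) d (.yKn t); rw [hJ t] at h
    simp only [cJfun] at h; split_ifs at h <;> omega
  have hO : ∀ w : DoVar m, w ≠ DoVar.x1 → w ≠ DoVar.xn → w ≠ DoVar.x1n → d w = 0 := by
    intro w hw1 hw2 hw3
    cases w with
    | x1 => exact absurd rfl hw1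
    | xn => exact absurd rfl hw2
    | x1n => exact absurd rfl hw3
    | xJ t => exact hxJ t
    | xJc t => exact hxJc t
    | xP s t hst => exact hxP s t hst
    | xK1 t => exact hxK1 t
    | xKn t => exact hxKn t
    | yK1 t => exact hyK1 t
    | yKn t => exact hyKn t
  have Teq : ∀ c : DoVar m → ℕ, Sw c d =
      d DoVar.x1 * c DoVar.x1 + d DoVar.xn * c DoVar.xn + d DoVar.x1n * c DoVar.x1n := by
    intro c
    rw [Sw_eq_sum c d {DoVar.x1, DoVar.xn, DoVar.x1n} ?_]
    · rw [Finset.sum_insert (by simp), Finset.sum_insert (by simp), Finset.sum_singleton,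
        add_assoc]
    · intro w hw
      simp only [Finset.mem_insert, Finset.mem_singleton] at hw
      push_neg at hw
      rw [hO w hw.1 hw.2.1 hw.2.2, zero_mul]
  have e1 := Teq (c1fun m); rw [h1] at e1; simp only [c1fun] at e1
  have en := Teq (cnfun m); rw [hn] at en; simp only [cnfun] at en
  have hcase : (d DoVar.x1 = 1 ∧ d DoVar.xn = 1 ∧ d DoVar.x1n = 0) ∨
      (d DoVar.x1 = 0 ∧ d DoVar.xn = 0 ∧ d DoVar.x1n = 4) := by omega
  rcases hcase with ⟨ha, hb, hc⟩ | ⟨ha, hb, hc⟩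
  · left; ext w
    rw [Finsupp.add_apply]
    by_cases hw1 : w = DoVar.x1
    · subst hw1
      rw [Finsupp.single_eq_same, Finsupp.single_eq_of_ne (by simp)]
      omega
    by_cases hw2 : w = DoVar.xn
    · subst hw2
      rw [Finsupp.single_eq_same, Finsupp.single_eq_of_ne (by simp)]
      omega
    rw [Finsupp.single_eq_of_ne' (fun h => hw1 h.symm),
      Finsupp.single_eq_of_ne' (fun h => hw2 h.symm)]
    by_cases hw3 : w = DoVar.x1n
    · subst hw3; omega
    · simpa using hO w hw1 hw2 hw3
  · right; ext w
    by_cases hw3 : w = DoVar.x1n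
    · subst hw3; rw [Finsupp.single_eq_same]; exact hc
    · rw [Finsupp.single_eq_of_ne' (fun h => hw3 h.symm)]
      by_cases hw1 : w = DoVar.x1
      · subst hw1; exact ha
      by_cases hw2 : w = DoVar.xn
      · subst hw2; exact hb
      exact hO w hw1 hw2 hw3
theorem extract_binomial {K : Type*} [Field K] {m : ℕ}
    (B : Set (MvPolynomial (DoVar m) K))
    (hbin : ∀ b ∈ B, ∃ d e : DoVar m →₀ ℕ, d ≠ e ∧
      b = monomial d (1 : K) - monomial e (1 : K))
    (hspan : Ideal.span B = RingHom.ker (piDo K m))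
    (u v : DoVar m →₀ ℕ)
    (hker : monomial u (1:K) - monomial v 1 ∈ RingHom.ker (piDo K m))
    (huv : u ≠ v)
    (hfib : ∀ d₁ d₂ : DoVar m →₀ ℕ, (∃ a, a + d₂ = u) → d₁ ≠ d₂ →
      piDo K m (monomial d₁ 1) = piDo K m (monomial d₂ 1) → d₂ = u ∧ d₁ = v) :
    (monomial u (1:K) - monomial v 1 ∈ B) ∨ (monomial v (1:K) - monomial u 1 ∈ B) := by
  classical
  have hf : monomial u (1:K) - monomial v 1 ∈ Ideal.span B := by rw [hspan]; exact hker
  rw [Ideal.span, Submodule.mem_span_set] at hf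
  obtain ⟨c, hcB, hsum⟩ := hf
  have hcoeff : coeff u (monomial u (1:K) - monomial v 1) ≠ 0 := by
    rw [coeff_sub, coeff_monomial, coeff_monomial, if_pos rfl, if_neg (fun h => huv h.symm)]
    simp
  rw [← hsum, Finsupp.sum, coeff_sum] at hcoeff
  obtain ⟨b, hbs, hb0⟩ := Finset.exists_ne_zero_of_sum_ne_zero hcoeff
  have hbB : b ∈ B := hcB hbs
  have hmem : u ∈ (c b * b).support := by
    rw [mem_support_iff]
    simpa [smul_eq_mul] using hb0
  have hsub := support_mul (c b) b hmem
  rw [Finset.mem_add] at hsub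
  obtain ⟨a, _, e', he', hae⟩ := hsub
  obtain ⟨d, e, hde, hbde⟩ := hbin b hbB
  have hbker : piDo K m (monomial d (1:K)) = piDo K m (monomial e 1) := by
    have hk : b ∈ RingHom.ker (piDo K m) := by rw [← hspan]; exact Ideal.subset_span hbB
    rw [hbde, RingHom.mem_ker, map_sub, sub_eq_zero] at hk
    exact hk
  have he'' : e' = d ∨ e' = e := by
    by_contra h
    push_neg at h
    have hz : coeff e' b = 0 := by
      rw [hbde, coeff_sub, coeff_monomial, coeff_monomial,
        if_neg (fun hh => h.1 hh.symm), if_neg (fun hh => h.2 hh.symm)]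
      simp
    exact (mem_support_iff.mp he') hz
  rcases he'' with rfl | rfl
  · obtain ⟨h₂, h₁⟩ := hfib e e' ⟨a, hae⟩ (Ne.symm hde) hbker.symm
    left
    rw [h₂, h₁] at hbde
    exact hbde ▸ hbB
  · obtain ⟨h₂, h₁⟩ := hfib d e' ⟨a, hae⟩ hde hbker
    right
    rw [h₂, h₁] at hbde
    exact hbde ▸ hbB
theorem X_eq_monomial {K : Type*} [Field K] {m : ℕ} (v : DoVar m) :
    (X v : MvPolynomial (DoVar m) K) = monomial (Finsupp.single v 1) 1 := rfl

theorem hfib1 {K : Type*} [Field K] {m : ℕ} (hm : 1 ≤ m) (i : Fin m) :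
    ∀ d₁ d₂ : DoVar m →₀ ℕ, (∃ a, a + d₂ = Finsupp.single (DoVar.yK1 i) 1) → d₁ ≠ d₂ →
      piDo K m (monomial d₁ 1) = piDo K m (monomial d₂ 1) →
      d₂ = Finsupp.single (DoVar.yK1 i) 1 ∧
        d₁ = Finsupp.single DoVar.x1n 1 + Finsupp.single (DoVar.xK1 i) 1 := by
  rintro d₁ d₂ ⟨a, hae⟩ hne hπ
  obtain ⟨hc1, hcn, hcJ, hcJc⟩ := coords_of_pi hm hπ
  have hle : ∀ w, a w + d₂ w = (Finsupp.single (DoVar.yK1 i) 1 : DoVar m →₀ ℕ) w :=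
    fun w => by rw [← hae]; simp
  by_cases h0 : d₂ (DoVar.yK1 i) = 0
  · exfalso
    have hd2 : d₂ = 0 := by
      ext w
      by_cases hw : w = DoVar.yK1 i
      · subst hw; simpa using h0
      · have h := hle w
        rw [Finsupp.single_eq_of_ne' (fun h' => hw h'.symm)] at h
        simp only [Finsupp.coe_zero, Pi.zero_apply]
        omega
    subst hd2
    exact hne (fiber_zero d₁ (hc1.trans (Sw_zero _)) (hcn.trans (Sw_zero _))
      (fun t => (hcJ t).trans (Sw_zero _)) (fun j => (hcJc j).trans (Sw_zero _)))
  · have hd2 : d₂ = Finsupp.single (DoVar.yK1 i) 1 := by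
      ext w
      have h := hle w
      by_cases hw : w = DoVar.yK1 i
      · subst hw; rw [Finsupp.single_eq_same] at h ⊢; omega
      · rw [Finsupp.single_eq_of_ne' (fun h' => hw h'.symm)] at h ⊢; omega
    subst hd2
    refine ⟨rfl, ?_⟩
    have H1 : Sw (c1fun m) d₁ = 3 := by rw [hc1, Sw_single]; simp [c1fun]
    have Hn : Sw (cnfun m) d₁ = 1 := by rw [hcn, Sw_single]; simp [cnfun]
    have HJ : ∀ t, Sw (cJfun t) d₁ = if i.val = t.val then 1 else 0 := fun t => by
      rw [hcJ t, Sw_single]; simp [cJfun]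
    have HJc : ∀ j, Sw (cJcfun j) d₁ = 0 := fun j => by
      rw [hcJc j, Sw_single]; simp [cJcfun]
    rcases fiber1 i d₁ H1 Hn HJ HJc with h | h
    · exact absurd h hne
    · exact h

theorem hfib2 {K : Type*} [Field K] {m : ℕ} (hm : 1 ≤ m) (i : Fin m) :
    ∀ d₁ d₂ : DoVar m →₀ ℕ, (∃ a, a + d₂ = Finsupp.single (DoVar.yKn i) 1) → d₁ ≠ d₂ →
      piDo K m (monomial d₁ 1) = piDo K m (monomial d₂ 1) →
      d₂ = Finsupp.single (DoVar.yKn i) 1 ∧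
        d₁ = Finsupp.single DoVar.x1n 1 + Finsupp.single (DoVar.xKn i) 1 := by
  rintro d₁ d₂ ⟨a, hae⟩ hne hπ
  obtain ⟨hc1, hcn, hcJ, hcJc⟩ := coords_of_pi hm hπ
  have hle : ∀ w, a w + d₂ w = (Finsupp.single (DoVar.yKn i) 1 : DoVar m →₀ ℕ) w :=
    fun w => by rw [← hae]; simp
  by_cases h0 : d₂ (DoVar.yKn i) = 0
  · exfalso
    have hd2 : d₂ = 0 := by
      ext w
      by_cases hw : w = DoVar.yKn i
      · subst hw; simpa using h0
      · have h := hle w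
        rw [Finsupp.single_eq_of_ne' (fun h' => hw h'.symm)] at h
        simp only [Finsupp.coe_zero, Pi.zero_apply]
        omega
    subst hd2
    exact hne (fiber_zero d₁ (hc1.trans (Sw_zero _)) (hcn.trans (Sw_zero _))
      (fun t => (hcJ t).trans (Sw_zero _)) (fun j => (hcJc j).trans (Sw_zero _)))
  · have hd2 : d₂ = Finsupp.single (DoVar.yKn i) 1 := by
      ext w
      have h := hle w
      by_cases hw : w = DoVar.yKn i
      · subst hw; rw [Finsupp.single_eq_same] at h ⊢; omega
      · rw [Finsupp.single_eq_of_ne' (fun h' => hw h'.symm)] at h ⊢; omega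
    subst hd2
    refine ⟨rfl, ?_⟩
    have H1 : Sw (c1fun m) d₁ = 1 := by rw [hc1, Sw_single]; simp [c1fun]
    have Hn : Sw (cnfun m) d₁ = 3 := by rw [hcn, Sw_single]; simp [cnfun]
    have HJ : ∀ t, Sw (cJfun t) d₁ = if i.val = t.val then 1 else 0 := fun t => by
      rw [hcJ t, Sw_single]; simp [cJfun]
    have HJc : ∀ j, Sw (cJcfun j) d₁ = 0 := fun j => by
      rw [hcJc j, Sw_single]; simp [cJcfun]
    rcases fiber2 i d₁ H1 Hn HJ HJc with h | h
    · exact absurd h hne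
    · exact h

theorem hfib3 {K : Type*} [Field K] {m : ℕ} (hm : 1 ≤ m) :
    ∀ d₁ d₂ : DoVar m →₀ ℕ,
      (∃ a, a + d₂ = Finsupp.single DoVar.x1 1 + Finsupp.single DoVar.xn 1) → d₁ ≠ d₂ →
      piDo K m (monomial d₁ 1) = piDo K m (monomial d₂ 1) →
      d₂ = Finsupp.single DoVar.x1 1 + Finsupp.single DoVar.xn 1 ∧
        d₁ = Finsupp.single DoVar.x1n 4 := by
  rintro d₁ d₂ ⟨a, hae⟩ hne hπ
  obtain ⟨hc1, hcn, hcJ, hcJc⟩ := coords_of_pi hm hπ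
  have hle : ∀ w, a w + d₂ w =
      (Finsupp.single DoVar.x1 1 + Finsupp.single DoVar.xn 1 : DoVar m →₀ ℕ) w :=
    fun w => by rw [← hae]; simp
  have hz : ∀ w : DoVar m, w ≠ DoVar.x1 → w ≠ DoVar.xn → d₂ w = 0 := by
    intro w h1 h2
    have h := hle w
    rw [Finsupp.add_apply, Finsupp.single_eq_of_ne' (fun h' => h1 h'.symm),
      Finsupp.single_eq_of_ne' (fun h' => h2 h'.symm)] at h
    omega
  have hb1 : a DoVar.x1 + d₂ DoVar.x1 = 1 := by
    have h := hle DoVar.x1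
    rwa [Finsupp.add_apply, Finsupp.single_eq_same, Finsupp.single_eq_of_ne (by simp),
      add_zero] at h
  have hbn : a DoVar.xn + d₂ DoVar.xn = 1 := by
    have h := hle DoVar.xn
    rwa [Finsupp.add_apply, Finsupp.single_eq_same, Finsupp.single_eq_of_ne (by simp),
      zero_add] at h
  by_cases e1 : d₂ DoVar.x1 = 0 <;> by_cases en : d₂ DoVar.xn = 0
  · -- d₂ = 0
    exfalso
    have hd2 : d₂ = 0 := by
      ext w
      simp only [Finsupp.coe_zero, Pi.zero_apply]
      by_cases hw1 : w = DoVar.x1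
      · subst hw1; exact e1
      by_cases hw2 : w = DoVar.xn
      · subst hw2; exact en
      exact hz w hw1 hw2
    subst hd2
    exact hne (fiber_zero d₁ (hc1.trans (Sw_zero _)) (hcn.trans (Sw_zero _))
      (fun t => (hcJ t).trans (Sw_zero _)) (fun j => (hcJc j).trans (Sw_zero _)))
  · -- d₂ = single xn 1
    exfalso
    have hd2 : d₂ = Finsupp.single DoVar.xn 1 := by
      ext w
      by_cases hw2 : w = DoVar.xn
      · subst hw2; rw [Finsupp.single_eq_same]; omega
      rw [Finsupp.single_eq_of_ne' (fun h' => hw2 h'.symm)]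
      by_cases hw1 : w = DoVar.x1
      · subst hw1; exact e1
      exact hz w hw1 hw2
    subst hd2
    refine hne (fiber_xn d₁ ?_ ?_ ?_ ?_)
    · rw [hc1, Sw_single]; simp [c1fun]
    · rw [hcn, Sw_single]; simp [cnfun]
    · intro t; rw [hcJ t, Sw_single]; simp [cJfun]
    · intro j; rw [hcJc j, Sw_single]; simp [cJcfun]
  · -- d₂ = single x1 1
    exfalso
    have hd2 : d₂ = Finsupp.single DoVar.x1 1 := by
      ext w
      by_cases hw1 : w = DoVar.x1
      · subst hw1; rw [Finsupp.single_eq_same]; omega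
      rw [Finsupp.single_eq_of_ne' (fun h' => hw1 h'.symm)]
      by_cases hw2 : w = DoVar.xn
      · subst hw2; exact en
      exact hz w hw1 hw2
    subst hd2
    refine hne (fiber_x1 d₁ ?_ ?_ ?_ ?_)
    · rw [hc1, Sw_single]; simp [c1fun]
    · rw [hcn, Sw_single]; simp [cnfun]
    · intro t; rw [hcJ t, Sw_single]; simp [cJfun]
    · intro j; rw [hcJc j, Sw_single]; simp [cJcfun]
  · -- d₂ = single x1 1 + single xn 1
    have hd2 : d₂ = Finsupp.single DoVar.x1 1 + Finsupp.single DoVar.xn 1 := by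
      ext w
      rw [Finsupp.add_apply]
      by_cases hw1 : w = DoVar.x1
      · subst hw1
        rw [Finsupp.single_eq_same, Finsupp.single_eq_of_ne (by simp)]
        omega
      by_cases hw2 : w = DoVar.xn
      · subst hw2
        rw [Finsupp.single_eq_same, Finsupp.single_eq_of_ne (by simp)]
        omega
      rw [Finsupp.single_eq_of_ne' (fun h' => hw1 h'.symm),
        Finsupp.single_eq_of_ne' (fun h' => hw2 h'.symm)]
      simpa using hz w hw1 hw2
    subst hd2
    refine ⟨rfl, ?_⟩
    have H1 : Sw (c1fun m) d₁ = 4 := by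
      rw [hc1, Sw_add, Sw_single, Sw_single]; simp [c1fun]
    have Hn : Sw (cnfun m) d₁ = 4 := by
      rw [hcn, Sw_add, Sw_single, Sw_single]; simp [cnfun]
    have HJ : ∀ t, Sw (cJfun t) d₁ = 0 := fun t => by
      rw [hcJ t, Sw_add, Sw_single, Sw_single]; simp [cJfun]
    have HJc : ∀ j, Sw (cJcfun j) d₁ = 0 := fun j => by
      rw [hcJc j, Sw_add, Sw_single, Sw_single]; simp [cJcfun]
    rcases fiberM d₁ H1 Hn HJ HJc with h | h
    · exact absurd h hne
    · exact h
/-- the binomials `y_{i,1} − x_{1,n}x_{i,1}`, `y_{i,n} − x_{1,n}x_{i,n}`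
(`i ∈ J`) and `x_1 x_n − x_{1,n}⁴` are indispensable binomials of `I_{D_{2m+1}}`: every set
of binomials generating the toric ideal contains each of them or its negative. -/
theorem GDo_indispensable (K : Type*) [Field K] (m : ℕ) (hm : 2 ≤ m)
    (B : Set (MvPolynomial (DoVar m) K))
    (hbin : ∀ b ∈ B, ∃ d e : DoVar m →₀ ℕ, d ≠ e ∧
      b = monomial d (1 : K) - monomial e (1 : K))
    (hspan : Ideal.span B = RingHom.ker (piDo K m)) :
    (∀ i : Fin m,
        X (DoVar.yK1 i) - X DoVar.x1n * X (DoVar.xK1 i) ∈ B ∨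
        X DoVar.x1n * X (DoVar.xK1 i) - X (DoVar.yK1 i) ∈ B) ∧
    (∀ i : Fin m,
        X (DoVar.yKn i) - X DoVar.x1n * X (DoVar.xKn i) ∈ B ∨
        X DoVar.x1n * X (DoVar.xKn i) - X (DoVar.yKn i) ∈ B) ∧
    (X DoVar.x1 * X DoVar.xn - X DoVar.x1n ^ 4 ∈ B ∨
      X DoVar.x1n ^ 4 - X DoVar.x1 * X DoVar.xn ∈ B) := by
  have hm1 : 1 ≤ m := le_trans (by norm_num) hm
  refine ⟨fun i => ?_, fun i => ?_, ?_⟩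
  · set u : DoVar m →₀ ℕ := Finsupp.single (DoVar.yK1 i) 1 with hu
    set v : DoVar m →₀ ℕ := Finsupp.single DoVar.x1n 1 + Finsupp.single (DoVar.xK1 i) 1
      with hv
    have hrepr : X (DoVar.yK1 i) - X DoVar.x1n * X (DoVar.xK1 i) =
        monomial u (1:K) - monomial v 1 := by
      rw [hu, hv, X_eq_monomial, X_eq_monomial, X_eq_monomial, monomial_mul, one_mul]
    have hrepr2 : X DoVar.x1n * X (DoVar.xK1 i) - X (DoVar.yK1 i) =
        monomial v (1:K) - monomial u 1 := by
      rw [hu, hv, X_eq_monomial, X_eq_monomial, X_eq_monomial, monomial_mul, one_mul]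
    have hker : monomial u (1:K) - monomial v 1 ∈ RingHom.ker (piDo K m) := by
      rw [← hrepr, RingHom.mem_ker]
      simp only [map_sub, map_mul, piDo, aeval_X, doImage]
      ring
    have huv : u ≠ v := by
      intro h
      have := DFunLike.congr_fun h DoVar.x1n
      simp [hu, hv, Finsupp.single_apply] at this
    rcases extract_binomial B hbin hspan u v hker huv (hfib1 hm1 i) with h | h
    · left; rwa [hrepr]
    · right; rwa [hrepr2]
  · set u : DoVar m →₀ ℕ := Finsupp.single (DoVar.yKn i) 1 with hu
    set v : DoVar m →₀ ℕ := Finsupp.single DoVar.x1n 1 + Finsupp.single (DoVar.xKn i) 1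
      with hv
    have hrepr : X (DoVar.yKn i) - X DoVar.x1n * X (DoVar.xKn i) =
        monomial u (1:K) - monomial v 1 := by
      rw [hu, hv, X_eq_monomial, X_eq_monomial, X_eq_monomial, monomial_mul, one_mul]
    have hrepr2 : X DoVar.x1n * X (DoVar.xKn i) - X (DoVar.yKn i) =
        monomial v (1:K) - monomial u 1 := by
      rw [hu, hv, X_eq_monomial, X_eq_monomial, X_eq_monomial, monomial_mul, one_mul]
    have hker : monomial u (1:K) - monomial v 1 ∈ RingHom.ker (piDo K m) := by
      rw [← hrepr, RingHom.mem_ker]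
      simp only [map_sub, map_mul, piDo, aeval_X, doImage]
      ring
    have huv : u ≠ v := by
      intro h
      have := DFunLike.congr_fun h DoVar.x1n
      simp [hu, hv, Finsupp.single_apply] at this
    rcases extract_binomial B hbin hspan u v hker huv (hfib2 hm1 i) with h | h
    · left; rwa [hrepr]
    · right; rwa [hrepr2]
  · set u : DoVar m →₀ ℕ := Finsupp.single DoVar.x1 1 + Finsupp.single DoVar.xn 1 with hu
    set v : DoVar m →₀ ℕ := Finsupp.single DoVar.x1n 4 with hv
    have hrepr : X DoVar.x1 * X DoVar.xn - X DoVar.x1n ^ 4 =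
        monomial u (1:K) - monomial v 1 := by
      simp [hu, hv, X_eq_monomial, monomial_mul, monomial_pow, Finsupp.smul_single]
    have hrepr2 : X DoVar.x1n ^ 4 - X DoVar.x1 * X DoVar.xn =
        monomial v (1:K) - monomial u 1 := by
      simp [hu, hv, X_eq_monomial, monomial_mul, monomial_pow, Finsupp.smul_single]
    have hker : monomial u (1:K) - monomial v 1 ∈ RingHom.ker (piDo K m) := by
      rw [← hrepr, RingHom.mem_ker]
      simp only [map_sub, map_mul, map_pow, piDo, aeval_X, doImage]
      ring
    have huv : u ≠ v := by
      intro h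
      have := DFunLike.congr_fun h DoVar.x1
      simp [hu, hv, Finsupp.single_apply] at this
    rcases extract_binomial B hbin hspan u v hker huv (hfib3 hm1) with h | h
    · left; rwa [hrepr]
    · right; rwa [hrepr2]
end

section
/- The set 𝒢_{E_7} = {x_7x_8 − x_9x_{10}, x_6x_9 − x_8x_{10}, x_6x_7 − x_{10}², x_4x_{10} − x_8x_9, x_4x_7 − x_9², x_4x_6 − x_8²} is a Gröbner basis of the toric ideal I_{E_7} with respect to the lexicographic order with x_1 > x_2 > ... > x_{10}: the ideal generated by the lex-leading monomials of all nonzero elements of I_{E_7} equals the ideal generated by the monomials x_7x_8, x_6x_9, x_6x_7, x_4x_{10}, x_4x_7, x_4x_6; in particular the ideal generated by 𝒢_{E_7} equals I_{E_7}. -/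
open MvPolynomial

/-- The toric map `π : K[x_1,…,x_10] → K[u_1,…,u_7]` of the `E_7` configuration, where
`x_i` is the variable `X (i-1) : MvPolynomial (Fin 10) K` and `u_j = X (j-1)` in
`MvPolynomial (Fin 7) K`:
`π(x_1)=u_1, π(x_2)=u_2, π(x_3)=u_3, π(x_4)=u_4², π(x_5)=u_5, π(x_6)=u_6², π(x_7)=u_7²,
π(x_8)=u_4u_6, π(x_9)=u_4u_7, π(x_{10})=u_6u_7`. -/
noncomputable def piE7 (K : Type*) [Field K] :
    MvPolynomial (Fin 10) K →ₐ[K] MvPolynomial (Fin 7) K :=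
  aeval ![X 0, X 1, X 2, X 3 ^ 2, X 4, X 5 ^ 2, X 6 ^ 2, X 3 * X 5, X 3 * X 6, X 5 * X 6]

/-- The set `𝒢_{E_7}` of six binomials (with `x_i = X (i-1)`):
`x_7x_8 − x_9x_{10}`, `x_6x_9 − x_8x_{10}`, `x_6x_7 − x_{10}²`, `x_4x_{10} − x_8x_9`,
`x_4x_7 − x_9²`, `x_4x_6 − x_8²`. -/
noncomputable def GE7 (K : Type*) [Field K] : Set (MvPolynomial (Fin 10) K) :=
  { X 6 * X 7 - X 8 * X 9,      -- x7x8 − x9x10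
    X 5 * X 8 - X 7 * X 9,      -- x6x9 − x8x10
    X 5 * X 6 - X 9 ^ 2,        -- x6x7 − x10²
    X 3 * X 9 - X 7 * X 8,      -- x4x10 − x8x9
    X 3 * X 6 - X 8 ^ 2,        -- x4x7 − x9²
    X 3 * X 5 - X 7 ^ 2 }       -- x4x6 − x8²

/-- `lexLT rank a b` : the exponent vector `a` is strictly smaller than `b` in the
lexicographic order determined by the ranking `rank` of the variables (smaller rank =
greater variable): in the greatest variable where they differ, `a` has the smaller
exponent. -/
def lexLT {σ : Type*} (rank : σ → ℕ) (a b : σ →₀ ℕ) : Prop :=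
  ∃ v, a v < b v ∧ ∀ w, rank w < rank v → a w = b w

/-- `IsLeadExp lt f d` : `d` is the exponent vector of the leading monomial of `f` with
respect to the strict term order `lt`. -/
def IsLeadExp {σ K : Type*} [Field K] (lt : (σ →₀ ℕ) → (σ →₀ ℕ) → Prop)
    (f : MvPolynomial σ K) (d : σ →₀ ℕ) : Prop :=
  d ∈ f.support ∧ ∀ e ∈ f.support, e ≠ d → lt e d

/-- The ideal of leading monomials (initial ideal) of an ideal `I` with respect to the
strict term order `lt`. -/
noncomputable def initialIdeal {σ K : Type*} [Field K] (lt : (σ →₀ ℕ) → (σ →₀ ℕ) → Prop)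
    (I : Ideal (MvPolynomial σ K)) : Ideal (MvPolynomial σ K) :=
  Ideal.span {p | ∃ f ∈ I, f ≠ 0 ∧ ∃ d, IsLeadExp lt f d ∧ p = monomial d (1 : K)}

namespace GE7Aux

variable {K : Type*} [Field K]

abbrev rk : Fin 10 → ℕ := fun v => v.val

def Std (d : Fin 10 →₀ ℕ) : Prop :=
  (d 6 = 0 ∨ d 7 = 0) ∧ (d 5 = 0 ∨ d 8 = 0) ∧ (d 5 = 0 ∨ d 6 = 0) ∧
  (d 3 = 0 ∨ d 9 = 0) ∧ (d 3 = 0 ∨ d 6 = 0) ∧ (d 3 = 0 ∨ d 5 = 0)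

noncomputable def E (d : Fin 10 →₀ ℕ) : Fin 7 →₀ ℕ :=
  Finsupp.equivFunOnFinite.symm
    ![d 0, d 1, d 2, 2 * d 3 + d 7 + d 8, d 4, 2 * d 5 + d 7 + d 9, 2 * d 6 + d 8 + d 9]

lemma E0 (d : Fin 10 →₀ ℕ) : E d 0 = d 0 := rfl
lemma E1 (d : Fin 10 →₀ ℕ) : E d 1 = d 1 := rfl
lemma E2 (d : Fin 10 →₀ ℕ) : E d 2 = d 2 := rfl
lemma E3 (d : Fin 10 →₀ ℕ) : E d 3 = 2 * d 3 + d 7 + d 8 := rfl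
lemma E4 (d : Fin 10 →₀ ℕ) : E d 4 = d 4 := rfl
lemma E5 (d : Fin 10 →₀ ℕ) : E d 5 = 2 * d 5 + d 7 + d 9 := rfl
lemma E6 (d : Fin 10 →₀ ℕ) : E d 6 = 2 * d 6 + d 8 + d 9 := rfl

lemma std_cases {d : Fin 10 →₀ ℕ} (h : Std d) :
    (d 3 = 0 ∧ d 5 = 0 ∧ d 6 = 0) ∨ (0 < d 3 ∧ d 5 = 0 ∧ d 6 = 0 ∧ d 9 = 0) ∨
    (0 < d 5 ∧ d 3 = 0 ∧ d 6 = 0 ∧ d 8 = 0) ∨ (0 < d 6 ∧ d 3 = 0 ∧ d 5 = 0 ∧ d 7 = 0) := by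
  obtain ⟨h1, h2, h3, h4, h5, h6⟩ := h
  omega

lemma E_inj {d e : Fin 10 →₀ ℕ} (hd : Std d) (he : Std e) (h : E d = E e) : d = e := by
  have hcd := std_cases hd
  have hce := std_cases he
  have hj : ∀ j : Fin 7, E d j = E e j := fun j => by rw [h]
  have e0 := hj 0; have e1 := hj 1; have e2 := hj 2; have e3 := hj 3
  have e4 := hj 4; have e5 := hj 5; have e6 := hj 6
  rw [E0, E0] at e0; rw [E1, E1] at e1; rw [E2, E2] at e2; rw [E3, E3] at e3
  rw [E4, E4] at e4; rw [E5, E5] at e5; rw [E6, E6] at e6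
  have key : d 3 = e 3 ∧ d 5 = e 5 ∧ d 6 = e 6 ∧ d 7 = e 7 ∧ d 8 = e 8 ∧ d 9 = e 9 := by
    rcases hcd with hc|hc|hc|hc <;> rcases hce with kc|kc|kc|kc <;> omega
  refine Finsupp.ext fun w => ?_
  fin_cases w
  · show d 0 = e 0; omega
  · show d 1 = e 1; omega
  · show d 2 = e 2; omega
  · show d 3 = e 3; omega
  · show d 4 = e 4; omega
  · show d 5 = e 5; omega
  · show d 6 = e 6; omega
  · show d 7 = e 7; omega
  · show d 8 = e 8; omega
  · show d 9 = e 9; omega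

/-! ### basic monomial lemmas -/

lemma XX (a b : Fin 10) : (X a * X b : MvPolynomial (Fin 10) K)
    = monomial (Finsupp.single a 1 + Finsupp.single b 1) 1 := by
  rw [← pow_one (X a), ← pow_one (X b), X_pow_eq_monomial, X_pow_eq_monomial,
    monomial_mul, one_mul]

lemma Xsq (a : Fin 10) : (X a ^ 2 : MvPolynomial (Fin 10) K)
    = monomial (Finsupp.single a 2) 1 := X_pow_eq_monomial

/-! ### `piE7` on monomials -/

lemma E_zero : E (0 : Fin 10 →₀ ℕ) = 0 := by
  refine Finsupp.ext fun j => ?_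
  fin_cases j <;> simp [E0, E1, E2, E3, E4, E5, E6]

lemma E_add (a b : Fin 10 →₀ ℕ) : E (a + b) = E a + E b := by
  refine Finsupp.ext fun j => ?_
  fin_cases j <;>
    simp [E0, E1, E2, E3, E4, E5, E6, Finsupp.add_apply] <;> ring

lemma pi_single0 (n : ℕ) :
    piE7 K (monomial (Finsupp.single (0 : Fin 10) n) 1)
      = monomial (E (Finsupp.single (0 : Fin 10) n)) 1 := by
  have hE : E (Finsupp.single (0:Fin 10) n) = Finsupp.single (0:Fin 7) n := by
    refine Finsupp.ext fun j => ?_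
    fin_cases j <;>
      simp [E0, E1, E2, E3, E4, E5, E6, Finsupp.single_apply, Finsupp.add_apply]
  rw [← X_pow_eq_monomial, map_pow,
    show piE7 K (X 0) = (X 0 : MvPolynomial (Fin 7) K) by rw [piE7, aeval_X]; rfl,
    X_pow_eq_monomial, hE]

lemma pi_single1 (n : ℕ) :
    piE7 K (monomial (Finsupp.single (1 : Fin 10) n) 1)
      = monomial (E (Finsupp.single (1 : Fin 10) n)) 1 := by
  have hE : E (Finsupp.single (1:Fin 10) n) = Finsupp.single (1:Fin 7) n := by
    refine Finsupp.ext fun j => ?_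
    fin_cases j <;>
      simp [E0, E1, E2, E3, E4, E5, E6, Finsupp.single_apply, Finsupp.add_apply]
  rw [← X_pow_eq_monomial, map_pow,
    show piE7 K (X 1) = (X 1 : MvPolynomial (Fin 7) K) by rw [piE7, aeval_X]; rfl,
    X_pow_eq_monomial, hE]

lemma pi_single2 (n : ℕ) :
    piE7 K (monomial (Finsupp.single (2 : Fin 10) n) 1)
      = monomial (E (Finsupp.single (2 : Fin 10) n)) 1 := by
  have hE : E (Finsupp.single (2:Fin 10) n) = Finsupp.single (2:Fin 7) n := by
    refine Finsupp.ext fun j => ?_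
    fin_cases j <;>
      simp [E0, E1, E2, E3, E4, E5, E6, Finsupp.single_apply, Finsupp.add_apply]
  rw [← X_pow_eq_monomial, map_pow,
    show piE7 K (X 2) = (X 2 : MvPolynomial (Fin 7) K) by rw [piE7, aeval_X]; rfl,
    X_pow_eq_monomial, hE]

lemma pi_single3 (n : ℕ) :
    piE7 K (monomial (Finsupp.single (3 : Fin 10) n) 1)
      = monomial (E (Finsupp.single (3 : Fin 10) n)) 1 := by
  have hE : E (Finsupp.single (3:Fin 10) n) = Finsupp.single (3:Fin 7) (2*n) := by
    refine Finsupp.ext fun j => ?_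
    fin_cases j <;>
      simp [E0, E1, E2, E3, E4, E5, E6, Finsupp.single_apply, Finsupp.add_apply]
  rw [← X_pow_eq_monomial, map_pow,
    show piE7 K (X 3) = (X 3 ^ 2 : MvPolynomial (Fin 7) K) by rw [piE7, aeval_X]; rfl,
    ← pow_mul, X_pow_eq_monomial, hE]

lemma pi_single4 (n : ℕ) :
    piE7 K (monomial (Finsupp.single (4 : Fin 10) n) 1)
      = monomial (E (Finsupp.single (4 : Fin 10) n)) 1 := by
  have hE : E (Finsupp.single (4:Fin 10) n) = Finsupp.single (4:Fin 7) n := by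
    refine Finsupp.ext fun j => ?_
    fin_cases j <;>
      simp [E0, E1, E2, E3, E4, E5, E6, Finsupp.single_apply, Finsupp.add_apply]
  rw [← X_pow_eq_monomial, map_pow,
    show piE7 K (X 4) = (X 4 : MvPolynomial (Fin 7) K) by rw [piE7, aeval_X]; rfl,
    X_pow_eq_monomial, hE]

lemma pi_single5 (n : ℕ) :
    piE7 K (monomial (Finsupp.single (5 : Fin 10) n) 1)
      = monomial (E (Finsupp.single (5 : Fin 10) n)) 1 := by
  have hE : E (Finsupp.single (5:Fin 10) n) = Finsupp.single (5:Fin 7) (2*n) := by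
    refine Finsupp.ext fun j => ?_
    fin_cases j <;>
      simp [E0, E1, E2, E3, E4, E5, E6, Finsupp.single_apply, Finsupp.add_apply]
  rw [← X_pow_eq_monomial, map_pow,
    show piE7 K (X 5) = (X 5 ^ 2 : MvPolynomial (Fin 7) K) by rw [piE7, aeval_X]; rfl,
    ← pow_mul, X_pow_eq_monomial, hE]

lemma pi_single6 (n : ℕ) :
    piE7 K (monomial (Finsupp.single (6 : Fin 10) n) 1)
      = monomial (E (Finsupp.single (6 : Fin 10) n)) 1 := by
  have hE : E (Finsupp.single (6:Fin 10) n) = Finsupp.single (6:Fin 7) (2*n) := by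
    refine Finsupp.ext fun j => ?_
    fin_cases j <;>
      simp [E0, E1, E2, E3, E4, E5, E6, Finsupp.single_apply, Finsupp.add_apply]
  rw [← X_pow_eq_monomial, map_pow,
    show piE7 K (X 6) = (X 6 ^ 2 : MvPolynomial (Fin 7) K) by rw [piE7, aeval_X]; rfl,
    ← pow_mul, X_pow_eq_monomial, hE]

lemma pi_single7 (n : ℕ) :
    piE7 K (monomial (Finsupp.single (7 : Fin 10) n) 1)
      = monomial (E (Finsupp.single (7 : Fin 10) n)) 1 := by
  have hE : E (Finsupp.single (7:Fin 10) n) = Finsupp.single (3:Fin 7) n + Finsupp.single (5:Fin 7) n := by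
    refine Finsupp.ext fun j => ?_
    fin_cases j <;>
      simp [E0, E1, E2, E3, E4, E5, E6, Finsupp.single_apply, Finsupp.add_apply]
  rw [← X_pow_eq_monomial, map_pow,
    show piE7 K (X 7) = (X 3 * X 5 : MvPolynomial (Fin 7) K) by rw [piE7, aeval_X]; rfl,
    mul_pow, X_pow_eq_monomial, X_pow_eq_monomial, monomial_mul, one_mul, hE]

lemma pi_single8 (n : ℕ) :
    piE7 K (monomial (Finsupp.single (8 : Fin 10) n) 1)
      = monomial (E (Finsupp.single (8 : Fin 10) n)) 1 := by
  have hE : E (Finsupp.single (8:Fin 10) n) = Finsupp.single (3:Fin 7) n + Finsupp.single (6:Fin 7) n := by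
    refine Finsupp.ext fun j => ?_
    fin_cases j <;>
      simp [E0, E1, E2, E3, E4, E5, E6, Finsupp.single_apply, Finsupp.add_apply]
  rw [← X_pow_eq_monomial, map_pow,
    show piE7 K (X 8) = (X 3 * X 6 : MvPolynomial (Fin 7) K) by rw [piE7, aeval_X]; rfl,
    mul_pow, X_pow_eq_monomial, X_pow_eq_monomial, monomial_mul, one_mul, hE]

lemma pi_single9 (n : ℕ) :
    piE7 K (monomial (Finsupp.single (9 : Fin 10) n) 1)
      = monomial (E (Finsupp.single (9 : Fin 10) n)) 1 := by
  have hE : E (Finsupp.single (9:Fin 10) n) = Finsupp.single (5:Fin 7) n + Finsupp.single (6:Fin 7) n := by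
    refine Finsupp.ext fun j => ?_
    fin_cases j <;>
      simp [E0, E1, E2, E3, E4, E5, E6, Finsupp.single_apply, Finsupp.add_apply]
  rw [← X_pow_eq_monomial, map_pow,
    show piE7 K (X 9) = (X 5 * X 6 : MvPolynomial (Fin 7) K) by rw [piE7, aeval_X]; rfl,
    mul_pow, X_pow_eq_monomial, X_pow_eq_monomial, monomial_mul, one_mul, hE]

lemma pi_single (i : Fin 10) (n : ℕ) :
    piE7 K (monomial (Finsupp.single i n) 1) = monomial (E (Finsupp.single i n)) 1 := by
  fin_cases i
  · exact pi_single0 n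
  · exact pi_single1 n
  · exact pi_single2 n
  · exact pi_single3 n
  · exact pi_single4 n
  · exact pi_single5 n
  · exact pi_single6 n
  · exact pi_single7 n
  · exact pi_single8 n
  · exact pi_single9 n

lemma pi_monomial_one (d : Fin 10 →₀ ℕ) :
    piE7 K (monomial d 1) = monomial (E d) 1 := by
  induction d using Finsupp.induction with
  | zero => rw [E_zero, monomial_zero', C_1, map_one, monomial_zero', C_1]
  | single_add a b f _ _ ih =>
    rw [show monomial (Finsupp.single a b + f) (1:K)
        = monomial (Finsupp.single a b) 1 * monomial f 1 by rw [monomial_mul, one_mul],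
      map_mul, ih, pi_single, monomial_mul, one_mul, ← E_add]

lemma pi_monomial (d : Fin 10 →₀ ℕ) (c : K) :
    piE7 K (monomial d c) = monomial (E d) c := by
  rw [show monomial d c = C c * monomial d (1:K) by rw [C_mul_monomial, mul_one],
    map_mul, pi_monomial_one, show piE7 K (C c) = C c by rw [piE7, aeval_C, algebraMap_eq],
    C_mul_monomial, mul_one]

/-! ### injectivity on standard polynomials -/

lemma eq_zero_of_allstd (f : MvPolynomial (Fin 10) K) (hker : piE7 K f = 0)
    (hstd : ∀ d ∈ f.support, Std d) : f = 0 := by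
  have hrep : piE7 K f = ∑ d ∈ f.support, monomial (E d) (coeff d f) := by
    conv_lhs => rw [f.as_sum]
    rw [map_sum]
    exact Finset.sum_congr rfl fun d _ => pi_monomial d (coeff d f)
  by_contra hf
  obtain ⟨d, hd⟩ := ne_zero_iff.mp hf
  have hd' : d ∈ f.support := mem_support_iff.mpr hd
  have hco : coeff (E d) (piE7 K f) = coeff d f := by
    rw [hrep, coeff_sum, Finset.sum_eq_single_of_mem d hd'
      (fun b hb hbd => by
        rw [coeff_monomial, if_neg (fun h => hbd (E_inj (hstd b hb) (hstd d hd') h))]),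
      coeff_monomial, if_pos rfl]
  rw [hker, coeff_zero] at hco
  exact hd hco.symm


/-! ### lex order facts -/

lemma lex_trans {a b c : Fin 10 →₀ ℕ} (h1 : lexLT rk a b) (h2 : lexLT rk b c) :
    lexLT rk a c := by
  obtain ⟨v1, hv1, hw1⟩ := h1
  obtain ⟨v2, hv2, hw2⟩ := h2
  rcases lt_trichotomy ((v1 : ℕ)) ((v2 : ℕ)) with h | h | h
  · exact ⟨v1, by rw [← hw2 v1 h]; exact hv1,
      fun w hw => (hw1 w hw).trans (hw2 w (lt_trans hw h))⟩
  · have hv : v1 = v2 := Fin.ext h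
    subst hv
    exact ⟨v1, lt_trans hv1 hv2, fun w hw => (hw1 w hw).trans (hw2 w hw)⟩
  · exact ⟨v2, by rw [hw1 v2 h]; exact hv2,
      fun w hw => (hw1 w (lt_trans hw h)).trans (hw2 w hw)⟩

lemma lex_ne {a b : Fin 10 →₀ ℕ} (h : lexLT rk a b) : a ≠ b := by
  obtain ⟨v, hv, _⟩ := h
  intro he
  rw [he] at hv
  exact lt_irrefl _ hv

lemma lex_asymm {a b : Fin 10 →₀ ℕ} (h1 : lexLT rk a b) (h2 : lexLT rk b a) : False :=
  lex_ne (lex_trans h1 h2) rfl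

lemma mk_lex (i : Fin 10) (t L : Fin 10 →₀ ℕ) (h1 : t i < L i)
    (h2 : ∀ w : Fin 10, (w : ℕ) < (i : ℕ) → t w = 0)
    (h3 : ∀ w : Fin 10, (w : ℕ) < (i : ℕ) → L w = 0) : lexLT rk t L :=
  ⟨i, h1, fun w hw => by rw [h2 w hw, h3 w hw]⟩

/-! ### the weight function -/

def mu (d : Fin 10 →₀ ℕ) : ℕ :=
  100 * d 3 + 60 * d 5 + 40 * d 6 + 30 * d 7 + 20 * d 8 + 10 * d 9

lemma mu_add (a b : Fin 10 →₀ ℕ) : mu (a + b) = mu a + mu b := by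
  simp only [mu, Finsupp.add_apply]
  ring

/-! ### splitting off a pair of variables -/

lemma pair_le (i j : Fin 10) (hij : i ≠ j) (d : Fin 10 →₀ ℕ)
    (hi : d i ≠ 0) (hj : d j ≠ 0) :
    ∀ w, ((Finsupp.single i 1 + Finsupp.single j 1 : Fin 10 →₀ ℕ)) w ≤ d w := by
  intro w
  rw [Finsupp.add_apply]
  rcases eq_or_ne w i with rfl | hwi
  · rw [Finsupp.single_eq_same, Finsupp.single_eq_of_ne' (Ne.symm hij)]
    omega
  · rcases eq_or_ne w j with rfl | hwj
    · rw [Finsupp.single_eq_same, Finsupp.single_eq_of_ne' hij]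
      omega
    · rw [Finsupp.single_eq_of_ne' (Ne.symm hwi), Finsupp.single_eq_of_ne' (Ne.symm hwj)]
      exact Nat.zero_le _

lemma split_pair (i j : Fin 10) (hij : i ≠ j) (d : Fin 10 →₀ ℕ)
    (hi : d i ≠ 0) (hj : d j ≠ 0) :
    d = (Finsupp.single i 1 + Finsupp.single j 1)
        + (d - (Finsupp.single i 1 + Finsupp.single j 1)) := by
  have hLw := pair_le i j hij d hi hj
  refine Finsupp.ext fun w => ?_
  rw [Finsupp.add_apply, Finsupp.tsub_apply]
  have := hLw w
  omega

lemma mon_dvd_mem {M : Set (MvPolynomial (Fin 10) K)} (i j : Fin 10) (hij : i ≠ j)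
    (hXX : (X i * X j : MvPolynomial (Fin 10) K) ∈ M)
    (d : Fin 10 →₀ ℕ) (hi : d i ≠ 0) (hj : d j ≠ 0) :
    (monomial d (1:K)) ∈ Ideal.span M := by
  have hd := split_pair i j hij d hi hj
  have : monomial d (1:K) = (X i * X j)
      * monomial (d - (Finsupp.single i 1 + Finsupp.single j 1)) 1 := by
    rw [XX, monomial_mul, one_mul, ← hd]
  rw [this]
  exact Ideal.mul_mem_right _ _ (Ideal.subset_span hXX)

/-! ### one reduction step -/

lemma reduce_step (i j : Fin 10) (t : Fin 10 →₀ ℕ) (hij : (i : ℕ) < (j : ℕ))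
    (hg : (monomial (Finsupp.single i 1 + Finsupp.single j 1) (1:K) - monomial t 1)
      ∈ Ideal.span (GE7 K))
    (ht : ∀ w : Fin 10, (w : ℕ) ≤ (i : ℕ) → t w = 0)
    (hmu : mu t < mu (Finsupp.single i 1 + Finsupp.single j 1))
    (d : Fin 10 →₀ ℕ) (hi : d i ≠ 0) (hj : d j ≠ 0) :
    ∃ d', (monomial d (1:K) - monomial d' 1) ∈ Ideal.span (GE7 K) ∧
      mu d' < mu d ∧ lexLT rk d' d := by
  have hne : i ≠ j := fun h => by rw [h] at hij; exact lt_irrefl _ hij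
  set L : Fin 10 →₀ ℕ := Finsupp.single i 1 + Finsupp.single j 1 with hLdef
  set c : Fin 10 →₀ ℕ := d - L with hcdef
  have hd : d = L + c := split_pair i j hne d hi hj
  have hLi : L i = 1 := by
    rw [hLdef, Finsupp.add_apply, Finsupp.single_eq_same, Finsupp.single_eq_of_ne' (Ne.symm hne)]
    rfl
  refine ⟨c + t, ?_, ?_, ?_⟩
  · have key : monomial d (1:K) - monomial (c + t) 1
        = (monomial L 1 - monomial t 1) * monomial c 1 := by
      rw [sub_mul, monomial_mul, monomial_mul, ← hd, add_comm t c, one_mul]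
    rw [key]
    exact Ideal.mul_mem_right _ _ hg
  · have h1 : mu d = mu L + mu c := by rw [hd, mu_add]
    have h2 : mu (c + t) = mu c + mu t := mu_add c t
    omega
  · refine ⟨i, ?_, ?_⟩
    · have h1 : (c + t) i = c i := by rw [Finsupp.add_apply, ht i (le_refl _), add_zero]
      have h2 : d i = L i + c i := by rw [hd, Finsupp.add_apply]
      rw [h1, h2, hLi]
      omega
    · intro w hw
      have hw' : (w : ℕ) < (i : ℕ) := hw
      have hwi : w ≠ i := fun h => by rw [h] at hw'; exact lt_irrefl _ hw'
      have hwj : w ≠ j := fun h => by rw [h] at hw'; omega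
      have hLw : L w = 0 := by
        rw [hLdef, Finsupp.add_apply, Finsupp.single_eq_of_ne' (Ne.symm hwi),
          Finsupp.single_eq_of_ne' (Ne.symm hwj)]
        rfl
      have h2 : d w = L w + c w := by rw [hd, Finsupp.add_apply]
      rw [Finsupp.add_apply, ht w (le_of_lt hw'), add_zero, h2, hLw, zero_add]


lemma fin_ne_of_lt {a w : Fin 10} (h : (w:ℕ) < (a:ℕ)) : a ≠ w := fun hh => by
  rw [← hh] at h; exact lt_irrefl _ h

lemma gmem1 : (monomial (Finsupp.single (6:Fin 10) 1 + Finsupp.single (7:Fin 10) 1) (1:K) - monomial (Finsupp.single (8:Fin 10) 1 + Finsupp.single (9:Fin 10) 1) 1) ∈ Ideal.span (GE7 K) := by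
  rw [← XX 6 7, ← XX 8 9]
  exact Ideal.subset_span (by simp [GE7])

lemma kmem1 : (X 6 * X 7 - X 8 * X 9 : MvPolynomial (Fin 10) K) ∈ RingHom.ker (piE7 K) := by
  rw [RingHom.mem_ker, map_sub, map_mul, map_mul, piE7, aeval_X, aeval_X, aeval_X, aeval_X]
  show (X 6 ^ 2) * (X 3 * X 5) - (X 3 * X 6) * (X 5 * X 6) = (0 : MvPolynomial (Fin 7) K)
  ring

lemma ht1 : ∀ w : Fin 10, (w:ℕ) ≤ ((6:Fin 10):ℕ) → ((Finsupp.single (8:Fin 10) 1 + Finsupp.single (9:Fin 10) 1 : Fin 10 →₀ ℕ)) w = 0 := by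
  intro w hw
  have ei : ((6:Fin 10):ℕ) = 6 := rfl
  have ea : ((8:Fin 10):ℕ) = 8 := rfl
  have eb : ((9:Fin 10):ℕ) = 9 := rfl
  rw [Finsupp.add_apply, Finsupp.single_eq_of_ne' (fin_ne_of_lt (by omega)),
    Finsupp.single_eq_of_ne' (fin_ne_of_lt (by omega))]
  rfl

lemma hmu1 : mu (Finsupp.single (8:Fin 10) 1 + Finsupp.single (9:Fin 10) 1) < mu (Finsupp.single (6:Fin 10) 1 + Finsupp.single (7:Fin 10) 1) := by
  simp [mu, Finsupp.add_apply, Finsupp.single_apply]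

lemma tlex1 : lexLT rk (Finsupp.single (8:Fin 10) 1 + Finsupp.single (9:Fin 10) 1) (Finsupp.single (6:Fin 10) 1 + Finsupp.single (7:Fin 10) 1) := by
  refine mk_lex 6 _ _ ?_ ?_ ?_
  · rw [ht1 6 (le_refl _), Finsupp.add_apply, Finsupp.single_eq_same,
      Finsupp.single_eq_of_ne' (by decide)]
    norm_num
  · exact fun w hw => ht1 w (le_of_lt hw)
  · intro w hw
    have ei : ((6:Fin 10):ℕ) = 6 := rfl
    have ej : ((7:Fin 10):ℕ) = 7 := rfl
    rw [Finsupp.add_apply, Finsupp.single_eq_of_ne' (fin_ne_of_lt (by omega)),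
      Finsupp.single_eq_of_ne' (fin_ne_of_lt (by omega))]
    rfl

lemma gmem2 : (monomial (Finsupp.single (5:Fin 10) 1 + Finsupp.single (8:Fin 10) 1) (1:K) - monomial (Finsupp.single (7:Fin 10) 1 + Finsupp.single (9:Fin 10) 1) 1) ∈ Ideal.span (GE7 K) := by
  rw [← XX 5 8, ← XX 7 9]
  exact Ideal.subset_span (by simp [GE7])

lemma kmem2 : (X 5 * X 8 - X 7 * X 9 : MvPolynomial (Fin 10) K) ∈ RingHom.ker (piE7 K) := by
  rw [RingHom.mem_ker, map_sub, map_mul, map_mul, piE7, aeval_X, aeval_X, aeval_X, aeval_X]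
  show (X 5 ^ 2) * (X 3 * X 6) - (X 3 * X 5) * (X 5 * X 6) = (0 : MvPolynomial (Fin 7) K)
  ring

lemma ht2 : ∀ w : Fin 10, (w:ℕ) ≤ ((5:Fin 10):ℕ) → ((Finsupp.single (7:Fin 10) 1 + Finsupp.single (9:Fin 10) 1 : Fin 10 →₀ ℕ)) w = 0 := by
  intro w hw
  have ei : ((5:Fin 10):ℕ) = 5 := rfl
  have ea : ((7:Fin 10):ℕ) = 7 := rfl
  have eb : ((9:Fin 10):ℕ) = 9 := rfl
  rw [Finsupp.add_apply, Finsupp.single_eq_of_ne' (fin_ne_of_lt (by omega)),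
    Finsupp.single_eq_of_ne' (fin_ne_of_lt (by omega))]
  rfl

lemma hmu2 : mu (Finsupp.single (7:Fin 10) 1 + Finsupp.single (9:Fin 10) 1) < mu (Finsupp.single (5:Fin 10) 1 + Finsupp.single (8:Fin 10) 1) := by
  simp [mu, Finsupp.add_apply, Finsupp.single_apply]

lemma tlex2 : lexLT rk (Finsupp.single (7:Fin 10) 1 + Finsupp.single (9:Fin 10) 1) (Finsupp.single (5:Fin 10) 1 + Finsupp.single (8:Fin 10) 1) := by
  refine mk_lex 5 _ _ ?_ ?_ ?_
  · rw [ht2 5 (le_refl _), Finsupp.add_apply, Finsupp.single_eq_same,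
      Finsupp.single_eq_of_ne' (by decide)]
    norm_num
  · exact fun w hw => ht2 w (le_of_lt hw)
  · intro w hw
    have ei : ((5:Fin 10):ℕ) = 5 := rfl
    have ej : ((8:Fin 10):ℕ) = 8 := rfl
    rw [Finsupp.add_apply, Finsupp.single_eq_of_ne' (fin_ne_of_lt (by omega)),
      Finsupp.single_eq_of_ne' (fin_ne_of_lt (by omega))]
    rfl

lemma gmem3 : (monomial (Finsupp.single (5:Fin 10) 1 + Finsupp.single (6:Fin 10) 1) (1:K) - monomial (Finsupp.single (9:Fin 10) 2) 1) ∈ Ideal.span (GE7 K) := by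
  rw [← XX 5 6, ← Xsq 9]
  exact Ideal.subset_span (by simp [GE7])

lemma kmem3 : (X 5 * X 6 - X 9 ^ 2 : MvPolynomial (Fin 10) K) ∈ RingHom.ker (piE7 K) := by
  rw [RingHom.mem_ker, map_sub, map_mul, map_pow, piE7, aeval_X, aeval_X, aeval_X]
  show (X 5 ^ 2) * (X 6 ^ 2) - (X 5 * X 6) ^ 2 = (0 : MvPolynomial (Fin 7) K)
  ring

lemma ht3 : ∀ w : Fin 10, (w:ℕ) ≤ ((5:Fin 10):ℕ) → (Finsupp.single (9:Fin 10) 2) w = 0 := by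
  intro w hw
  have ei : ((5:Fin 10):ℕ) = 5 := rfl
  have ea : ((9:Fin 10):ℕ) = 9 := rfl
  rw [Finsupp.single_eq_of_ne' (fin_ne_of_lt (by omega))]

lemma hmu3 : mu (Finsupp.single (9:Fin 10) 2) < mu (Finsupp.single (5:Fin 10) 1 + Finsupp.single (6:Fin 10) 1) := by
  simp [mu, Finsupp.add_apply, Finsupp.single_apply]

lemma tlex3 : lexLT rk (Finsupp.single (9:Fin 10) 2) (Finsupp.single (5:Fin 10) 1 + Finsupp.single (6:Fin 10) 1) := by
  refine mk_lex 5 _ _ ?_ ?_ ?_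
  · rw [ht3 5 (le_refl _), Finsupp.add_apply, Finsupp.single_eq_same,
      Finsupp.single_eq_of_ne' (by decide)]
    norm_num
  · exact fun w hw => ht3 w (le_of_lt hw)
  · intro w hw
    have ei : ((5:Fin 10):ℕ) = 5 := rfl
    have ej : ((6:Fin 10):ℕ) = 6 := rfl
    rw [Finsupp.add_apply, Finsupp.single_eq_of_ne' (fin_ne_of_lt (by omega)),
      Finsupp.single_eq_of_ne' (fin_ne_of_lt (by omega))]
    rfl

lemma gmem4 : (monomial (Finsupp.single (3:Fin 10) 1 + Finsupp.single (9:Fin 10) 1) (1:K) - monomial (Finsupp.single (7:Fin 10) 1 + Finsupp.single (8:Fin 10) 1) 1) ∈ Ideal.span (GE7 K) := by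
  rw [← XX 3 9, ← XX 7 8]
  exact Ideal.subset_span (by simp [GE7])

lemma kmem4 : (X 3 * X 9 - X 7 * X 8 : MvPolynomial (Fin 10) K) ∈ RingHom.ker (piE7 K) := by
  rw [RingHom.mem_ker, map_sub, map_mul, map_mul, piE7, aeval_X, aeval_X, aeval_X, aeval_X]
  show (X 3 ^ 2) * (X 5 * X 6) - (X 3 * X 5) * (X 3 * X 6) = (0 : MvPolynomial (Fin 7) K)
  ring

lemma ht4 : ∀ w : Fin 10, (w:ℕ) ≤ ((3:Fin 10):ℕ) → ((Finsupp.single (7:Fin 10) 1 + Finsupp.single (8:Fin 10) 1 : Fin 10 →₀ ℕ)) w = 0 := by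
  intro w hw
  have ei : ((3:Fin 10):ℕ) = 3 := rfl
  have ea : ((7:Fin 10):ℕ) = 7 := rfl
  have eb : ((8:Fin 10):ℕ) = 8 := rfl
  rw [Finsupp.add_apply, Finsupp.single_eq_of_ne' (fin_ne_of_lt (by omega)),
    Finsupp.single_eq_of_ne' (fin_ne_of_lt (by omega))]
  rfl

lemma hmu4 : mu (Finsupp.single (7:Fin 10) 1 + Finsupp.single (8:Fin 10) 1) < mu (Finsupp.single (3:Fin 10) 1 + Finsupp.single (9:Fin 10) 1) := by
  simp [mu, Finsupp.add_apply, Finsupp.single_apply]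

lemma tlex4 : lexLT rk (Finsupp.single (7:Fin 10) 1 + Finsupp.single (8:Fin 10) 1) (Finsupp.single (3:Fin 10) 1 + Finsupp.single (9:Fin 10) 1) := by
  refine mk_lex 3 _ _ ?_ ?_ ?_
  · rw [ht4 3 (le_refl _), Finsupp.add_apply, Finsupp.single_eq_same,
      Finsupp.single_eq_of_ne' (by decide)]
    norm_num
  · exact fun w hw => ht4 w (le_of_lt hw)
  · intro w hw
    have ei : ((3:Fin 10):ℕ) = 3 := rfl
    have ej : ((9:Fin 10):ℕ) = 9 := rfl
    rw [Finsupp.add_apply, Finsupp.single_eq_of_ne' (fin_ne_of_lt (by omega)),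
      Finsupp.single_eq_of_ne' (fin_ne_of_lt (by omega))]
    rfl

lemma gmem5 : (monomial (Finsupp.single (3:Fin 10) 1 + Finsupp.single (6:Fin 10) 1) (1:K) - monomial (Finsupp.single (8:Fin 10) 2) 1) ∈ Ideal.span (GE7 K) := by
  rw [← XX 3 6, ← Xsq 8]
  exact Ideal.subset_span (by simp [GE7])

lemma kmem5 : (X 3 * X 6 - X 8 ^ 2 : MvPolynomial (Fin 10) K) ∈ RingHom.ker (piE7 K) := by
  rw [RingHom.mem_ker, map_sub, map_mul, map_pow, piE7, aeval_X, aeval_X, aeval_X]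
  show (X 3 ^ 2) * (X 6 ^ 2) - (X 3 * X 6) ^ 2 = (0 : MvPolynomial (Fin 7) K)
  ring

lemma ht5 : ∀ w : Fin 10, (w:ℕ) ≤ ((3:Fin 10):ℕ) → (Finsupp.single (8:Fin 10) 2) w = 0 := by
  intro w hw
  have ei : ((3:Fin 10):ℕ) = 3 := rfl
  have ea : ((8:Fin 10):ℕ) = 8 := rfl
  rw [Finsupp.single_eq_of_ne' (fin_ne_of_lt (by omega))]

lemma hmu5 : mu (Finsupp.single (8:Fin 10) 2) < mu (Finsupp.single (3:Fin 10) 1 + Finsupp.single (6:Fin 10) 1) := by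
  simp [mu, Finsupp.add_apply, Finsupp.single_apply]

lemma tlex5 : lexLT rk (Finsupp.single (8:Fin 10) 2) (Finsupp.single (3:Fin 10) 1 + Finsupp.single (6:Fin 10) 1) := by
  refine mk_lex 3 _ _ ?_ ?_ ?_
  · rw [ht5 3 (le_refl _), Finsupp.add_apply, Finsupp.single_eq_same,
      Finsupp.single_eq_of_ne' (by decide)]
    norm_num
  · exact fun w hw => ht5 w (le_of_lt hw)
  · intro w hw
    have ei : ((3:Fin 10):ℕ) = 3 := rfl
    have ej : ((6:Fin 10):ℕ) = 6 := rfl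
    rw [Finsupp.add_apply, Finsupp.single_eq_of_ne' (fin_ne_of_lt (by omega)),
      Finsupp.single_eq_of_ne' (fin_ne_of_lt (by omega))]
    rfl

lemma gmem6 : (monomial (Finsupp.single (3:Fin 10) 1 + Finsupp.single (5:Fin 10) 1) (1:K) - monomial (Finsupp.single (7:Fin 10) 2) 1) ∈ Ideal.span (GE7 K) := by
  rw [← XX 3 5, ← Xsq 7]
  exact Ideal.subset_span (by simp [GE7])

lemma kmem6 : (X 3 * X 5 - X 7 ^ 2 : MvPolynomial (Fin 10) K) ∈ RingHom.ker (piE7 K) := by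
  rw [RingHom.mem_ker, map_sub, map_mul, map_pow, piE7, aeval_X, aeval_X, aeval_X]
  show (X 3 ^ 2) * (X 5 ^ 2) - (X 3 * X 5) ^ 2 = (0 : MvPolynomial (Fin 7) K)
  ring

lemma ht6 : ∀ w : Fin 10, (w:ℕ) ≤ ((3:Fin 10):ℕ) → (Finsupp.single (7:Fin 10) 2) w = 0 := by
  intro w hw
  have ei : ((3:Fin 10):ℕ) = 3 := rfl
  have ea : ((7:Fin 10):ℕ) = 7 := rfl
  rw [Finsupp.single_eq_of_ne' (fin_ne_of_lt (by omega))]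

lemma hmu6 : mu (Finsupp.single (7:Fin 10) 2) < mu (Finsupp.single (3:Fin 10) 1 + Finsupp.single (5:Fin 10) 1) := by
  simp [mu, Finsupp.add_apply, Finsupp.single_apply]

lemma tlex6 : lexLT rk (Finsupp.single (7:Fin 10) 2) (Finsupp.single (3:Fin 10) 1 + Finsupp.single (5:Fin 10) 1) := by
  refine mk_lex 3 _ _ ?_ ?_ ?_
  · rw [ht6 3 (le_refl _), Finsupp.add_apply, Finsupp.single_eq_same,
      Finsupp.single_eq_of_ne' (by decide)]
    norm_num
  · exact fun w hw => ht6 w (le_of_lt hw)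
  · intro w hw
    have ei : ((3:Fin 10):ℕ) = 3 := rfl
    have ej : ((5:Fin 10):ℕ) = 5 := rfl
    rw [Finsupp.add_apply, Finsupp.single_eq_of_ne' (fin_ne_of_lt (by omega)),
      Finsupp.single_eq_of_ne' (fin_ne_of_lt (by omega))]
    rfl


/-! ### the reduction algorithm -/

lemma reduce : ∀ (n : ℕ) (d : Fin 10 →₀ ℕ), mu d ≤ n →
    ∃ r : MvPolynomial (Fin 10) K,
      (∀ e ∈ r.support, Std e) ∧ (Std d → r = monomial d 1) ∧
      (∀ e ∈ r.support, e = d ∨ lexLT rk e d) ∧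
      monomial d (1:K) - r ∈ Ideal.span (GE7 K) := by
  classical
  have hbase : ∀ d : Fin 10 →₀ ℕ, Std d →
      ∃ r : MvPolynomial (Fin 10) K,
        (∀ e ∈ r.support, Std e) ∧ (Std d → r = monomial d 1) ∧
        (∀ e ∈ r.support, e = d ∨ lexLT rk e d) ∧
        monomial d (1:K) - r ∈ Ideal.span (GE7 K) := by
    intro d hstd
    refine ⟨monomial d 1, ?_, fun _ => rfl, ?_, by rw [sub_self]; exact Ideal.zero_mem _⟩
    · intro e he
      rw [support_monomial, if_neg one_ne_zero, Finset.mem_singleton] at he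
      rwa [he]
    · intro e he
      rw [support_monomial, if_neg one_ne_zero, Finset.mem_singleton] at he
      exact Or.inl he
  intro n
  induction n with
  | zero =>
    intro d hd
    refine hbase d ?_
    unfold mu at hd
    exact ⟨Or.inl (by omega), Or.inl (by omega), Or.inl (by omega),
      Or.inl (by omega), Or.inl (by omega), Or.inl (by omega)⟩
  | succ n ih =>
    intro d hd
    by_cases hstd : Std d
    · exact hbase d hstd
    by_cases c1 : d 6 ≠ 0 ∧ d 7 ≠ 0
    · obtain ⟨d', hmem, hmu, hlex⟩ := reduce_step (K := K) 6 7 _ (by decide) gmem1 ht1 hmu1 d c1.1 c1.2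
      obtain ⟨r, hr1, _, hr3, hr4⟩ := ih d' (by omega)
      refine ⟨r, hr1, fun h => absurd h hstd, ?_, ?_⟩
      · intro e he
        rcases hr3 e he with rfl | h
        · exact Or.inr hlex
        · exact Or.inr (lex_trans h hlex)
      · have heq : monomial d (1:K) - r
            = (monomial d 1 - monomial d' 1) + (monomial d' 1 - r) := by ring
        rw [heq]; exact Ideal.add_mem _ hmem hr4
    by_cases c2 : d 5 ≠ 0 ∧ d 8 ≠ 0
    · obtain ⟨d', hmem, hmu, hlex⟩ := reduce_step (K := K) 5 8 _ (by decide) gmem2 ht2 hmu2 d c2.1 c2.2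
      obtain ⟨r, hr1, _, hr3, hr4⟩ := ih d' (by omega)
      refine ⟨r, hr1, fun h => absurd h hstd, ?_, ?_⟩
      · intro e he
        rcases hr3 e he with rfl | h
        · exact Or.inr hlex
        · exact Or.inr (lex_trans h hlex)
      · have heq : monomial d (1:K) - r
            = (monomial d 1 - monomial d' 1) + (monomial d' 1 - r) := by ring
        rw [heq]; exact Ideal.add_mem _ hmem hr4
    by_cases c3 : d 5 ≠ 0 ∧ d 6 ≠ 0
    · obtain ⟨d', hmem, hmu, hlex⟩ := reduce_step (K := K) 5 6 _ (by decide) gmem3 ht3 hmu3 d c3.1 c3.2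
      obtain ⟨r, hr1, _, hr3, hr4⟩ := ih d' (by omega)
      refine ⟨r, hr1, fun h => absurd h hstd, ?_, ?_⟩
      · intro e he
        rcases hr3 e he with rfl | h
        · exact Or.inr hlex
        · exact Or.inr (lex_trans h hlex)
      · have heq : monomial d (1:K) - r
            = (monomial d 1 - monomial d' 1) + (monomial d' 1 - r) := by ring
        rw [heq]; exact Ideal.add_mem _ hmem hr4
    by_cases c4 : d 3 ≠ 0 ∧ d 9 ≠ 0
    · obtain ⟨d', hmem, hmu, hlex⟩ := reduce_step (K := K) 3 9 _ (by decide) gmem4 ht4 hmu4 d c4.1 c4.2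
      obtain ⟨r, hr1, _, hr3, hr4⟩ := ih d' (by omega)
      refine ⟨r, hr1, fun h => absurd h hstd, ?_, ?_⟩
      · intro e he
        rcases hr3 e he with rfl | h
        · exact Or.inr hlex
        · exact Or.inr (lex_trans h hlex)
      · have heq : monomial d (1:K) - r
            = (monomial d 1 - monomial d' 1) + (monomial d' 1 - r) := by ring
        rw [heq]; exact Ideal.add_mem _ hmem hr4
    by_cases c5 : d 3 ≠ 0 ∧ d 6 ≠ 0
    · obtain ⟨d', hmem, hmu, hlex⟩ := reduce_step (K := K) 3 6 _ (by decide) gmem5 ht5 hmu5 d c5.1 c5.2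
      obtain ⟨r, hr1, _, hr3, hr4⟩ := ih d' (by omega)
      refine ⟨r, hr1, fun h => absurd h hstd, ?_, ?_⟩
      · intro e he
        rcases hr3 e he with rfl | h
        · exact Or.inr hlex
        · exact Or.inr (lex_trans h hlex)
      · have heq : monomial d (1:K) - r
            = (monomial d 1 - monomial d' 1) + (monomial d' 1 - r) := by ring
        rw [heq]; exact Ideal.add_mem _ hmem hr4
    by_cases c6 : d 3 ≠ 0 ∧ d 5 ≠ 0
    · obtain ⟨d', hmem, hmu, hlex⟩ := reduce_step (K := K) 3 5 _ (by decide) gmem6 ht6 hmu6 d c6.1 c6.2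
      obtain ⟨r, hr1, _, hr3, hr4⟩ := ih d' (by omega)
      refine ⟨r, hr1, fun h => absurd h hstd, ?_, ?_⟩
      · intro e he
        rcases hr3 e he with rfl | h
        · exact Or.inr hlex
        · exact Or.inr (lex_trans h hlex)
      · have heq : monomial d (1:K) - r
            = (monomial d 1 - monomial d' 1) + (monomial d' 1 - r) := by ring
        rw [heq]; exact Ideal.add_mem _ hmem hr4
    exact absurd ⟨by omega, by omega, by omega, by omega, by omega, by omega⟩ hstd

lemma reduce_poly (f : MvPolynomial (Fin 10) K) :
    ∃ r : MvPolynomial (Fin 10) K, (∀ e ∈ r.support, Std e) ∧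
      f - r ∈ Ideal.span (GE7 K) ∧
      ∀ D, Std D → D ∈ f.support → (∀ e ∈ f.support, e ≠ D → lexLT rk e D) →
        coeff D r = coeff D f := by
  have hch : ∀ d : Fin 10 →₀ ℕ, ∃ r : MvPolynomial (Fin 10) K,
      (∀ e ∈ r.support, Std e) ∧ (Std d → r = monomial d 1) ∧
      (∀ e ∈ r.support, e = d ∨ lexLT rk e d) ∧
      monomial d (1:K) - r ∈ Ideal.span (GE7 K) :=
    fun d => reduce (mu d) d (le_refl _)
  choose rr h1 h2 h3 h4 using hch
  refine ⟨∑ d ∈ f.support, coeff d f • rr d, ?_, ?_, ?_⟩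
  · intro e he
    obtain ⟨d, hd, hed⟩ := Finset.mem_biUnion.mp (support_sum he)
    exact h1 d e (support_smul hed)
  · have hf : f = ∑ d ∈ f.support, coeff d f • monomial d (1:K) := by
      conv_lhs => rw [f.as_sum]
      exact Finset.sum_congr rfl fun d _ => by rw [smul_monomial, smul_eq_mul, mul_one]
    have key : f - ∑ d ∈ f.support, coeff d f • rr d
        = ∑ d ∈ f.support, coeff d f • (monomial d (1:K) - rr d) :=
      calc f - ∑ d ∈ f.support, coeff d f • rr d
          = (∑ d ∈ f.support, coeff d f • monomial d (1:K))
            - ∑ d ∈ f.support, coeff d f • rr d := by rw [← hf]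
        _ = ∑ d ∈ f.support, (coeff d f • monomial d (1:K) - coeff d f • rr d) := by
            rw [Finset.sum_sub_distrib]
        _ = ∑ d ∈ f.support, coeff d f • (monomial d (1:K) - rr d) :=
            Finset.sum_congr rfl fun d _ => (smul_sub _ _ _).symm
    rw [key]
    refine Submodule.sum_mem _ fun d _ => ?_
    rw [smul_eq_C_mul]
    exact Ideal.mul_mem_left _ _ (h4 d)
  · intro D hD hDf hmax
    rw [coeff_sum, Finset.sum_eq_single_of_mem D hDf ?_]
    · rw [coeff_smul, h2 D hD, coeff_monomial, if_pos rfl, smul_eq_mul, mul_one]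
    · intro b hb hbD
      rw [coeff_smul]
      have hz : coeff D (rr b) = 0 := by
        by_contra hc
        rcases h3 b D (mem_support_iff.mpr hc) with h | h
        · exact hbD h.symm
        · exact lex_asymm h (hmax b hb hbD)
      rw [hz, smul_eq_mul, mul_zero]

/-! ### the two inclusions between the span and the kernel -/

lemma span_le_ker : Ideal.span (GE7 K) ≤ RingHom.ker (piE7 K) := by
  rw [Ideal.span_le]
  intro p hp
  simp only [GE7, Set.mem_insert_iff, Set.mem_singleton_iff] at hp
  rcases hp with rfl | rfl | rfl | rfl | rfl | rfl
  · exact kmem1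
  · exact kmem2
  · exact kmem3
  · exact kmem4
  · exact kmem5
  · exact kmem6

lemma ker_le_span : RingHom.ker (piE7 K) ≤ Ideal.span (GE7 K) := by
  intro f hf
  obtain ⟨r, hr1, hr2, _⟩ := reduce_poly f
  have hrk : piE7 K r = 0 := by
    have h1 : piE7 K (f - r) = 0 := RingHom.mem_ker.mp (span_le_ker hr2)
    have h2 : piE7 K f = 0 := RingHom.mem_ker.mp hf
    rw [map_sub, h2, zero_sub, neg_eq_zero] at h1
    exact h1
  have h0 : r = 0 := eq_zero_of_allstd r hrk hr1
  rw [h0, sub_zero] at hr2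
  exact hr2

/-! ### generators give elements of the initial ideal -/

lemma gen_in_initial (L t : Fin 10 →₀ ℕ)
    (hker : (monomial L (1:K) - monomial t 1) ∈ RingHom.ker (piE7 K))
    (hlex : lexLT rk t L) :
    monomial L (1:K) ∈ initialIdeal (lexLT rk) (RingHom.ker (piE7 K)) := by
  have hne : t ≠ L := lex_ne hlex
  have hcL : coeff L (monomial L (1:K) - monomial t 1) = 1 := by
    rw [coeff_sub, coeff_monomial, coeff_monomial, if_pos rfl, if_neg hne, sub_zero]
  have hLs : L ∈ (monomial L (1:K) - monomial t 1).support :=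
    mem_support_iff.mpr (by rw [hcL]; exact one_ne_zero)
  refine Ideal.subset_span ⟨monomial L (1:K) - monomial t 1, hker, ?_, L, ⟨hLs, ?_⟩, rfl⟩
  · intro h0
    rw [h0, coeff_zero] at hcL
    exact one_ne_zero hcL.symm
  · intro e he hne'
    have hce : coeff e (monomial L (1:K) - monomial t 1) ≠ 0 := mem_support_iff.mp he
    rw [coeff_sub, coeff_monomial, coeff_monomial, if_neg (fun h => hne' h.symm)] at hce
    by_cases hte : t = e
    · exact hte ▸ hlex
    · rw [if_neg hte] at hce
      simp at hce

end GE7Aux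

open GE7Aux in
/-- `𝒢_{E_7}` is a Gröbner basis of `I_{E_7}` with respect to the
lexicographic order with `x_1 > x_2 > ⋯ > x_{10}`: the ideal generated by the lex-leading
monomials of all nonzero elements of `I_{E_7}` equals the ideal generated by the monomials
`x_7x_8, x_6x_9, x_6x_7, x_4x_{10}, x_4x_7, x_4x_6`; in particular the ideal generated by
`𝒢_{E_7}` equals `I_{E_7}`. -/
theorem GE7_is_groebner (K : Type*) [Field K] :
    initialIdeal (lexLT (fun v : Fin 10 => v.val)) (RingHom.ker (piE7 K)) =
      Ideal.span ({ X 6 * X 7, X 5 * X 8, X 5 * X 6, X 3 * X 9, X 3 * X 6, X 3 * X 5 } :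
        Set (MvPolynomial (Fin 10) K)) ∧
    Ideal.span (GE7 K) = RingHom.ker (piE7 K) := by
  
  constructor
  · apply le_antisymm
    · unfold initialIdeal
      rw [Ideal.span_le]
      rintro p ⟨f, hf, hf0, d, hld, rfl⟩
      obtain ⟨hds, hdm⟩ := hld
      have hnstd : ¬ Std d := by
        intro hstd
        obtain ⟨r, hr1, hr2, hr3⟩ := reduce_poly f
        have hrk : piE7 K r = 0 := by
          have hA : piE7 K (f - r) = 0 := RingHom.mem_ker.mp (span_le_ker hr2)
          have hB : piE7 K f = 0 := RingHom.mem_ker.mp hf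
          rw [map_sub, hB, zero_sub, neg_eq_zero] at hA
          exact hA
        have h0 : r = 0 := eq_zero_of_allstd r hrk hr1
        have hc := hr3 d hstd hds hdm
        rw [h0, coeff_zero] at hc
        exact mem_support_iff.mp hds hc.symm
      show monomial d (1:K) ∈ Ideal.span ({ X 6 * X 7, X 5 * X 8, X 5 * X 6, X 3 * X 9,
        X 3 * X 6, X 3 * X 5 } : Set (MvPolynomial (Fin 10) K))
      by_cases c1 : d 6 ≠ 0 ∧ d 7 ≠ 0
      · exact mon_dvd_mem 6 7 (by decide) (by simp) d c1.1 c1.2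
      by_cases c2 : d 5 ≠ 0 ∧ d 8 ≠ 0
      · exact mon_dvd_mem 5 8 (by decide) (by simp) d c2.1 c2.2
      by_cases c3 : d 5 ≠ 0 ∧ d 6 ≠ 0
      · exact mon_dvd_mem 5 6 (by decide) (by simp) d c3.1 c3.2
      by_cases c4 : d 3 ≠ 0 ∧ d 9 ≠ 0
      · exact mon_dvd_mem 3 9 (by decide) (by simp) d c4.1 c4.2
      by_cases c5 : d 3 ≠ 0 ∧ d 6 ≠ 0
      · exact mon_dvd_mem 3 6 (by decide) (by simp) d c5.1 c5.2
      by_cases c6 : d 3 ≠ 0 ∧ d 5 ≠ 0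
      · exact mon_dvd_mem 3 5 (by decide) (by simp) d c6.1 c6.2
      exact absurd ⟨by omega, by omega, by omega, by omega, by omega, by omega⟩ hnstd
    · rw [Ideal.span_le]
      rintro p hp
      simp only [Set.mem_insert_iff, Set.mem_singleton_iff] at hp
      rcases hp with rfl | rfl | rfl | rfl | rfl | rfl
      · rw [XX]
        exact gen_in_initial _ _ (by rw [← XX 6 7, ← XX 8 9]; exact kmem1) tlex1
      · rw [XX]
        exact gen_in_initial _ _ (by rw [← XX 5 8, ← XX 7 9]; exact kmem2) tlex2
      · rw [XX]
        exact gen_in_initial _ _ (by rw [← XX 5 6, ← Xsq 9]; exact kmem3) tlex3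
      · rw [XX]
        exact gen_in_initial _ _ (by rw [← XX 3 9, ← XX 7 8]; exact kmem4) tlex4
      · rw [XX]
        exact gen_in_initial _ _ (by rw [← XX 3 6, ← Xsq 8]; exact kmem5) tlex5
      · rw [XX]
        exact gen_in_initial _ _ (by rw [← XX 3 5, ← Xsq 7]; exact kmem6) tlex6
  · exact le_antisymm span_le_ker ker_le_span
end
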